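/- arXiv:1010.5481 — 7 statements merged into one kernel-verified Lean document; each statement's English description precedes it below -/
import Mathlib

section
/- Let k be a positive natural number and let X be a subset of ℕ^k, i.e., of the additive semigroup of functions Fin k → ℕ under pointwise addition. Suppose X is grounded, meaning that for every index i ∈ Fin k there exists an element x ∈ X whose support is exactly {i} (that is, x i > 0 and x j = 0 for all j ≠ i). Then X is finitely generated: there exists a finite subset Y ⊆ X such that every element x of X is the sum of some finite multiset of elements of Y (where the empty multiset sums to the zero vector). -/
/-- Dickson's lemma, "finite basis" version: any set `S ⊆ ℕ^k` has a finite
subset `B` such that every element of `S` dominates some element of `B`. -/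
lemma exists_dickson_basis {k : ℕ} (S : Set (Fin k → ℕ)) :
    ∃ B : Finset (Fin k → ℕ), ↑B ⊆ S ∧ ∀ s ∈ S, ∃ b ∈ B, b ≤ s := by
  classical
  have hpwo : S.IsPWO := (Set.IsPWO.pi (s := fun _ : Fin k => (Set.univ : Set ℕ))
    (fun _ => Set.IsPWO.of_linearOrder _)).mono (by simp)
  set M : Set (Fin k → ℕ) := {m ∈ S | ∀ y ∈ S, y ≤ m → m ≤ y} with hM
  have hMS : M ⊆ S := fun m hm => hm.1
  have hanti : IsAntichain (· ≤ ·) M := by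
    intro a ha b hb hne hab
    exact hne (le_antisymm hab (hb.2 a ha.1 hab))
  have hfin : M.Finite :=
    hanti.finite_of_partiallyWellOrderedOn (hpwo.mono hMS)
  refine ⟨hfin.toFinset, by simpa using hMS, fun s hs => ?_⟩
  -- find a minimal element below `s`
  set T : Set (Fin k → ℕ) := {y ∈ S | y ≤ s} with hT
  have hTS : T ⊆ S := fun y hy => hy.1
  have hTwf : T.IsWF := (hpwo.isWF).mono hTS
  have hTne : T.Nonempty := ⟨s, hs, le_refl s⟩
  obtain ⟨m, hmT, hmin⟩ := (Set.wellFoundedOn_iff.1 hTwf).has_min T hTne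
  refine ⟨m, ?_, hmT.2⟩
  simp only [Set.Finite.mem_toFinset]
  refine ⟨hmT.1, fun y hy hle => ?_⟩
  have hyT : y ∈ T := ⟨hy, le_trans hle hmT.2⟩
  have hnlt : ¬ y < m := fun hlt => hmin y hyT ⟨hlt, hyT, hmT⟩
  exact not_not.1 fun hmy => hnlt (lt_iff_le_not_ge.2 ⟨hle, hmy⟩)

/-- **Grounded subsets of ℕ^k are finitely generated.**
If `X ⊆ ℕ^k` is grounded (for every index `i` there is an element of `X`
whose support is exactly `{i}`), then there is a finite `Y ⊆ X` such that
every element of `X` is the sum of a finite multiset of elements of `Y`. -/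
theorem grounded_finitely_generated (k : ℕ) (hk : 0 < k) (X : Set (Fin k → ℕ))
    (hground : ∀ i : Fin k, ∃ x ∈ X, x i > 0 ∧ ∀ j : Fin k, j ≠ i → x j = 0) :
    ∃ Y : Finset (Fin k → ℕ), ↑Y ⊆ X ∧
      ∀ x ∈ X, ∃ m : Multiset (Fin k → ℕ), (∀ y ∈ m, y ∈ Y) ∧ m.sum = x := by
  classical
  choose e heX hea he0 using hground
  set a : Fin k → ℕ := fun i => e i i with ha
  -- for each residue vector `r`, a Dickson basis for the residue class of `X`
  have hbasis : ∀ r : Fin k → ℕ, ∃ B : Finset (Fin k → ℕ),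
      ↑B ⊆ {x ∈ X | ∀ i, x i % a i = r i} ∧
      ∀ s ∈ {x ∈ X | ∀ i, x i % a i = r i}, ∃ b ∈ B, b ≤ s :=
    fun r => exists_dickson_basis _
  choose B hBsub hBdom using hbasis
  -- finitely many residue vectors
  set R : Finset (Fin k → ℕ) := Fintype.piFinset (fun i => Finset.range (a i)) with hR
  refine ⟨(R.biUnion B) ∪ Finset.image e Finset.univ, ?_, ?_⟩
  · intro y hy
    simp only [Finset.coe_union, Set.mem_union, Finset.coe_biUnion, Finset.coe_image,
      Finset.mem_coe, Set.mem_iUnion, Set.mem_image] at hy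
    rcases hy with ⟨r, _, hyB⟩ | ⟨i, _, rfl⟩
    · exact (hBsub r hyB).1
    · exact heX i
  · intro x hx
    set r : Fin k → ℕ := fun i => x i % a i with hr
    have hrR : r ∈ R := by
      simp only [hR, Fintype.mem_piFinset, Finset.mem_range]
      exact fun i => Nat.mod_lt _ (hea i)
    obtain ⟨b, hbB, hble⟩ := hBdom r x ⟨hx, fun i => rfl⟩
    have hbX := hBsub r hbB
    -- coefficients
    have hdvd : ∀ i, a i ∣ x i - b i := by
      intro i
      have h1 : b i % a i = x i % a i := (hbX.2 i)
      exact (Nat.modEq_iff_dvd' (hble i)).1 h1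
    set c : Fin k → ℕ := fun i => (x i - b i) / a i with hc
    have hxc : ∀ i, x i = b i + c i * a i := by
      intro i
      rw [hc, Nat.div_mul_cancel (hdvd i), Nat.add_sub_cancel' (hble i)]
    refine ⟨b ::ₘ (Finset.univ.val.bind fun i => Multiset.replicate (c i) (e i)), ?_, ?_⟩
    · intro y hy
      rcases Multiset.mem_cons.1 hy with rfl | hy
      · exact Finset.mem_union_left _ (Finset.mem_biUnion.2 ⟨r, hrR, hbB⟩)
      · obtain ⟨i, _, hy⟩ := Multiset.mem_bind.1 hy
        have := Multiset.eq_of_mem_replicate hy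
        subst this
        exact Finset.mem_union_right _ (Finset.mem_image.2 ⟨i, Finset.mem_univ i, rfl⟩)
    · rw [Multiset.sum_cons, Multiset.sum_bind]
      funext i
      have hsum : (Multiset.map (fun j => (Multiset.replicate (c j) (e j)).sum)
          Finset.univ.val).sum = ∑ j, c j • e j := by
        simp [Multiset.sum_replicate, Finset.sum]
      rw [hsum]
      have : (b + ∑ j, c j • e j) i = b i + ∑ j, c j * e j i := by
        simp [Finset.sum_apply]
      rw [this, Finset.sum_eq_single i (fun j _ hj => by rw [he0 j i hj.symm, mul_zero])
        (fun h => absurd (Finset.mem_univ i) h)]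
      exact (hxc i).symm
end

section
/- Let M be an additive commutative semigroup and let f : M → (ℕ →₀ ℕ) be a map into finitely supported functions from ℕ to ℕ that is additive, i.e., f (P + Q) = f P + f Q for all P, Q ∈ M. Suppose f has regulars: for every natural number i there exists P ∈ M such that the support of f P is exactly {i}. Fix a natural number k. Then there exists a finite subset Z of {P : M | f P i = 0 for all i > k} such that for every P ∈ M with f P i = 0 for all i > k, there is a finite multiset m of elements of Z with f P = the sum of f Q over Q ∈ m (the empty multiset summing to 0). -/
/-- **Main theorem in semigroup form.**
Let `M` be an additive commutative semigroup and `f : M → (ℕ →₀ ℕ)` an additive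
map ("structured set function") that has regulars (every singleton support `{i}`
is achieved). Then for every `k`, the bounded part `{P | f P i = 0 for all i > k}`
is `f`-finitely representable: there is a finite set `Z` of bounded elements such
that every bounded `P` satisfies `f P = ∑ f Q` over some finite multiset of
elements of `Z`. -/
theorem finitely_representable_of_additive_of_hasRegulars
    {M : Type*} [AddCommSemigroup M] (f : M → (ℕ →₀ ℕ))
    (hadd : ∀ P Q : M, f (P + Q) = f P + f Q)
    (hreg : ∀ i : ℕ, ∃ P : M, (f P).support = {i})
    (k : ℕ) :
    ∃ Z : Finset M, (∀ P ∈ Z, ∀ i > k, f P i = 0) ∧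
      ∀ P : M, (∀ i > k, f P i = 0) →
        ∃ m : Multiset M, (∀ Q ∈ m, Q ∈ Z) ∧ f P = (m.map f).sum := by
  classical
  choose R hR using hreg
  set c : ℕ → ℕ := fun i => f (R i) i with hc
  have hc0 : ∀ i, c i ≠ 0 := by
    intro i
    have : i ∈ (f (R i)).support := by rw [hR]; exact Finset.mem_singleton_self i
    simpa [Finsupp.mem_support_iff] using this
  have hRsingle : ∀ i, f (R i) = Finsupp.single i (c i) := by
    intro i
    ext j
    rcases eq_or_ne j i with rfl | hj
    · simp [hc]
    · have hj' : j ∉ (f (R i)).support := by rw [hR]; simpa using hj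
      rw [Finsupp.notMem_support_iff.mp hj', Finsupp.single_eq_of_ne' (Ne.symm hj)]
  set L : ℕ := ∏ i ∈ Finset.range (k+1), c i with hL
  have hL0 : 0 < L := Finset.prod_pos fun i _ => Nat.pos_of_ne_zero (hc0 i)
  have hcL : ∀ i ≤ k, c i ∣ L := fun i hi =>
    Finset.dvd_prod_of_mem _ (Finset.mem_range.mpr (Nat.lt_succ_of_le hi))
  -- the set of values of f on bounded elements
  set S : Set (ℕ →₀ ℕ) := {g | ∃ P : M, (∀ i > k, f P i = 0) ∧ f P = g} with hS
  have hSbdd : ∀ g ∈ S, ∀ i > k, g i = 0 := by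
    rintro g ⟨P, hP, rfl⟩ i hi; exact hP i hi
  -- the reduction order
  set r : (ℕ →₀ ℕ) → (ℕ →₀ ℕ) → Prop :=
    fun g h => ∀ i, g i ≤ h i ∧ g i % L = h i % L with hr
  -- PWO
  have hpwo : S.PartiallyWellOrderedOn r := by
    rw [Set.partiallyWellOrderedOn_iff_exists_lt]
    intro u hu
    haveI : IsRefl (Fin (k+1) → ℕ) Eq := ⟨fun _ => rfl⟩
    have hA : (Set.univ.pi fun _ : Fin (k+1) => Set.Iio L).Finite :=
      Set.Finite.pi fun _ => Set.finite_Iio L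
    have hApwo : (Set.univ.pi fun _ : Fin (k+1) => Set.Iio L).PartiallyWellOrderedOn
        (Eq : (Fin (k+1) → ℕ) → (Fin (k+1) → ℕ) → Prop) :=
      hA.partiallyWellOrderedOn
    haveI : IsWellOrder ℕ (· < ·) := inferInstance
    have hBpwo : (Set.univ : Set (Fin (k+1) → ℕ)).PartiallyWellOrderedOn (· ≤ ·) :=
      Set.isPWO_of_wellQuasiOrderedLE _
    obtain ⟨m, n, hmn, h1, h2⟩ := (hApwo.prod hBpwo).exists_lt
      (f := fun n => ((fun i : Fin (k+1) => u n i % L), fun i : Fin (k+1) => u n i / L))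
      (fun n => ⟨fun i _ => Nat.mod_lt _ hL0, Set.mem_univ _⟩)
    refine ⟨m, n, hmn, fun i => ?_⟩
    by_cases hik : i ≤ k
    · have e1 : u m i % L = u n i % L :=
        congrFun h1 ⟨i, Nat.lt_succ_of_le hik⟩
      have e2 : u m i / L ≤ u n i / L := h2 ⟨i, Nat.lt_succ_of_le hik⟩
      refine ⟨?_, e1⟩
      calc u m i = L * (u m i / L) + u m i % L := (Nat.div_add_mod _ _).symm
        _ ≤ L * (u n i / L) + u n i % L := by
            rw [e1]; exact add_le_add_left (Nat.mul_le_mul_left _ e2) _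
        _ = u n i := Nat.div_add_mod _ _
    · have z1 : u m i = 0 := hSbdd _ (hu m) i (lt_of_not_ge hik)
      have z2 : u n i = 0 := hSbdd _ (hu n) i (lt_of_not_ge hik)
      simp [z1, z2]
  -- minimal elements
  set MinS : Set (ℕ →₀ ℕ) := {h | h ∈ S ∧ ∀ g ∈ S, r g h → g = h} with hMinS
  set μ : (ℕ →₀ ℕ) → ℕ := fun g => ∑ i ∈ Finset.range (k+1), g i with hμ
  have hlt : ∀ g ∈ S, ∀ h ∈ S, r h g → h ≠ g → μ h < μ g := by
    intro g hg h hh hrhg hne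
    have hx : ∃ i, h i ≠ g i := by
      by_contra hall
      push_neg at hall
      exact hne (Finsupp.ext hall)
    obtain ⟨i, hi⟩ := hx
    have hik : i ≤ k := by
      by_contra hik
      rw [hSbdd _ hg i (lt_of_not_ge hik), hSbdd _ hh i (lt_of_not_ge hik)] at hi
      exact hi rfl
    exact Finset.sum_lt_sum (fun j _ => (hrhg j).1)
      ⟨i, Finset.mem_range.mpr (Nat.lt_succ_of_le hik),
        lt_of_le_of_ne (hrhg i).1 hi⟩
  have exists_min : ∀ N, ∀ g ∈ S, μ g ≤ N → ∃ h, h ∈ MinS ∧ r h g := by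
    intro N
    induction N with
    | zero =>
      intro g hg hμg
      by_cases hmin : ∀ g' ∈ S, r g' g → g' = g
      · exact ⟨g, ⟨hg, hmin⟩, fun i => ⟨le_rfl, rfl⟩⟩
      · push_neg at hmin
        obtain ⟨g', hg', hrg', hne⟩ := hmin
        exact absurd (lt_of_lt_of_le (hlt g hg g' hg' hrg' hne) hμg) (Nat.not_lt_zero _)
    | succ n ih =>
      intro g hg hμg
      by_cases hmin : ∀ g' ∈ S, r g' g → g' = g
      · exact ⟨g, ⟨hg, hmin⟩, fun i => ⟨le_rfl, rfl⟩⟩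
      · push_neg at hmin
        obtain ⟨g', hg', hrg', hne⟩ := hmin
        have : μ g' ≤ n := Nat.lt_succ_iff.mp (lt_of_lt_of_le (hlt g hg g' hg' hrg' hne) hμg)
        obtain ⟨h, hh, hrh⟩ := ih g' hg' this
        exact ⟨h, hh, fun i => ⟨le_trans (hrh i).1 (hrg' i).1, (hrh i).2.trans (hrg' i).2⟩⟩
  -- MinS is finite
  have hMinfin : MinS.Finite := by
    have anti : IsAntichain r MinS := by
      intro a ha b hb hne hab
      exact hne (hb.2 a ha.1 hab)
    exact anti.finite_of_partiallyWellOrderedOn (hpwo.mono fun x hx => hx.1)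
  -- choose preimages
  have hpickex : ∀ g ∈ S, ∃ P : M, (∀ i > k, f P i = 0) ∧ f P = g := fun g hg => hg
  set pick : (ℕ →₀ ℕ) → M := fun g =>
    if hg : g ∈ S then (hpickex g hg).choose else R 0 with hpick
  have hpick1 : ∀ g ∈ S, (∀ i > k, f (pick g) i = 0) ∧ f (pick g) = g := by
    intro g hg
    simp only [hpick, dif_pos hg]
    exact (hpickex g hg).choose_spec
  -- the finite set Z
  refine ⟨hMinfin.toFinset.image pick ∪ (Finset.range (k+1)).image R, ?_, ?_⟩
  · intro P hP i hi
    rcases Finset.mem_union.mp hP with hP | hP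
    · obtain ⟨g, hg, rfl⟩ := Finset.mem_image.mp hP
      exact (hpick1 g (hMinfin.mem_toFinset.mp hg).1).1 i hi
    · obtain ⟨j, hj, rfl⟩ := Finset.mem_image.mp hP
      rw [hRsingle j, Finsupp.single_eq_of_ne']
      exact ne_of_lt (lt_of_le_of_lt (Nat.lt_succ_iff.mp (Finset.mem_range.mp hj)) hi)
  · intro P hP
    have hgS : f P ∈ S := ⟨P, hP, rfl⟩
    obtain ⟨h, hhMin, hrh⟩ := exists_min (μ (f P)) (f P) hgS le_rfl
    have hhS : h ∈ S := hhMin.1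
    set d : ℕ → ℕ := fun i => (f P i - h i) / c i with hd
    refine ⟨pick h ::ₘ ((Finset.range (k+1)).val.bind fun i => Multiset.replicate (d i) (R i)),
      ?_, ?_⟩
    · intro Q hQ
      rcases Multiset.mem_cons.mp hQ with rfl | hQ
      · exact Finset.mem_union_left _ (Finset.mem_image.mpr
          ⟨h, hMinfin.mem_toFinset.mpr hhMin, rfl⟩)
      · obtain ⟨i, hi, hQ⟩ := Multiset.mem_bind.mp hQ
        rw [Multiset.eq_of_mem_replicate hQ]
        exact Finset.mem_union_right _ (Finset.mem_image.mpr ⟨i, hi, rfl⟩)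
    · have hsum : ((pick h ::ₘ ((Finset.range (k+1)).val.bind
          fun i => Multiset.replicate (d i) (R i))).map f).sum
          = h + ∑ i ∈ Finset.range (k+1), d i • f (R i) := by
        rw [Multiset.map_cons, Multiset.sum_cons, (hpick1 h hhS).2, Multiset.map_bind]
        congr 1
        rw [Multiset.sum_bind]
        simp only [Multiset.map_replicate, Multiset.sum_replicate]
        rfl
      rw [hsum]
      ext j
      rw [Finsupp.add_apply, Finsupp.finset_sum_apply]
      by_cases hjk : j ≤ k
      · have hjr : j ∈ Finset.range (k+1) := Finset.mem_range.mpr (Nat.lt_succ_of_le hjk)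
        have hsum2 : ∑ i ∈ Finset.range (k+1), (d i • f (R i)) j = d j * c j := by
          rw [Finset.sum_eq_single j]
          · rw [Finsupp.smul_apply]; simp [hc, smul_eq_mul]
          · intro i _ hij
            rw [Finsupp.smul_apply, hRsingle i, Finsupp.single_eq_of_ne' hij, smul_zero]
          · exact fun hj => absurd hjr hj
        rw [hsum2]
        have hle : h j ≤ f P j := (hrh j).1
        have hdvd : L ∣ f P j - h j := (Nat.modEq_iff_dvd' hle).mp (hrh j).2
        have hcdvd : c j ∣ f P j - h j := dvd_trans (hcL j hjk) hdvd
        rw [hd]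
        rw [Nat.div_mul_cancel hcdvd]
        omega
      · have hz1 : h j = 0 := hSbdd _ hhS j (lt_of_not_ge hjk)
        have hz2 : f P j = 0 := hP j (lt_of_not_ge hjk)
        have hsum2 : ∑ i ∈ Finset.range (k+1), (d i • f (R i)) j = 0 := by
          apply Finset.sum_eq_zero
          intro i hi
          rw [Finsupp.smul_apply, hRsingle i, Finsupp.single_eq_of_ne', smul_zero]
          exact fun hij => hjk (hij ▸ Nat.lt_succ_iff.mp (Finset.mem_range.mp hi))
        rw [hsum2, hz1, hz2]
end

section
/- Fix a natural number k. There exists a natural number N such that for every finite simple graph G with maximum degree at most k, there exists a finite simple graph H whose degree multiset equals the degree multiset of G and each of whose connected components has at most N vertices. -/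
open scoped Classical

/-- The degree multiset of a finite simple graph: the multiset of vertex
degrees counted with multiplicity. -/
noncomputable def degMultiset {V : Type} [Fintype V] (G : SimpleGraph V) : Multiset ℕ :=
  Finset.univ.val.map fun v => G.degree v

namespace RobQ

open Finset SimpleGraph

/-- block structure witnessing bounded components -/
def Blocky {W : Type} (H : SimpleGraph W) (N : ℕ) : Prop :=
  ∃ b : W → ℕ, (∀ x y, H.Adj x y → b x = b y) ∧ ∀ i : ℕ, {x | b x = i}.ncard ≤ N

lemma blocky_comp {W : Type} [Fintype W] (H : SimpleGraph W) {N : ℕ} (h : Blocky H N) :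
    ∀ c : H.ConnectedComponent, c.supp.ncard ≤ N := by
  obtain ⟨b, hb, hN⟩ := h
  intro c
  obtain ⟨v, rfl⟩ := c.exists_rep
  have key : ∀ x y : W, H.Reachable x y → b x = b y := by
    rintro x y ⟨w⟩
    induction w with
    | nil => rfl
    | cons h p ih => exact (hb _ _ h).trans ih
  refine le_trans (Set.ncard_le_ncard ?_ (Set.toFinite _)) (hN (b v))
  intro u hu
  exact key u v ((SimpleGraph.ConnectedComponent.eq).mp
    ((SimpleGraph.ConnectedComponent.mem_supp_iff _ _).mp hu))

variable {V : Type} [Fintype V]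

/-- two vertices interfere -/
def Conflict (G : SimpleGraph V) (u v : V) : Prop :=
  u = v ∨ G.Adj u v ∨ (∃ x, G.Adj u x ∧ G.Adj v x) ∨
    ∃ x y, G.Adj u x ∧ G.Adj v y ∧ G.Adj x y

lemma conflict_symm {G : SimpleGraph V} {u v : V} (h : Conflict G u v) : Conflict G v u := by
  rcases h with h | h | ⟨x, h1, h2⟩ | ⟨x, y, h1, h2, h3⟩
  · exact Or.inl h.symm
  · exact Or.inr (Or.inl h.symm)
  · exact Or.inr (Or.inr (Or.inl ⟨x, h2, h1⟩))
  · exact Or.inr (Or.inr (Or.inr ⟨y, x, h2, h1, h3.symm⟩))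

noncomputable def ball (G : SimpleGraph V) : ℕ → V → Finset V
  | 0, v => {v}
  | r+1, v => ball G r v ∪ (ball G r v).biUnion (fun x => G.neighborFinset x)

lemma mem_ball_self (G : SimpleGraph V) (r : ℕ) (v : V) : v ∈ ball G r v := by
  induction r with
  | zero => simp [ball]
  | succ r ih => exact Finset.mem_union_left _ ih

lemma ball_mono (G : SimpleGraph V) (r : ℕ) (v : V) : ball G r v ⊆ ball G (r+1) v :=
  Finset.subset_union_left

lemma ball_step {G : SimpleGraph V} {r : ℕ} {v x y : V} (hx : x ∈ ball G r v)
    (hxy : G.Adj x y) : y ∈ ball G (r+1) v := by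
  refine Finset.mem_union_right _ (Finset.mem_biUnion.2 ⟨x, hx, ?_⟩)
  exact (G.mem_neighborFinset _ _).2 hxy

lemma ball_card {G : SimpleGraph V} {k : ℕ} (hk : ∀ v, G.degree v ≤ k) (r : ℕ) (v : V) :
    (ball G r v).card ≤ (k+1)^r := by
  induction r with
  | zero => simp [ball]
  | succ r ih =>
    calc (ball G (r+1) v).card
        ≤ (ball G r v).card + ((ball G r v).biUnion (fun x => G.neighborFinset x)).card :=
          Finset.card_union_le _ _
      _ ≤ (ball G r v).card + ∑ x ∈ ball G r v, (G.neighborFinset x).card :=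
          Nat.add_le_add_left (Finset.card_biUnion_le) _
      _ ≤ (k+1)^r + (k+1)^r * k := by
          refine Nat.add_le_add ih ?_
          calc ∑ x ∈ ball G r v, (G.neighborFinset x).card
              ≤ (ball G r v).card * k := by
                rw [← smul_eq_mul]
                refine Finset.sum_le_card_nsmul _ _ k ?_
                intro x _
                rw [SimpleGraph.card_neighborFinset_eq_degree]
                exact hk x
            _ ≤ (k+1)^r * k := Nat.mul_le_mul_right _ ih
      _ = (k+1)^(r+1) := by ring

lemma conflict_mem_ball {G : SimpleGraph V} {u w : V} (h : Conflict G u w) :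
    w ∈ ball G 3 u := by
  have h0 : u ∈ ball G 0 u := mem_ball_self G 0 u
  rcases h with h | h | ⟨x, h1, h2⟩ | ⟨x, y, h1, h2, h3⟩
  · subst h; exact mem_ball_self G 3 u
  · exact ball_mono G 2 u (ball_mono G 1 u (ball_step h0 h))
  · exact ball_mono G 2 u (ball_step (ball_step h0 h1) h2.symm)
  · exact ball_step (ball_step (ball_step h0 h1) h3) h2.symm

lemma greedy (G : SimpleGraph V) {k : ℕ} (hk : ∀ v, G.degree v ≤ k) :
    ∀ (m : ℕ) (T : Finset V), m * (k+1)^3 ≤ T.card →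
    ∃ S : Finset V, S ⊆ T ∧ S.card = m ∧ ∀ u ∈ S, ∀ v ∈ S, u ≠ v → ¬ Conflict G u v := by
  intro m
  induction m with
  | zero => intro T _; exact ⟨∅, by simp⟩
  | succ m ih =>
    intro T hT
    have hpos : 0 < T.card := by
      have h1 : 0 < (k+1)^3 := by positivity
      nlinarith
    obtain ⟨u, hu⟩ := Finset.card_pos.1 hpos
    have hT' : m * (k+1)^3 ≤ (T \ ball G 3 u).card := by
      have h1 : T.card - (ball G 3 u).card ≤ (T \ ball G 3 u).card := Finset.le_card_sdiff _ _
      have h2 : (ball G 3 u).card ≤ (k+1)^3 := ball_card hk 3 u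
      have h3 : (m+1) * (k+1)^3 = m * (k+1)^3 + (k+1)^3 := by ring
      omega
    obtain ⟨S', hS'sub, hS'card, hS'pair⟩ := ih (T \ ball G 3 u) hT'
    have huS' : u ∉ S' := by
      intro hmem
      exact ((Finset.mem_sdiff.1 (hS'sub hmem)).2) (mem_ball_self G 3 u)
    refine ⟨insert u S', ?_, ?_, ?_⟩
    · intro x hx
      rcases Finset.mem_insert.1 hx with rfl | hx
      · exact hu
      · exact (Finset.sdiff_subset (hS'sub hx))
    · rw [Finset.card_insert_of_notMem huS', hS'card]
    · have hkey : ∀ w ∈ S', ¬ Conflict G u w := by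
        intro w hw hc
        exact (Finset.mem_sdiff.1 (hS'sub hw)).2 (conflict_mem_ball hc)
      intro a ha b hb hab
      rcases Finset.mem_insert.1 ha with ha' | ha' <;>
        rcases Finset.mem_insert.1 hb with hb' | hb'
      · exact absurd (ha'.trans hb'.symm) hab
      · subst ha'; exact hkey b hb'
      · subst hb'; exact fun hc => hkey a ha' (conflict_symm hc)
      · exact hS'pair a ha' b hb' hab

lemma pigeon {k : ℕ} (G : SimpleGraph V) (hk : ∀ v, G.degree v ≤ k)
    (hn : (k+1)^5 < Fintype.card V) :
    ∃ d, d ≤ k ∧ (k+1)^4 ≤ (Finset.univ.filter fun v => G.degree v = d).card := by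
  have hcard : Fintype.card V =
      ∑ d ∈ Finset.range (k+1), (Finset.univ.filter fun v => G.degree v = d).card := by
    rw [← Finset.card_univ]
    exact Finset.card_eq_sum_card_fiberwise (fun v _ => Finset.mem_range.2 (Nat.lt_succ_of_le (hk v)))
  have hlt : ∑ d ∈ Finset.range (k+1), (k+1)^4 <
      ∑ d ∈ Finset.range (k+1), (Finset.univ.filter fun v => G.degree v = d).card := by
    rw [← hcard, Finset.sum_const, Finset.card_range, smul_eq_mul]
    calc (k+1) * (k+1)^4 = (k+1)^5 := by ring
      _ < Fintype.card V := hn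
  obtain ⟨d, hd, hlt'⟩ := Finset.exists_lt_of_sum_lt hlt
  exact ⟨d, Nat.lt_succ_iff.1 (Finset.mem_range.1 hd), le_of_lt hlt'⟩

lemma surgery (G : SimpleGraph V) (d : ℕ) (S : Finset V)
    (hScard : S.card = d + 1)
    (hSdeg : ∀ v ∈ S, G.degree v = d)
    (hfar : ∀ u ∈ S, ∀ v ∈ S, u ≠ v → ¬ Conflict G u v) :
    ∃ G' : SimpleGraph V, (∀ v, G'.degree v = G.degree v) ∧
      ∀ x y, G'.Adj x y → (x ∈ S ↔ y ∈ S) := by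
  -- consequences of non-conflict
  have hC1 : ∀ u ∈ S, ∀ v ∈ S, u ≠ v → ¬ G.Adj u v := by
    intro u hu v hv hne h
    exact hfar u hu v hv hne (Or.inr (Or.inl h))
  have hC2 : ∀ u ∈ S, ∀ v ∈ S, u ≠ v → ∀ x, G.Adj u x → ¬ G.Adj v x := by
    intro u hu v hv hne x h1 h2
    exact hfar u hu v hv hne (Or.inr (Or.inr (Or.inl ⟨x, h1, h2⟩)))
  have hC3 : ∀ u ∈ S, ∀ v ∈ S, u ≠ v → ∀ x y, G.Adj u x → G.Adj v y → ¬ G.Adj x y := by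
    intro u hu v hv hne x y h1 h2 h3
    exact hfar u hu v hv hne (Or.inr (Or.inr (Or.inr ⟨x, y, h1, h2, h3⟩)))
  have hSadj : ∀ v ∈ S, ∀ x, G.Adj v x → x ∉ S := by
    intro v hv x hadj hxS
    by_cases hxv : x = v
    · exact G.loopless.irrefl v (hxv ▸ hadj)
    · exact hC1 v hv x hxS (fun h => hxv h.symm) hadj
  -- the pairing equivalences
  have hcard : ∀ v, v ∈ S → (S.erase v).card = (G.neighborFinset v).card := by
    intro v hv
    rw [Finset.card_erase_of_mem hv, hScard, SimpleGraph.card_neighborFinset_eq_degree,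
      hSdeg v hv]
    omega
  let e : ∀ v, v ∈ S → (↥(S.erase v) ≃ ↥(G.neighborFinset v)) :=
    fun v hv => Finset.equivOfCardEq (hcard v hv)
  let P : V → V → V := fun v u =>
    if h : v ∈ S ∧ u ∈ S.erase v then ↑(e v h.1 ⟨u, h.2⟩) else u
  have hPdef : ∀ v u (hv : v ∈ S) (hu : u ∈ S.erase v), P v u = ↑(e v hv ⟨u, hu⟩) := by
    intro v u hv hu
    simp only [P, dif_pos (And.intro hv hu)]
  have hPadj : ∀ v u, v ∈ S → u ∈ S → u ≠ v → G.Adj v (P v u) := by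
    intro v u hv hu hne
    rw [hPdef v u hv (Finset.mem_erase.2 ⟨hne, hu⟩)]
    exact (G.mem_neighborFinset _ _).1 (e v hv _).2
  have hPnotS : ∀ v u, v ∈ S → u ∈ S → u ≠ v → P v u ∉ S :=
    fun v u hv hu hne => hSadj v hv _ (hPadj v u hv hu hne)
  have hPinj : ∀ v u u', v ∈ S → u ∈ S → u' ∈ S → u ≠ v → u' ≠ v →
      P v u = P v u' → u = u' := by
    intro v u u' hv hu hu' hne hne' hP
    have h1 := hPdef v u hv (Finset.mem_erase.2 ⟨hne, hu⟩)
    have h2 := hPdef v u' hv (Finset.mem_erase.2 ⟨hne', hu'⟩)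
    rw [h1, h2] at hP
    have := (e v hv).injective (Subtype.ext hP)
    exact congrArg Subtype.val this
  have hPsurj : ∀ v x, v ∈ S → G.Adj v x → ∃ u, u ∈ S ∧ u ≠ v ∧ P v u = x := by
    intro v x hv hadj
    have hx : x ∈ G.neighborFinset v := (G.mem_neighborFinset _ _).2 hadj
    set u : ↥(S.erase v) := (e v hv).symm ⟨x, hx⟩ with hu
    refine ⟨↑u, (Finset.mem_erase.1 u.2).2, (Finset.mem_erase.1 u.2).1, ?_⟩
    rw [hPdef v ↑u hv u.2]
    have : (⟨↑u, u.2⟩ : ↥(S.erase v)) = u := Subtype.ext rfl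
    rw [this, hu, Equiv.apply_symm_apply]
  have hPuniq : ∀ v u v' u', v ∈ S → u ∈ S → v' ∈ S → u' ∈ S → u ≠ v → u' ≠ v' →
      P v u = P v' u' → v = v' ∧ u = u' := by
    intro v u v' u' hv hu hv' hu' hne hne' hP
    have hvv' : v = v' := by
      by_contra hne''
      exact hC2 v hv v' hv' hne'' (P v u) (hPadj v u hv hu hne)
        (hP ▸ hPadj v' u' hv' hu' hne')
    subst hvv'
    exact ⟨rfl, hPinj v u u' hv hu hu' hne hne' hP⟩
  -- the new adjacency
  let Adj' : V → V → Prop := fun a b =>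
    (G.Adj a b ∧ a ∉ S ∧ b ∉ S) ∨ (a ∈ S ∧ b ∈ S ∧ a ≠ b) ∨
      (∃ v u, v ∈ S ∧ u ∈ S ∧ u ≠ v ∧ a = P v u ∧ b = P u v)
  have hsymm : ∀ a b, Adj' a b → Adj' b a := by
    rintro a b (⟨h, ha, hb⟩ | ⟨ha, hb, hne⟩ | ⟨v, u, hv, hu, hne, h1, h2⟩)
    · exact Or.inl ⟨h.symm, hb, ha⟩
    · exact Or.inr (Or.inl ⟨hb, ha, hne.symm⟩)
    · exact Or.inr (Or.inr ⟨u, v, hu, hv, hne.symm, h2, h1⟩)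
  have hirr : ∀ a, ¬ Adj' a a := by
    rintro a (⟨h, _, _⟩ | ⟨_, _, hne⟩ | ⟨v, u, hv, hu, hne, h1, h2⟩)
    · exact G.loopless.irrefl a h
    · exact hne rfl
    · refine hC2 v hv u hu (fun h => hne h.symm) a (h1 ▸ hPadj v u hv hu hne) ?_
      exact h2 ▸ hPadj u v hu hv (fun h => hne h.symm)
  let G' : SimpleGraph V := ⟨Adj', ⟨fun a b h => hsymm a b h⟩, ⟨fun a h => hirr a h⟩⟩
  have hG'adj : ∀ a b, G'.Adj a b ↔ Adj' a b := fun a b => Iff.rfl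
  -- crossing property
  have hcross : ∀ x y, G'.Adj x y → (x ∈ S ↔ y ∈ S) := by
    rintro x y (⟨_, hx, hy⟩ | ⟨hx, hy, _⟩ | ⟨v, u, hv, hu, hne, h1, h2⟩)
    · exact iff_of_false hx hy
    · exact iff_of_true hx hy
    · exact iff_of_false (h1 ▸ hPnotS v u hv hu hne)
        (h2 ▸ hPnotS u v hu hv (fun h => hne h.symm))
  refine ⟨G', ?_, hcross⟩
  -- degree computations
  have hdegcard : ∀ (Gx : SimpleGraph V) (x : V) (s : Finset V),
      (∀ y, Gx.Adj x y ↔ y ∈ s) → Gx.degree x = s.card := by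
    intro Gx x s h
    rw [← SimpleGraph.card_neighborFinset_eq_degree]
    congr 1
    ext y
    rw [SimpleGraph.mem_neighborFinset]
    exact h y
  have hNv : ∀ v, v ∈ S → ∀ b, G'.Adj v b ↔ b ∈ S.erase v := by
    intro v hv b
    rw [hG'adj]
    constructor
    · rintro (⟨_, hvS, _⟩ | ⟨_, hbS, hne⟩ | ⟨v', u', hv', hu', hne, h1, h2⟩)
      · exact absurd hv hvS
      · exact Finset.mem_erase.2 ⟨fun h => hne h.symm, hbS⟩
      · exact absurd hv (h1 ▸ hPnotS v' u' hv' hu' hne)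
    · intro hb
      exact Or.inr (Or.inl ⟨hv, (Finset.mem_erase.1 hb).2,
        fun h => (Finset.mem_erase.1 hb).1 h.symm⟩)
  have hNx : ∀ v x, v ∈ S → G.Adj v x →
      ∃ u, u ∈ S ∧ u ≠ v ∧
        ∀ b, G'.Adj x b ↔ b ∈ insert (P u v) ((G.neighborFinset x).erase v) := by
    intro v x hv hadj
    obtain ⟨u, hu, hne, hPx⟩ := hPsurj v x hv hadj
    have hxS : x ∉ S := hSadj v hv x hadj
    refine ⟨u, hu, hne, fun b => ?_⟩
    rw [hG'adj]
    constructor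
    · rintro (⟨h, _, hbS⟩ | ⟨hxS', _, _⟩ | ⟨v', u', hv', hu', hne', h1, h2⟩)
      · refine Finset.mem_insert_of_mem (Finset.mem_erase.2 ⟨?_, (G.mem_neighborFinset _ _).2 h⟩)
        exact fun hbv => (hbv ▸ hbS) hv
      · exact absurd hxS' hxS
      · obtain ⟨hveq, hueq⟩ := hPuniq v' u' v u hv' hu' hv hu hne' hne (h1.symm.trans hPx.symm)
        subst hveq; subst hueq
        exact h2 ▸ Finset.mem_insert_self _ _
    · intro hb
      rcases Finset.mem_insert.1 hb with rfl | hb'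
      · exact Or.inr (Or.inr ⟨v, u, hv, hu, hne, hPx.symm, rfl⟩)
      · have hbx : G.Adj x b := (G.mem_neighborFinset _ _).1 (Finset.mem_of_mem_erase hb')
        have hbv : b ≠ v := (Finset.mem_erase.1 hb').1
        have hbS : b ∉ S := by
          intro hbS
          by_cases hbv' : b = v
          · exact hbv hbv'
          · exact hC2 b hbS v hv hbv' x hbx.symm (hadj)
        exact Or.inl ⟨hbx, hxS, hbS⟩
  have hNo : ∀ x, x ∉ S → (∀ v ∈ S, ¬ G.Adj v x) →
      ∀ b, G'.Adj x b ↔ b ∈ G.neighborFinset x := by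
    intro x hxS hno b
    rw [hG'adj]
    constructor
    · rintro (⟨h, _, _⟩ | ⟨hxS', _, _⟩ | ⟨v', u', hv', hu', hne', h1, h2⟩)
      · exact (G.mem_neighborFinset _ _).2 h
      · exact absurd hxS' hxS
      · exact absurd (h1 ▸ hPadj v' u' hv' hu' hne') (hno v' hv')
    · intro hb
      have hxb : G.Adj x b := (G.mem_neighborFinset _ _).1 hb
      have hbS : b ∉ S := fun hbS => hno b hbS hxb.symm
      exact Or.inl ⟨hxb, hxS, hbS⟩
  intro w
  have hGdeg : G.degree w = (G.neighborFinset w).card :=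
    hdegcard G w _ (fun y => (G.mem_neighborFinset _ _).symm)
  by_cases hw : w ∈ S
  · rw [hdegcard G' w (S.erase w) (hNv w hw), Finset.card_erase_of_mem hw, hScard,
      hSdeg w hw]
    omega
  · by_cases hx : ∃ v ∈ S, G.Adj v w
    · obtain ⟨v, hv, hadj⟩ := hx
      obtain ⟨u, hu, hne, hEq⟩ := hNx v w hv hadj
      have hvw : v ∈ G.neighborFinset w := (G.mem_neighborFinset _ _).2 hadj.symm
      have hnotin : P u v ∉ (G.neighborFinset w).erase v := by
        intro hmem
        have hPadj' : G.Adj w (P u v) :=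
          (G.mem_neighborFinset _ _).1 (Finset.mem_of_mem_erase hmem)
        exact hC3 v hv u hu (fun h => hne h.symm) w (P u v) hadj
          (hPadj u v hu hv (fun h => hne h.symm)) hPadj'
      rw [hdegcard G' w _ hEq, Finset.card_insert_of_notMem hnotin,
        Finset.card_erase_of_mem hvw, hGdeg]
      have h1 : 1 ≤ (G.neighborFinset w).card := Finset.card_pos.2 ⟨v, hvw⟩
      omega
    · push_neg at hx
      rw [hdegcard G' w _ (hNo w hw hx), hGdeg]


lemma main (k : ℕ) : ∀ (n : ℕ) (V : Type) [Fintype V] (G : SimpleGraph V),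
    Fintype.card V ≤ n → (∀ v, G.degree v ≤ k) →
    ∃ H : SimpleGraph V, degMultiset H = degMultiset G ∧ Blocky H ((k+1)^5) := by
  intro n
  induction n with
  | zero =>
    intro V _ G hn hdeg
    refine ⟨G, rfl, fun _ => 0, fun _ _ _ => rfl, fun i => ?_⟩
    refine le_trans (Set.ncard_le_ncard (Set.subset_univ _) (Set.toFinite _)) ?_
    rw [Set.ncard_univ, Nat.card_eq_fintype_card]
    omega
  | succ n ih =>
    intro V _ G hn hdeg
    by_cases hsmall : Fintype.card V ≤ (k+1)^5
    · refine ⟨G, rfl, fun _ => 0, fun _ _ _ => rfl, fun i => ?_⟩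
      refine le_trans (le_trans (Set.ncard_le_ncard (Set.subset_univ _) (Set.toFinite _)) ?_) hsmall
      rw [Set.ncard_univ, Nat.card_eq_fintype_card]
    · push_neg at hsmall
      obtain ⟨d, hdk, hbig⟩ := pigeon G hdeg hsmall
      have hmul : (d+1) * (k+1)^3 ≤ (Finset.univ.filter fun v => G.degree v = d).card := by
        refine le_trans ?_ hbig
        calc (d+1) * (k+1)^3 ≤ (k+1) * (k+1)^3 :=
              Nat.mul_le_mul_right _ (Nat.succ_le_succ hdk)
          _ = (k+1)^4 := by ring
      obtain ⟨S, hST, hScard, hfarp⟩ := greedy G hdeg (d+1) _ hmul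
      have hSdeg : ∀ v ∈ S, G.degree v = d := fun v hv => (Finset.mem_filter.1 (hST hv)).2
      obtain ⟨G', hdeg', hcross⟩ := surgery G d S hScard hSdeg hfarp
      obtain ⟨v₀, hv₀⟩ := Finset.card_pos.1 (by omega : 0 < S.card)
      -- the subtype of vertices outside S
      let W := {x : V // x ∉ S}
      obtain ⟨GS, hGSadj⟩ : ∃ GS : SimpleGraph W, ∀ a b : W, GS.Adj a b ↔ G'.Adj a.val b.val :=
        ⟨⟨fun a b => G'.Adj ↑a ↑b, ⟨fun a b h => G'.adj_symm h⟩, ⟨fun a h => G'.loopless.irrefl _ h⟩⟩,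
          fun a b => Iff.rfl⟩
      have hdegcard : ∀ {X : Type} (Gx : SimpleGraph X) (x : X)
          [Fintype (Gx.neighborSet x)] (s : Finset X),
          (∀ y, Gx.Adj x y ↔ y ∈ s) → Gx.degree x = s.card := by
        intro X Gx x inst s h
        rw [← SimpleGraph.card_neighborFinset_eq_degree]
        congr 1
        ext y
        rw [SimpleGraph.mem_neighborFinset]
        exact h y
      have hGS : ∀ a : W, GS.degree a = G'.degree ↑a := by
        intro a
        have h1 : GS.degree a = ((G'.neighborFinset ↑a).subtype (fun x => x ∉ S)).card := by
          refine hdegcard GS a _ (fun y => ?_)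
          rw [Finset.mem_subtype, SimpleGraph.mem_neighborFinset]
          exact hGSadj a y
        have h2 : G'.degree ↑a = (G'.neighborFinset ↑a).card :=
          hdegcard G' ↑a _ (fun y => (G'.mem_neighborFinset _ _).symm)
        rw [h1, h2]
        rw [← Finset.card_map (Function.Embedding.subtype fun x => x ∉ S), Finset.subtype_map]
        congr 1
        refine Finset.filter_true_of_mem ?_
        intro x hx
        have hadj : G'.Adj ↑a x := (G'.mem_neighborFinset _ _).1 hx
        intro hxS
        exact a.2 ((hcross _ _ hadj).2 hxS)
      have hWcard : Fintype.card W ≤ n := by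
        have hlt : Fintype.card W < Fintype.card V :=
          Fintype.card_subtype_lt (x := v₀) (by simp [hv₀])
        omega
      obtain ⟨H'', hmul'', hblocky''⟩ := ih W GS hWcard
        (fun a => by rw [hGS, hdeg']; exact hdeg _)
      -- assemble H on V
      obtain ⟨H, hHadj⟩ : ∃ H : SimpleGraph V, ∀ a b : V, H.Adj a b ↔
          ((a ∈ S ∧ b ∈ S ∧ G'.Adj a b) ∨
            (∃ (ha : a ∉ S) (hb : b ∉ S), H''.Adj ⟨a, ha⟩ ⟨b, hb⟩)) :=
        ⟨⟨fun a b => (a ∈ S ∧ b ∈ S ∧ G'.Adj a b) ∨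
            (∃ (ha : a ∉ S) (hb : b ∉ S), H''.Adj ⟨a, ha⟩ ⟨b, hb⟩),
         by constructor; rintro a b (⟨ha, hb, h⟩ | ⟨ha, hb, h⟩)
            · exact Or.inl ⟨hb, ha, h.symm⟩
            · exact Or.inr ⟨hb, ha, h.symm⟩,
         by constructor; rintro a (⟨_, _, h⟩ | ⟨ha, hb, h⟩)
            · exact G'.loopless.irrefl _ h
            · exact H''.loopless.irrefl _ h⟩, fun a b => Iff.rfl⟩
      have hHS : ∀ v ∈ S, H.degree v = G.degree v := by
        intro v hv
        have h2 : G'.degree v = (G'.neighborFinset v).card :=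
          hdegcard G' v _ (fun y => (G'.mem_neighborFinset _ _).symm)
        rw [← hdeg' v, h2]
        refine hdegcard H v _ (fun y => ?_)
        rw [SimpleGraph.mem_neighborFinset, hHadj]
        constructor
        · rintro (⟨_, _, h⟩ | ⟨hv', _, _⟩)
          · exact h
          · exact absurd hv hv'
        · intro h
          exact Or.inl ⟨hv, (hcross _ _ h).1 hv, h⟩
      have hHW : ∀ a : W, H.degree ↑a = H''.degree a := by
        intro a
        have h2 : H''.degree a = (H''.neighborFinset a).card :=
          hdegcard H'' a _ (fun y => (H''.mem_neighborFinset _ _).symm)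
        rw [h2, ← Finset.card_map (Function.Embedding.subtype fun x => x ∉ S)]
        refine hdegcard H ↑a _ (fun y => ?_)
        rw [Finset.mem_map, hHadj]
        constructor
        · rintro (⟨ha, _, _⟩ | ⟨ha, hy, h⟩)
          · exact absurd ha a.2
          · refine ⟨⟨y, hy⟩, ?_, rfl⟩
            rw [SimpleGraph.mem_neighborFinset]
            exact h
        · rintro ⟨b, hb, rfl⟩
          refine Or.inr ⟨a.2, b.2, ?_⟩
          exact (H''.mem_neighborFinset _ _).1 hb
      -- degree multiset equality
      have hsplit : ∀ (F : V → ℕ), (Finset.univ.val.map F) =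
          S.val.map F + (Finset.univ.filter fun x => x ∉ S).val.map F := by
        intro F
        have hdisj : Disjoint S (Finset.univ.filter fun x => x ∉ S) := by
          rw [Finset.disjoint_left]
          intro a ha ha'
          exact (Finset.mem_filter.1 ha').2 ha
        have hDU : S.disjUnion _ hdisj = Finset.univ := by
          ext x
          by_cases hx : x ∈ S <;> simp [hx]
        have hDUval : S.val + (Finset.univ.filter fun x => x ∉ S).val =
            (Finset.univ : Finset V).val := congrArg Finset.val hDU
        rw [← hDUval, Multiset.map_add]
      have hsub : ∀ (F : V → ℕ), (Finset.univ.filter fun x => x ∉ S).val.map F =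
          (Finset.univ : Finset W).val.map (fun a => F a.val) := by
        intro F
        have h1 : (Finset.univ.filter fun x => x ∉ S) =
            (Finset.univ : Finset W).map (Function.Embedding.subtype _) := by
          rw [← Finset.subtype_univ (fun x => x ∉ S), Finset.subtype_map]
        rw [h1, Finset.map_val, Multiset.map_map]
        rfl
      have hdm : degMultiset H = degMultiset G := by
        unfold degMultiset
        rw [hsplit, hsplit]
        congr 1
        · exact Multiset.map_congr rfl (fun v hv => hHS v hv)
        · rw [hsub, hsub]
          have h1 : (Finset.univ : Finset W).val.map (fun a => H.degree a.val) = degMultiset H'' := by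
            unfold degMultiset
            exact Multiset.map_congr rfl (fun a _ => hHW a)
          have h2 : (Finset.univ : Finset W).val.map (fun a => G.degree a.val) = degMultiset GS := by
            unfold degMultiset
            refine Multiset.map_congr rfl (fun a _ => ?_)
            rw [hGS, hdeg']
          rw [h1, h2, hmul'']
      -- blockiness
      obtain ⟨b'', hb''adj, hb''card⟩ := hblocky''
      refine ⟨H, hdm, fun x => if hx : x ∈ S then 0 else b'' ⟨x, hx⟩ + 1, ?_, ?_⟩
      · intro x y hxy
        rcases (hHadj x y).1 hxy with ⟨hx, hy, _⟩ | ⟨hx, hy, h⟩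
        · show (if hx : x ∈ S then 0 else b'' ⟨x, hx⟩ + 1) =
            (if hy : y ∈ S then 0 else b'' ⟨y, hy⟩ + 1)
          rw [dif_pos hx, dif_pos hy]
        · show (if hx : x ∈ S then 0 else b'' ⟨x, hx⟩ + 1) =
            (if hy : y ∈ S then 0 else b'' ⟨y, hy⟩ + 1)
          rw [dif_neg hx, dif_neg hy, hb''adj _ _ h]
      · intro i
        match i with
        | 0 =>
          have hss : {x : V | (if hx : x ∈ S then 0 else b'' ⟨x, hx⟩ + 1) = 0} ⊆ ↑S := by
            intro x hx
            by_contra hxS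
            have hxS' : ¬ x ∈ S := fun h => hxS h
            have hx' : (if hx : x ∈ S then 0 else b'' ⟨x, hx⟩ + 1) = 0 := hx
            rw [dif_neg hxS'] at hx'
            omega
          refine le_trans (Set.ncard_le_ncard hss (Set.toFinite _)) ?_
          rw [Set.ncard_coe_finset, hScard]
          calc d + 1 ≤ k + 1 := Nat.succ_le_succ hdk
            _ ≤ (k+1)^5 := Nat.le_self_pow (by norm_num) _
        | (j+1) =>
          have hss : {x : V | (if hx : x ∈ S then 0 else b'' ⟨x, hx⟩ + 1) = j + 1} ⊆
              Subtype.val '' {a : W | b'' a = j} := by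
            intro x hx
            have hx' : (if hx : x ∈ S then 0 else b'' ⟨x, hx⟩ + 1) = j + 1 := hx
            by_cases hxS : x ∈ S
            · rw [dif_pos hxS] at hx'; omega
            · rw [dif_neg hxS] at hx'
              exact ⟨⟨x, hxS⟩, show b'' ⟨x, hxS⟩ = j by omega, rfl⟩
          refine le_trans (Set.ncard_le_ncard hss (Set.toFinite _)) ?_
          rw [Set.ncard_image_of_injective _ Subtype.val_injective]
          exact hb''card j


end RobQ

noncomputable def mapEquiv {V W : Type} (e : V ≃ W) (G : SimpleGraph V) : SimpleGraph W where
  Adj a b := G.Adj (e.symm a) (e.symm b)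
  symm := ⟨fun a b h => G.adj_symm h⟩
  loopless := ⟨fun a h => G.loopless.irrefl _ h⟩

/-- **Robertson's question, bounded components form.**
For every `k` there is an `N` such that every finite simple graph of maximum
degree at most `k` has the same degree multiset as some graph all of whose
connected components have at most `N` vertices. -/
theorem bounded_degree_realized_with_bounded_components (k : ℕ) :
    ∃ N : ℕ, ∀ (V : Type) [Fintype V] (G : SimpleGraph V),
      (∀ v : V, G.degree v ≤ k) →
      ∃ (n : ℕ) (H : SimpleGraph (Fin n)),
        degMultiset H = degMultiset G ∧
        ∀ c : H.ConnectedComponent, c.supp.ncard ≤ N := by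
  refine ⟨(k+1)^5, ?_⟩
  intro V _ G hdeg
  obtain ⟨H₀, hmul, b₀, hb₀adj, hb₀card⟩ := RobQ.main k (Fintype.card V) V G le_rfl hdeg
  let e := Fintype.equivFin V
  refine ⟨Fintype.card V, mapEquiv e H₀, ?_, ?_⟩
  · -- degMultiset equality
    have hdegmap : ∀ w, (mapEquiv e H₀).degree w = H₀.degree (e.symm w) := by
      intro w
      have h1 : ∀ y, (mapEquiv e H₀).Adj w y ↔ y ∈ (H₀.neighborFinset (e.symm w)).map e.toEmbedding := by
        intro y
        rw [Finset.mem_map]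
        constructor
        · intro h
          exact ⟨e.symm y, (H₀.mem_neighborFinset _ _).2 h, by simp⟩
        · rintro ⟨z, hz, rfl⟩
          have : H₀.Adj (e.symm w) z := (H₀.mem_neighborFinset _ _).1 hz
          show H₀.Adj (e.symm w) (e.symm (e z))
          rwa [Equiv.symm_apply_apply]
      have h2 : (mapEquiv e H₀).degree w = ((H₀.neighborFinset (e.symm w)).map e.toEmbedding).card := by
        rw [← SimpleGraph.card_neighborFinset_eq_degree]
        congr 1
        ext y
        rw [SimpleGraph.mem_neighborFinset]
        exact h1 y
      rw [h2, Finset.card_map, SimpleGraph.card_neighborFinset_eq_degree]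
    have huniv : (Finset.univ : Finset (Fin (Fintype.card V))) = Finset.univ.map e.toEmbedding :=
      (Finset.univ_map_equiv_to_embedding e).symm
    calc degMultiset (mapEquiv e H₀)
        = Finset.univ.val.map (fun w => H₀.degree (e.symm w)) := by
          unfold degMultiset
          exact Multiset.map_congr rfl (fun w _ => hdegmap w)
      _ = (Finset.univ.map e.toEmbedding).val.map (fun w => H₀.degree (e.symm w)) := by
          rw [← huniv]
      _ = Finset.univ.val.map (fun v => H₀.degree (e.symm (e v))) := by
          rw [Finset.map_val, Multiset.map_map]
          rfl
      _ = degMultiset H₀ := by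
          unfold degMultiset
          refine Multiset.map_congr rfl (fun v _ => ?_)
          rw [Equiv.symm_apply_apply]
      _ = degMultiset G := hmul
  · -- bounded components
    refine RobQ.blocky_comp _ ⟨fun w => b₀ (e.symm w), ?_, ?_⟩
    · intro x y h
      exact hb₀adj _ _ h
    · intro i
      have himg : {x : Fin (Fintype.card V) | b₀ (e.symm x) = i} = e '' {v : V | b₀ v = i} := by
        ext x
        simp only [Set.mem_image, Set.mem_setOf_eq]
        constructor
        · intro h
          exact ⟨e.symm x, h, by simp⟩
        · rintro ⟨v, hv, rfl⟩
          rwa [Equiv.symm_apply_apply]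
      rw [himg, Set.ncard_image_of_injective _ e.injective]
      exact hb₀card i
end

section
/- Fix a natural number k. There exists a natural number N such that for every finite simple graph G that is bipartite (i.e., 2-colorable) and has maximum degree at most k, there exists a finite simple bipartite graph H whose degree multiset equals the degree multiset of G and each of whose connected components has at most N vertices. -/
open scoped Classical

namespace RobHelp


def owner : List ℕ → ℕ → ℕ
  | [], _ => 0
  | d :: l, x => if x < d then 0 else owner l (x - d) + 1

def psum (l : List ℕ) (i : ℕ) : ℕ := (l.take i).sum

@[simp] lemma psum_zero (l : List ℕ) : psum l 0 = 0 := rfl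

lemma psum_succ_cons (d : ℕ) (l : List ℕ) (i : ℕ) :
    psum (d :: l) (i + 1) = d + psum l i := by
  simp [psum, List.take_succ_cons]

lemma psum_le_succ (l : List ℕ) (i : ℕ) : psum l i ≤ psum l (i + 1) := by
  by_cases h : i < l.length
  · rw [psum, psum, List.sum_take_succ l i h]; omega
  · push_neg at h
    rw [psum, psum, List.take_of_length_le h, List.take_of_length_le (by omega)]

lemma psum_mono (l : List ℕ) {i j : ℕ} (h : i ≤ j) : psum l i ≤ psum l j := by
  induction j with
  | zero =>
    have : i = 0 := by omega
    subst this; exact le_refl _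
  | succ n ih =>
    rcases Nat.lt_or_ge i (n+1) with h' | h'
    · exact le_trans (ih (by omega)) (psum_le_succ l n)
    · have : i = n + 1 := by omega
      subst this; rfl

lemma psum_le_sum (l : List ℕ) (i : ℕ) : psum l i ≤ l.sum := by
  calc psum l i ≤ psum l l.length := by
        rcases Nat.le_total i l.length with h | h
        · exact psum_mono l h
        · rw [psum, psum, List.take_of_length_le h, List.take_length]
    _ = l.sum := by rw [psum, List.take_length]

lemma psum_length (l : List ℕ) : psum l l.length = l.sum := by
  rw [psum, List.take_length]

lemma owner_eq_iff (l : List ℕ) (x i : ℕ) (hx : x < l.sum) :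
    owner l x = i ↔ psum l i ≤ x ∧ x < psum l (i + 1) := by
  induction l generalizing x i with
  | nil => simp at hx
  | cons d t ih =>
    simp only [owner]
    by_cases h : x < d
    · rw [if_pos h]
      cases i with
      | zero =>
        simp only [psum_zero, psum_succ_cons]
        constructor
        · intro _; omega
        · intro _; trivial
      | succ j =>
        simp only [psum_succ_cons]
        constructor
        · intro he; omega
        · intro ⟨h1, h2⟩; omega
    · rw [if_neg h]
      push_neg at h
      have hx' : x - d < t.sum := by simp at hx; omega
      cases i with
      | zero =>
        simp only [psum_zero, psum_succ_cons]
        constructor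
        · intro he; omega
        · intro ⟨h1, h2⟩
          have := (ih (x - d) 0 hx').mpr (by constructor <;> omega)
          omega
      | succ j =>
        rw [psum_succ_cons, psum_succ_cons]
        constructor
        · intro he
          have := (ih (x - d) j hx').mp (by omega)
          omega
        · intro ⟨h1, h2⟩
          have := (ih (x - d) j hx').mpr (by constructor <;> omega)
          omega

lemma owner_lt_length (l : List ℕ) (x : ℕ) (hx : x < l.sum) : owner l x < l.length := by
  induction l generalizing x with
  | nil => simp at hx
  | cons d t ih =>
    simp only [owner]
    by_cases h : x < d
    · simp [h]
    · rw [if_neg h]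
      push_neg at h
      have : x - d < t.sum := by simp at hx; omega
      simpa using ih (x - d) this

/-- positions with the same owner are close (all block lengths `≤ K`) -/
lemma owner_close (K : ℕ) (l : List ℕ) (hl : ∀ d ∈ l, d ≤ K) {x y : ℕ}
    (hx : x < l.sum) (hy : y < l.sum) (h : owner l x = owner l y) :
    x < y + K ∧ y < x + K := by
  set i := owner l x with hi
  have h1 := (owner_eq_iff l x i hx).mp rfl
  have h2 := (owner_eq_iff l y i hy).mp h.symm
  have hlen : i < l.length := owner_lt_length l x hx
  have hstep : psum l (i+1) ≤ psum l i + K := by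
    have h3 := List.sum_take_succ l i hlen
    have h4 : l[i] ≤ K := hl _ (List.getElem_mem hlen)
    rw [psum, psum, h3]; omega
  omega

/-- owners differ if positions are far apart...  contrapositive of closeness is what we use. -/
lemma owner_ne_of_far (K : ℕ) (hK : 1 ≤ K) (l : List ℕ) (hl : ∀ d ∈ l, d ≤ K) {x y : ℕ}
    (hx : x < l.sum) (hy : y < l.sum) (hfar : x + K ≤ y ∨ y + K ≤ x) :
    owner l x ≠ owner l y := by
  intro h
  have := owner_close K l hl hx hy h
  omega



section Tpose

/-- start position of row `v` in the column-major layout of a `k × (m/k)` ragged grid -/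
def rstart (k m v : ℕ) : ℕ := v * (m / k) + min v (m % k)

/-- length of row `v` -/
def rlen (k m v : ℕ) : ℕ := m / k + (if v < m % k then 1 else 0)

/-- the ragged transpose map -/
def tpose (k m x : ℕ) : ℕ := rstart k m (x % k) + x / k

lemma rstart_succ (k m v : ℕ) : rstart k m (v + 1) = rstart k m v + rlen k m v := by
  unfold rstart rlen
  rcases Nat.lt_or_ge v (m % k) with h | h
  · rw [if_pos h, min_eq_left (by omega), min_eq_left (by omega)]
    ring
  · rw [if_neg (by omega), min_eq_right (by omega), min_eq_right (by omega)]
    ring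

lemma rstart_mono (k m : ℕ) {v w : ℕ} (h : v ≤ w) : rstart k m v ≤ rstart k m w := by
  unfold rstart
  have h1 : v * (m / k) ≤ w * (m / k) := Nat.mul_le_mul_right _ h
  have h2 : min v (m % k) ≤ min w (m % k) := by omega
  omega

lemma rlen_ge (k m v : ℕ) : m / k ≤ rlen k m v := by unfold rlen; omega

lemma rstart_k (k m : ℕ) (hk : 1 ≤ k) : rstart k m k = m := by
  unfold rstart
  have h1 := Nat.div_add_mod m k
  have h2 : min k (m % k) = m % k := min_eq_right (le_of_lt (Nat.mod_lt m hk))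
  rw [h2]
  omega

lemma div_lt_rlen (k m x : ℕ) (hk : 1 ≤ k) (hx : x < m) :
    x / k < rlen k m (x % k) := by
  have hdx := Nat.div_add_mod x k
  have hdm := Nat.div_add_mod m k
  have hvk : x % k < k := Nat.mod_lt x hk
  have hmk : m % k < k := Nat.mod_lt m hk
  unfold rlen
  rcases Nat.lt_or_ge (x % k) (m % k) with h | h
  · rw [if_pos h]
    by_contra hc
    push_neg at hc
    have h1 : m / k + 1 ≤ x / k := by omega
    have h2 : k * (m / k) + k ≤ k * (x / k) := by
      rw [← Nat.mul_succ]; exact Nat.mul_le_mul_left k h1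
    omega
  · rw [if_neg (by omega)]
    by_contra hc
    push_neg at hc
    have h2 : k * (m / k) ≤ k * (x / k) := Nat.mul_le_mul_left k hc
    omega

lemma tpose_lt (k m x : ℕ) (hk : 1 ≤ k) (hx : x < m) : tpose k m x < m := by
  have h1 : x / k < rlen k m (x % k) := div_lt_rlen k m x hk hx
  have h2 : rstart k m (x % k) + rlen k m (x % k) = rstart k m (x % k + 1) :=
    (rstart_succ k m _).symm
  have h3 : rstart k m (x % k + 1) ≤ rstart k m k :=
    rstart_mono k m (Nat.mod_lt x hk)
  rw [rstart_k k m hk] at h3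
  unfold tpose
  omega

lemma near_cases (k x y : ℕ) (hk : 1 ≤ k) (hxy : x < y) (hnear : y < x + k) :
    (y / k = x / k ∧ x % k < y % k) ∨ (y / k = x / k + 1 ∧ y % k < x % k) := by
  have hdx := Nat.div_add_mod x k
  have hdy := Nat.div_add_mod y k
  have hvx : x % k < k := Nat.mod_lt x hk
  have hvy : y % k < k := Nat.mod_lt y hk
  have hle : x / k ≤ y / k := by
    by_contra hc
    push_neg at hc
    have h1 : y / k + 1 ≤ x / k := by omega
    have h2 : k * (y / k) + k ≤ k * (x / k) := by
      rw [← Nat.mul_succ]; exact Nat.mul_le_mul_left k h1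
    omega
  have hge : y / k ≤ x / k + 1 := by
    by_contra hc
    push_neg at hc
    have h1 : x / k + 2 ≤ y / k := by omega
    have h2 : k * (x / k + 2) ≤ k * (y / k) := Nat.mul_le_mul_left k h1
    have h3 : k * (x / k + 2) = k * (x / k) + 2 * k := by ring
    omega
  rcases Nat.eq_or_lt_of_le hle with he | hlt
  · left
    refine ⟨he.symm, ?_⟩
    rw [← he] at hdy
    omega
  · right
    have he : y / k = x / k + 1 := by omega
    refine ⟨he, ?_⟩
    rw [he] at hdy
    have h3 : k * (x / k + 1) = k * (x / k) + k := by ring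
    omega

/-- the key spreading property -/
lemma tpose_spread (k m x y : ℕ) (hk : 1 ≤ k) (hM : 1 ≤ m / k)
    (hxy : x < y) (hnear : y < x + k) :
    tpose k m x + (m / k - 1) ≤ tpose k m y ∨ tpose k m y + (m / k - 1) ≤ tpose k m x := by
  rcases near_cases k x y hk hxy hnear with ⟨hu, hv⟩ | ⟨hu, hv⟩
  · left
    have h1 : rstart k m (x % k + 1) ≤ rstart k m (y % k) := rstart_mono k m (by omega)
    have h2 := rstart_succ k m (x % k)
    have h3 := rlen_ge k m (x % k)
    unfold tpose
    rw [hu]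
    omega
  · right
    have h1 : rstart k m (y % k + 1) ≤ rstart k m (x % k) := rstart_mono k m (by omega)
    have h2 := rstart_succ k m (y % k)
    have h3 := rlen_ge k m (y % k)
    unfold tpose
    rw [hu]
    omega

lemma tpose_inj (k m : ℕ) (hk : 1 ≤ k) {x y : ℕ} (hx : x < m) (hy : y < m)
    (h : tpose k m x = tpose k m y) : x = y := by
  by_contra hne
  wlog hvxy : x % k ≤ y % k generalizing x y
  · exact this hy hx h.symm (Ne.symm hne) (by omega)
  rcases Nat.eq_or_lt_of_le hvxy with he | hlt
  · -- same row, so same column, so equal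
    have hdx := Nat.div_add_mod x k
    have hdy := Nat.div_add_mod y k
    unfold tpose at h
    rw [he] at h hdx
    have : x / k = y / k := by omega
    rw [this] at hdx
    omega
  · -- strictly smaller row means strictly smaller tpose value
    have h1 : x / k < rlen k m (x % k) := div_lt_rlen k m x hk hx
    have h2 := rstart_succ k m (x % k)
    have h3 : rstart k m (x % k + 1) ≤ rstart k m (y % k) := rstart_mono k m (by omega)
    unfold tpose at h
    generalize x / k = ux at h h1
    generalize y / k = uy at h
    omega

end Tpose




def bigraph (p q : ℕ) (rel : Fin p → Fin q → Prop) : SimpleGraph (Fin p ⊕ Fin q) where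
  Adj x y := match x, y with
    | Sum.inl a, Sum.inr b => rel a b
    | Sum.inr b, Sum.inl a => rel a b
    | _, _ => False
  symm := ⟨by rintro (a|b) (c|d) h <;> simp_all⟩
  loopless := ⟨by rintro (a|b) h <;> exact h⟩

variable {p q : ℕ} {rel : Fin p → Fin q → Prop}

@[simp] lemma bigraph_adj_inl_inr {a b} : (bigraph p q rel).Adj (.inl a) (.inr b) ↔ rel a b := Iff.rfl
@[simp] lemma bigraph_adj_inr_inl {a b} : (bigraph p q rel).Adj (.inr b) (.inl a) ↔ rel a b := Iff.rfl
@[simp] lemma bigraph_adj_inl_inl {a b} : ¬ (bigraph p q rel).Adj (.inl a) (.inl b) := fun h => h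
@[simp] lemma bigraph_adj_inr_inr {a b} : ¬ (bigraph p q rel).Adj (.inr a) (.inr b) := fun h => h

lemma bigraph_colorable : (bigraph p q rel).Colorable 2 :=
  ⟨SimpleGraph.Coloring.mk (Sum.elim (fun _ => 0) (fun _ => 1))
    (by rintro (a|b) (c|d) h <;> simp_all)⟩

lemma bigraph_nf_inl (a : Fin p) :
    (bigraph p q rel).neighborFinset (.inl a)
      = (Finset.univ.filter (fun b => rel a b)).map ⟨Sum.inr, Sum.inr_injective⟩ := by
  ext y
  rcases y with c | b <;> simp

lemma bigraph_nf_inr (b : Fin q) :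
    (bigraph p q rel).neighborFinset (.inr b)
      = (Finset.univ.filter (fun a => rel a b)).map ⟨Sum.inl, Sum.inl_injective⟩ := by
  ext y
  rcases y with c | b <;> simp

lemma bigraph_degree_inl (a : Fin p) :
    (bigraph p q rel).degree (.inl a) = (Finset.univ.filter (fun b => rel a b)).card := by
  rw [SimpleGraph.degree, bigraph_nf_inl, Finset.card_map]

lemma bigraph_degree_inr (b : Fin q) :
    (bigraph p q rel).degree (.inr b) = (Finset.univ.filter (fun a => rel a b)).card := by
  rw [SimpleGraph.degree, bigraph_nf_inr, Finset.card_map]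

lemma supp_ncard_le {V : Type} [Fintype V] (G : SimpleGraph V) (c : G.ConnectedComponent) :
    c.supp.ncard ≤ Fintype.card V := by
  calc c.supp.ncard ≤ Set.univ.ncard := Set.ncard_le_ncard (Set.subset_univ _) Set.finite_univ
    _ = Fintype.card V := by rw [Set.ncard_univ, Nat.card_eq_fintype_card]

lemma degMultiset_bigraph :
    degMultiset (bigraph p q rel)
      = (Finset.univ.val.map fun a => (bigraph p q rel).degree (.inl a))
        + (Finset.univ.val.map fun b => (bigraph p q rel).degree (.inr b)) := by
  unfold degMultiset
  rw [← Finset.univ_disjSum_univ]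
  show Multiset.map _ (Finset.univ.val.disjSum Finset.univ.val) = _
  rw [Multiset.disjSum, Multiset.map_add, Multiset.map_map, Multiset.map_map]
  rfl

lemma map_univ_get (l : List ℕ) :
    (Finset.univ.val.map fun i : Fin l.length => l.get i) = (l : Multiset ℕ) := by
  have : (Finset.univ.val : Multiset (Fin l.length)) = ↑(List.finRange l.length) := by
    simp [Finset.univ, Fintype.elems, List.finRange]
  rw [this]
  rw [show ((List.finRange l.length : List (Fin l.length)) : Multiset (Fin l.length)).map
      (fun i : Fin l.length => l.get i) = ↑((List.finRange l.length).map l.get) from rfl]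
  congr 1
  rw [← List.ofFn_eq_map, List.ofFn_get]


end RobHelp

namespace RobHelp

lemma psum_succ_get (l : List ℕ) (i : ℕ) (h : i < l.length) :
    psum l (i + 1) = psum l i + l[i] := by
  rw [psum, psum, List.sum_take_succ l i h]

lemma owner_mem_Ico (l : List ℕ) (a x : ℕ) (hx : x < l.sum) :
    owner l x = a ↔ x ∈ Finset.Ico (psum l a) (psum l (a + 1)) := by
  rw [owner_eq_iff l x a hx, Finset.mem_Ico]

lemma construction (K : ℕ) (hK : 1 ≤ K) (D E : List ℕ)
    (hD : ∀ d ∈ D, 1 ≤ d ∧ d ≤ K) (hE : ∀ e ∈ E, 1 ≤ e ∧ e ≤ K)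
    (hsum : D.sum = E.sum) (hm : K * (K + 2) ≤ D.sum) :
    ∃ H : SimpleGraph (Fin D.length ⊕ Fin E.length),
      H.Colorable 2 ∧ degMultiset H = (↑D + ↑E : Multiset ℕ) := by
  set m := D.sum with hmdef
  have hDk : ∀ d ∈ D, d ≤ K := fun d hd => (hD d hd).2
  have hEk : ∀ e ∈ E, e ≤ K := fun e he => (hE e he).2
  have hMK : K + 2 ≤ m / K := by
    rw [Nat.le_div_iff_mul_le (by omega : 0 < K)]
    have : (K + 2) * K = K * (K + 2) := by ring
    omega
  have tlt : ∀ x, x < m → tpose K m x < m := fun x hx => tpose_lt K m x hK hx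
  -- the inverse of tpose
  let σ : Fin m → Fin m := fun x => ⟨tpose K m x.val, tlt x.val x.isLt⟩
  have hinj : Function.Injective σ := by
    intro x y h
    exact Fin.ext (tpose_inj K m hK x.isLt y.isLt (congrArg Fin.val h))
  have hbij : Function.Bijective σ := Finite.injective_iff_bijective.mp hinj
  let e : Fin m ≃ Fin m := Equiv.ofBijective σ hbij
  let itp : ℕ → ℕ := fun y => if h : y < m then (e.symm ⟨y, h⟩).val else 0
  have hit2 : ∀ y, y < m → itp y < m := by
    intro y h
    simp only [itp, dif_pos h]
    exact (e.symm ⟨y, h⟩).isLt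
  have hit1 : ∀ y (h : y < m), tpose K m (itp y) = y := by
    intro y h
    simp only [itp, dif_pos h]
    have := e.apply_symm_apply ⟨y, h⟩
    have := congrArg Fin.val this
    simpa [e, Equiv.ofBijective, σ] using this
  have hit3 : ∀ x (h : x < m), itp (tpose K m x) = x := by
    intro x h
    simp only [itp, dif_pos (tlt x h)]
    have : e.symm (e ⟨x, h⟩) = ⟨x, h⟩ := e.symm_apply_apply _
    have h2 : e ⟨x, h⟩ = ⟨tpose K m x, tlt x h⟩ := rfl
    rw [h2] at this
    exact congrArg Fin.val this
  have far : ∀ x y, x < m → y < m → x ≠ y → x < y + K → y < x + K →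
      (tpose K m x + K ≤ tpose K m y ∨ tpose K m y + K ≤ tpose K m x) := by
    intro x y hx hy hne h1 h2
    rcases lt_or_gt_of_ne hne with hlt | hgt
    · have := tpose_spread K m x y hK (by omega) hlt (by omega)
      omega
    · have := tpose_spread K m y x hK (by omega) hgt (by omega)
      omega
  have hEsum : E.sum = m := hsum.symm
  have farE : ∀ x y, x < m → y < m → x ≠ y → owner D x = owner D y →
      owner E (tpose K m x) ≠ owner E (tpose K m y) := by
    intro x y hx hy hne hDo
    have hclose := owner_close K D hDk hx hy hDo
    have hfar := far x y hx hy hne hclose.1 hclose.2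
    exact owner_ne_of_far K hK E hEk (hEsum ▸ tlt x hx) (hEsum ▸ tlt y hy) hfar
  have farD : ∀ y y', y < m → y' < m → y ≠ y' → owner E y = owner E y' →
      owner D (itp y) ≠ owner D (itp y') := by
    intro y y' h h' hne hEo hcon
    have hx := hit2 y h
    have hx' := hit2 y' h'
    have hxny : itp y ≠ itp y' := by
      intro hh
      apply hne
      rw [← hit1 y h, ← hit1 y' h', hh]
    have hclose := owner_close K D hDk hx hx' hcon
    have hfar := far (itp y) (itp y') hx hx' hxny hclose.1 hclose.2
    rw [hit1 y h, hit1 y' h'] at hfar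
    have hcl2 := owner_close K E hEk (hEsum ▸ h) (hEsum ▸ h') hEo
    omega
  -- the graph
  set rel : Fin D.length → Fin E.length → Prop :=
    fun a b => ∃ x, x < m ∧ owner D x = a.val ∧ owner E (tpose K m x) = b.val with hrel
  refine ⟨bigraph _ _ rel, bigraph_colorable, ?_⟩
  have degL : ∀ a : Fin D.length, (bigraph _ _ rel).degree (.inl a) = D.get a := by
    intro a
    rw [bigraph_degree_inl]
    have hps : psum D (a.val + 1) ≤ m := by
      rw [hmdef, ← psum_length D]
      exact psum_mono D a.isLt
    have hIco : (Finset.Ico (psum D a.val) (psum D (a.val + 1))).card = D.get a := by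
      rw [Nat.card_Ico]
      have := psum_succ_get D a.val a.isLt
      simp only [List.get_eq_getElem]
      omega
    rw [← hIco]
    symm
    apply Finset.card_bij
      (i := fun x hx => (⟨owner E (tpose K m x),
        hEsum ▸ owner_lt_length E _ (hEsum ▸ tlt x (by
          have := Finset.mem_Ico.mp hx; omega))⟩ : Fin E.length))
    · intro x hx
      simp only [Finset.mem_filter, Finset.mem_univ, true_and, hrel]
      have hxm : x < m := by have := Finset.mem_Ico.mp hx; omega
      exact ⟨x, hxm, (owner_mem_Ico D a.val x hxm).mpr hx, rfl⟩
    · intro x hx x' hx' hfeq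
      by_contra hne
      have hxm : x < m := by have := Finset.mem_Ico.mp hx; omega
      have hxm' : x' < m := by have := Finset.mem_Ico.mp hx'; omega
      exact farE x x' hxm hxm' hne
        (((owner_mem_Ico D a.val x hxm).mpr hx).trans
          ((owner_mem_Ico D a.val x' hxm').mpr hx').symm)
        (congrArg Fin.val hfeq)
    · intro b hb
      simp only [Finset.mem_filter, Finset.mem_univ, true_and, hrel] at hb
      obtain ⟨x, hxm, hDo, hEo⟩ := hb
      refine ⟨x, (owner_mem_Ico D a.val x hxm).mp hDo, ?_⟩
      exact Fin.ext hEo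
  have degR : ∀ b : Fin E.length, (bigraph _ _ rel).degree (.inr b) = E.get b := by
    intro b
    rw [bigraph_degree_inr]
    have hps : psum E (b.val + 1) ≤ m := by
      rw [← hEsum, ← psum_length E]
      exact psum_mono E b.isLt
    have hIco : (Finset.Ico (psum E b.val) (psum E (b.val + 1))).card = E.get b := by
      rw [Nat.card_Ico]
      have := psum_succ_get E b.val b.isLt
      simp only [List.get_eq_getElem]
      omega
    rw [← hIco]
    symm
    apply Finset.card_bij
      (i := fun y hy => (⟨owner D (itp y),
        owner_lt_length D _ (by
          rw [← hmdef]
          exact hit2 y (by have := Finset.mem_Ico.mp hy; omega))⟩ : Fin D.length))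
    · intro y hy
      simp only [Finset.mem_filter, Finset.mem_univ, true_and, hrel]
      have hym : y < m := by have := Finset.mem_Ico.mp hy; omega
      refine ⟨itp y, hit2 y hym, rfl, ?_⟩
      rw [hit1 y hym]
      exact (owner_mem_Ico E b.val y (hEsum ▸ hym)).mpr hy
    · intro y hy y' hy' hfeq
      by_contra hne
      have hym : y < m := by have := Finset.mem_Ico.mp hy; omega
      have hym' : y' < m := by have := Finset.mem_Ico.mp hy'; omega
      exact farD y y' hym hym' hne
        (((owner_mem_Ico E b.val y (hEsum ▸ hym)).mpr hy).trans
          ((owner_mem_Ico E b.val y' (hEsum ▸ hym')).mpr hy').symm)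
        (congrArg Fin.val hfeq)
    · intro a ha
      simp only [Finset.mem_filter, Finset.mem_univ, true_and, hrel] at ha
      obtain ⟨x, hxm, hDo, hEo⟩ := ha
      refine ⟨tpose K m x, (owner_mem_Ico E b.val _ (hEsum ▸ tlt x hxm)).mp hEo, ?_⟩
      apply Fin.ext
      simp only
      rw [hit3 x hxm]
      exact hDo
  rw [degMultiset_bigraph]
  congr 1
  · rw [show (Finset.univ.val.map fun a : Fin D.length => (bigraph _ _ rel).degree (.inl a))
        = Finset.univ.val.map (fun a : Fin D.length => D.get a) from
      Multiset.map_congr rfl (fun a _ => degL a)]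
    exact map_univ_get D
  · rw [show (Finset.univ.val.map fun b : Fin E.length => (bigraph _ _ rel).degree (.inr b))
        = Finset.univ.val.map (fun b : Fin E.length => E.get b) from
      Multiset.map_congr rfl (fun b _ => degR b)]
    exact map_univ_get E

end RobHelp

namespace RobHelp

def Good (N : ℕ) (Dm : Multiset ℕ) : Prop :=
  ∃ (V : Type) (_ : Fintype V) (H : SimpleGraph V),
    H.Colorable 2 ∧ degMultiset H = Dm ∧ ∀ c : H.ConnectedComponent, c.supp.ncard ≤ N

section SumGraph

variable {α β : Type} (G₁ : SimpleGraph α) (G₂ : SimpleGraph β)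

def sumGraph : SimpleGraph (α ⊕ β) where
  Adj x y := match x, y with
    | .inl a, .inl b => G₁.Adj a b
    | .inr a, .inr b => G₂.Adj a b
    | _, _ => False
  symm := ⟨by rintro (a|a) (b|b) h <;> first | exact h.symm | exact h.elim⟩
  loopless := ⟨by
    rintro (a|a) h
    · exact G₁.irrefl h
    · exact G₂.irrefl h⟩

variable {G₁ G₂}

@[simp] lemma sumGraph_adj_inl_inl {a b} : (sumGraph G₁ G₂).Adj (.inl a) (.inl b) ↔ G₁.Adj a b := Iff.rfl
@[simp] lemma sumGraph_adj_inr_inr {a b} : (sumGraph G₁ G₂).Adj (.inr a) (.inr b) ↔ G₂.Adj a b := Iff.rfl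
@[simp] lemma sumGraph_adj_inl_inr {a b} : ¬ (sumGraph G₁ G₂).Adj (.inl a) (.inr b) := fun h => h
@[simp] lemma sumGraph_adj_inr_inl {a b} : ¬ (sumGraph G₁ G₂).Adj (.inr a) (.inl b) := fun h => h

lemma sumGraph_walk_inl : ∀ {u w : α ⊕ β}, ((sumGraph G₁ G₂).Walk u w) → ∀ a, u = .inl a →
    ∃ b, w = .inl b ∧ G₁.Reachable a b := by
  intro u w p
  induction p with
  | nil => exact fun a h => ⟨a, h, SimpleGraph.Reachable.refl a⟩
  | @cons u v w h p ih =>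
    intro a hu
    subst hu
    rcases v with a' | c
    · obtain ⟨b, hw, hr⟩ := ih a' rfl
      exact ⟨b, hw, (SimpleGraph.Adj.reachable (show G₁.Adj a a' from h)).trans hr⟩
    · exact h.elim

lemma sumGraph_reach_inl {a : α} {w : α ⊕ β} (h : (sumGraph G₁ G₂).Reachable (.inl a) w) :
    ∃ b, w = .inl b ∧ G₁.Reachable a b := by
  obtain ⟨p⟩ := h
  exact sumGraph_walk_inl p a rfl

lemma sumGraph_walk_inr : ∀ {u w : α ⊕ β}, ((sumGraph G₁ G₂).Walk u w) → ∀ a, u = .inr a →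
    ∃ b, w = .inr b ∧ G₂.Reachable a b := by
  intro u w p
  induction p with
  | nil => exact fun a h => ⟨a, h, SimpleGraph.Reachable.refl a⟩
  | @cons u v w h p ih =>
    intro a hu
    subst hu
    rcases v with c | a'
    · exact h.elim
    · obtain ⟨b, hw, hr⟩ := ih a' rfl
      exact ⟨b, hw, (SimpleGraph.Adj.reachable (show G₂.Adj a a' from h)).trans hr⟩

lemma sumGraph_reach_inr {a : β} {w : α ⊕ β} (h : (sumGraph G₁ G₂).Reachable (.inr a) w) :
    ∃ b, w = .inr b ∧ G₂.Reachable a b := by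
  obtain ⟨p⟩ := h
  exact sumGraph_walk_inr p a rfl

def inlHom : G₁ →g sumGraph G₁ G₂ where
  toFun := Sum.inl
  map_rel' := fun h => h

def inrHom : G₂ →g sumGraph G₁ G₂ where
  toFun := Sum.inr
  map_rel' := fun h => h

lemma sumGraph_supp_inl (a : α) :
    ((sumGraph G₁ G₂).connectedComponentMk (.inl a)).supp
      = Sum.inl '' (G₁.connectedComponentMk a).supp := by
  ext w
  simp only [SimpleGraph.ConnectedComponent.mem_supp_iff, SimpleGraph.ConnectedComponent.eq,
    Set.mem_image]
  constructor
  · intro h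
    obtain ⟨b, hw, hr⟩ := sumGraph_reach_inl h.symm
    exact ⟨b, hr.symm, hw.symm⟩
  · rintro ⟨b, hb, rfl⟩
    exact SimpleGraph.Reachable.map (inlHom) hb
lemma sumGraph_supp_inr (a : β) :
    ((sumGraph G₁ G₂).connectedComponentMk (.inr a)).supp
      = Sum.inr '' (G₂.connectedComponentMk a).supp := by
  ext w
  simp only [SimpleGraph.ConnectedComponent.mem_supp_iff, SimpleGraph.ConnectedComponent.eq,
    Set.mem_image]
  constructor
  · intro h
    obtain ⟨b, hw, hr⟩ := sumGraph_reach_inr h.symm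
    exact ⟨b, hr.symm, hw.symm⟩
  · rintro ⟨b, hb, rfl⟩
    exact SimpleGraph.Reachable.map (inrHom) hb

lemma sumGraph_nf_inl [Fintype α] [Fintype β] (a : α) :
    (sumGraph G₁ G₂).neighborFinset (.inl a)
      = (G₁.neighborFinset a).map ⟨Sum.inl, Sum.inl_injective⟩ := by
  ext y
  rcases y with c | b <;> simp

lemma sumGraph_nf_inr [Fintype α] [Fintype β] (b : β) :
    (sumGraph G₁ G₂).neighborFinset (.inr b)
      = (G₂.neighborFinset b).map ⟨Sum.inr, Sum.inr_injective⟩ := by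
  ext y
  rcases y with c | b <;> simp

lemma degMultiset_sumGraph [Fintype α] [Fintype β] :
    degMultiset (sumGraph G₁ G₂) = degMultiset G₁ + degMultiset G₂ := by
  unfold degMultiset
  rw [← Finset.univ_disjSum_univ]
  show Multiset.map _ (Finset.univ.val.disjSum Finset.univ.val) = _
  rw [Multiset.disjSum, Multiset.map_add, Multiset.map_map, Multiset.map_map]
  congr 1
  · apply Multiset.map_congr rfl
    intro a _
    show (sumGraph G₁ G₂).degree (.inl a) = G₁.degree a
    rw [SimpleGraph.degree, sumGraph_nf_inl, Finset.card_map, SimpleGraph.degree]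
  · apply Multiset.map_congr rfl
    intro b _
    show (sumGraph G₁ G₂).degree (.inr b) = G₂.degree b
    rw [SimpleGraph.degree, sumGraph_nf_inr, Finset.card_map, SimpleGraph.degree]

end SumGraph

lemma Good.add {N : ℕ} {D₁ D₂ : Multiset ℕ} (h₁ : Good N D₁) (h₂ : Good N D₂) :
    Good N (D₁ + D₂) := by
  obtain ⟨V₁, i₁, H₁, hc₁, hd₁, hcomp₁⟩ := h₁
  obtain ⟨V₂, i₂, H₂, hc₂, hd₂, hcomp₂⟩ := h₂
  refine ⟨V₁ ⊕ V₂, inferInstance, sumGraph H₁ H₂, ?_, ?_, ?_⟩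
  · obtain ⟨c₁⟩ := hc₁
    obtain ⟨c₂⟩ := hc₂
    refine ⟨SimpleGraph.Coloring.mk (Sum.elim c₁ c₂) ?_⟩
    rintro (a|a) (b|b) h
    · exact c₁.valid h
    · exact h.elim
    · exact h.elim
    · exact c₂.valid h
  · rw [degMultiset_sumGraph, hd₁, hd₂]
  · intro c
    obtain ⟨v, rfl⟩ := c.exists_rep
    rcases v with a | b
    · rw [show (SimpleGraph.ConnectedComponent.supp (Quot.mk (sumGraph H₁ H₂).Reachable (Sum.inl a)))
          = Sum.inl '' (H₁.connectedComponentMk a).supp from sumGraph_supp_inl a,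
        Set.ncard_image_of_injective _ Sum.inl_injective]
      exact hcomp₁ _
    · rw [show (SimpleGraph.ConnectedComponent.supp (Quot.mk (sumGraph H₁ H₂).Reachable (Sum.inr b)))
          = Sum.inr '' (H₂.connectedComponentMk b).supp from sumGraph_supp_inr b,
        Set.ncard_image_of_injective _ Sum.inr_injective]
      exact hcomp₂ _

end RobHelp

namespace RobHelp

lemma good_replicate_zero (N z : ℕ) (hN : 1 ≤ N) : Good N (Multiset.replicate z 0) := by
  refine ⟨Fin z, inferInstance, ⊥,
    ⟨SimpleGraph.Coloring.mk (fun _ => 0) (fun h => h.elim)⟩, ?_, ?_⟩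
  · unfold degMultiset
    have h2 : Multiset.map (Function.const (Fin z) 0) (Finset.univ.val : Multiset (Fin z))
        = Multiset.replicate z 0 := by
      rw [Multiset.map_const]
      congr 1
      simpa using rfl
    refine Eq.trans (Multiset.map_congr rfl fun v _ => ?_) h2
    unfold SimpleGraph.degree
    rw [show Function.const (Fin z) 0 v = 0 from rfl, Finset.card_eq_zero, Finset.eq_empty_iff_forall_notMem]
    intro w hw
    rw [SimpleGraph.mem_neighborFinset] at hw
    exact hw
  · intro c
    obtain ⟨v, rfl⟩ := c.exists_rep
    have hsupp : SimpleGraph.ConnectedComponent.supp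
        (Quot.mk (⊥ : SimpleGraph (Fin z)).Reachable v) = {v} := by
      ext w
      simp only [SimpleGraph.ConnectedComponent.mem_supp_iff, Set.mem_singleton_iff]
      rw [show (Quot.mk (⊥ : SimpleGraph (Fin z)).Reachable v)
        = (⊥ : SimpleGraph (Fin z)).connectedComponentMk v from rfl,
        SimpleGraph.ConnectedComponent.mem_supp_iff, SimpleGraph.ConnectedComponent.eq, SimpleGraph.reachable_bot]
    rw [hsupp, Set.ncard_singleton]
    exact hN

def gList : List ℕ → ℕ → List ℕ
  | [], _ => []
  | e :: l, t => if e ≤ t then e :: gList l (t - e) else []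

lemma gList_prefix (Q : List ℕ) (t : ℕ) : (gList Q t) <+: Q := by
  induction Q generalizing t with
  | nil => simp [gList]
  | cons e l ih =>
    simp only [gList]
    by_cases h : e ≤ t
    · rw [if_pos h]
      exact List.cons_prefix_cons.mpr ⟨rfl, ih (t - e)⟩
    · rw [if_neg h]
      exact List.nil_prefix

lemma gList_sum_le (Q : List ℕ) (t : ℕ) : (gList Q t).sum ≤ t := by
  induction Q generalizing t with
  | nil => simp [gList]
  | cons e l ih =>
    simp only [gList]
    split
    · rename_i h
      simp only [List.sum_cons]
      have := ih (t - e)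
      omega
    · simp

lemma gList_close (K : ℕ) (hK : 1 ≤ K) (Q : List ℕ) (hQ : ∀ e ∈ Q, e ≤ K) :
    ∀ t, t ≤ Q.sum → t < (gList Q t).sum + K := by
  induction Q with
  | nil => intro t ht; simp at ht; simp [gList, ht]; omega
  | cons e l ih =>
    intro t ht
    simp only [gList]
    split
    · rename_i h
      simp only [List.sum_cons]
      have h2 := ih (fun x hx => hQ x (List.mem_cons_of_mem e hx)) (t - e)
        (by simp at ht; omega)
      omega
    · rename_i h
      have := hQ e List.mem_cons_self
      simp only [List.sum_nil]
      omega

lemma gList_mono (Q : List ℕ) : ∀ {t t' : ℕ}, t ≤ t' → (gList Q t) <+: (gList Q t') := by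
  induction Q with
  | nil => intro t t' _; simp [gList]
  | cons e l ih =>
    intro t t' h
    simp only [gList]
    by_cases h1 : e ≤ t
    · rw [if_pos h1, if_pos (by omega)]
      exact List.cons_prefix_cons.mpr ⟨rfl, ih (by omega)⟩
    · rw [if_neg h1]
      exact List.nil_prefix

lemma psum_bounds (K : ℕ) (l : List ℕ) (hl : ∀ x ∈ l, 1 ≤ x ∧ x ≤ K) {i j : ℕ}
    (hij : i ≤ j) (hj : j ≤ l.length) :
    psum l i + (j - i) ≤ psum l j ∧ psum l j ≤ psum l i + (j - i) * K := by
  induction j with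
  | zero =>
    have : i = 0 := by omega
    subst this; simp
  | succ n ihn =>
    rcases Nat.eq_or_lt_of_le hij with he | hlt
    · subst he; simp
    · have hn : i ≤ n := by omega
      have h1 := ihn hn (by omega)
      have h2 := psum_succ_get l n (by omega)
      have h3 := hl l[n] (List.getElem_mem (by omega))
      constructor
      · have : (n + 1 - i) = (n - i) + 1 := by omega
        omega
      · have he : (n + 1 - i) * K = (n - i) * K + K := by
          have : (n + 1 - i) = (n - i) + 1 := by omega
          rw [this]; ring
        omega

lemma chunk (K : ℕ) (hK : 1 ≤ K) (P Q : List ℕ)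
    (hP : ∀ x ∈ P, 1 ≤ x ∧ x ≤ K) (hQ : ∀ x ∈ Q, 1 ≤ x ∧ x ≤ K)
    (hsum : P.sum = Q.sum) (hlen : K + 1 ≤ P.length) :
    ∃ P₁ Q₁ : List ℕ, (↑P₁ : Multiset ℕ) ≤ ↑P ∧ (↑Q₁ : Multiset ℕ) ≤ ↑Q
      ∧ P₁.sum = Q₁.sum ∧ 1 ≤ P₁.sum ∧ P₁.sum ≤ K * K := by
  have hmap : ∀ i ∈ Finset.range (K + 1),
      (psum P i - (gList Q (psum P i)).sum) ∈ Finset.range K := by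
    intro i _
    have h1 : psum P i ≤ Q.sum := hsum ▸ psum_le_sum P i
    have h2 := gList_close K hK Q (fun e he => (hQ e he).2) (psum P i) h1
    have h3 := gList_sum_le Q (psum P i)
    simp only [Finset.mem_range]
    omega
  obtain ⟨i, hi, j, hj, hne, heq⟩ :=
    Finset.exists_ne_map_eq_of_card_lt_of_maps_to
      (by simp : (Finset.range K).card < (Finset.range (K + 1)).card) hmap
  wlog hij : i < j generalizing i j
  · exact this j hj i hi (Ne.symm hne) heq.symm (by omega)
  simp only [Finset.mem_range] at hi hj
  -- the P-side chunk
  set P₁ : List ℕ := (P.take j).drop i with hP₁def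
  have htt : P.take i = (P.take j).take i := by
    rw [List.take_take, min_eq_left (by omega)]
  have hPsum : psum P i + P₁.sum = psum P j := by
    have := List.take_append_drop i (P.take j)
    have h2 := congrArg List.sum this
    rw [List.sum_append] at h2
    rw [psum, psum, htt]
    exact h2
  have hbnd := psum_bounds K P hP (le_of_lt hij) (by omega)
  -- the Q-side chunk
  set π : List ℕ := gList Q (psum P i) with hπ
  set π' : List ℕ := gList Q (psum P j) with hπ'
  have hpre : π <+: π' := gList_mono Q (psum_mono P (le_of_lt hij))
  set Q₁ : List ℕ := π'.drop π.length with hQ₁def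
  have hQsum : π.sum + Q₁.sum = π'.sum := by
    obtain ⟨s, hs⟩ := hpre
    have : π'.drop π.length = s := by rw [← hs, List.drop_left]
    rw [hQ₁def, this, ← hs, List.sum_append]
  have hq1 : psum P i ≤ Q.sum := hsum ▸ psum_le_sum P i
  have hq2 : psum P j ≤ Q.sum := hsum ▸ psum_le_sum P j
  have hg1 := gList_sum_le Q (psum P i)
  have hg2 := gList_sum_le Q (psum P j)
  have hc1 := gList_close K hK Q (fun e he => (hQ e he).2) (psum P i) hq1
  have hc2 := gList_close K hK Q (fun e he => (hQ e he).2) (psum P j) hq2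
  refine ⟨P₁, Q₁, ?_, ?_, ?_, ?_, ?_⟩
  · exact Multiset.coe_le.mpr (((List.drop_sublist i (P.take j)).trans (P.take_sublist j)).subperm)
  · exact Multiset.coe_le.mpr (((List.drop_sublist π.length π').trans
      ((gList_prefix Q (psum P j)).sublist)).subperm)
  · -- sums equal
    have e1 : π.sum + Q₁.sum = π'.sum := hQsum
    have e2 : psum P i + P₁.sum = psum P j := hPsum
    have e3 : π.sum ≤ psum P i := hg1
    have e4 : π'.sum ≤ psum P j := hg2
    have e5 : psum P i - π.sum = psum P j - π'.sum := heq
    omega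
  · omega
  · have h2 := hbnd.2
    have hji : (j - i) * K ≤ K * K := Nat.mul_le_mul_right K (by omega)
    omega

end RobHelp

namespace RobHelp

lemma chunk' (K : ℕ) (hK : 1 ≤ K) (P Q : Multiset ℕ)
    (hP : ∀ x ∈ P, 1 ≤ x ∧ x ≤ K) (hQ : ∀ x ∈ Q, 1 ≤ x ∧ x ≤ K)
    (hsum : P.sum = Q.sum) (hlen : K * (K + 1) ≤ P.sum) :
    ∃ P₁ Q₁ : Multiset ℕ, P₁ ≤ P ∧ Q₁ ≤ Q
      ∧ P₁.sum = Q₁.sum ∧ 1 ≤ P₁.sum ∧ P₁.sum ≤ K * K := by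
  obtain ⟨lP, hlP⟩ := Quotient.exists_rep P
  obtain ⟨lQ, hlQ⟩ := Quotient.exists_rep Q
  rw [Multiset.quot_mk_to_coe] at hlP hlQ
  subst hlP; subst hlQ
  have hlenP : K + 1 ≤ lP.length := by
    by_contra hc
    push_neg at hc
    have h1 : (↑lP : Multiset ℕ).sum ≤ Multiset.card (↑lP : Multiset ℕ) • K :=
      Multiset.sum_le_card_nsmul _ _ (fun x hx => (hP x hx).2)
    rw [Multiset.coe_card, smul_eq_mul] at h1
    have h2 : lP.length * K ≤ K * K := Nat.mul_le_mul_right K (by omega)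
    have h3 : K * (K + 1) = K * K + K := by ring
    have h4 : (↑lP : Multiset ℕ).sum = lP.sum := rfl
    omega
  have hsum' : lP.sum = lQ.sum := hsum
  obtain ⟨P₁, Q₁, h1, h2, h3, h4, h5⟩ := chunk K hK lP lQ hP hQ hsum' hlenP
  exact ⟨↑P₁, ↑Q₁, h1, h2, h3, h4, h5⟩

lemma window (K : ℕ) (hK : 1 ≤ K) (P Q : Multiset ℕ)
    (hP : ∀ x ∈ P, 1 ≤ x ∧ x ≤ K) (hQ : ∀ x ∈ Q, 1 ≤ x ∧ x ≤ K)
    (hsum : P.sum = Q.sum) :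
    ∀ s, s + K * (K + 1) ≤ P.sum →
    ∃ P₁ Q₁ : Multiset ℕ, P₁ ≤ P ∧ Q₁ ≤ Q ∧ P₁.sum = Q₁.sum
      ∧ s ≤ P₁.sum ∧ P₁.sum ≤ s + K * K := by
  intro s
  induction s with
  | zero => exact fun _ => ⟨0, 0, Multiset.zero_le _, Multiset.zero_le _, rfl, le_refl _, by simp⟩
  | succ n ih =>
    intro hs
    obtain ⟨P₁, Q₁, hP₁, hQ₁, heq, hlo, hhi⟩ := ih (by omega)
    rcases Nat.lt_or_ge P₁.sum (n + 1) with hlt | hge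
    · have hn : P₁.sum = n := by omega
      obtain ⟨R, hR⟩ := exists_add_of_le hP₁
      obtain ⟨S, hS⟩ := exists_add_of_le hQ₁
      have hRsum : P₁.sum + R.sum = P.sum := by rw [hR, Multiset.sum_add]
      have hSsum : Q₁.sum + S.sum = Q.sum := by rw [hS, Multiset.sum_add]
      have hRS : R.sum = S.sum := by omega
      obtain ⟨P₂, Q₂, hP₂, hQ₂, heq₂, hlo₂, hhi₂⟩ := chunk' K hK R S
        (fun x hx => hP x (by rw [hR]; exact Multiset.mem_add.mpr (Or.inr hx)))
        (fun x hx => hQ x (by rw [hS]; exact Multiset.mem_add.mpr (Or.inr hx)))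
        hRS (by omega)
      refine ⟨P₁ + P₂, Q₁ + Q₂, ?_, ?_, ?_, ?_, ?_⟩
      · rw [hR]; exact add_le_add (le_refl P₁) hP₂
      · rw [hS]; exact add_le_add (le_refl Q₁) hQ₂
      · rw [Multiset.sum_add, Multiset.sum_add, heq, heq₂]
      · rw [Multiset.sum_add]; omega
      · rw [Multiset.sum_add]; omega
    · exact ⟨P₁, Q₁, hP₁, hQ₁, heq, hge, by omega⟩

lemma realize (K : ℕ) (hK : 1 ≤ K) :
    ∀ m (P Q : Multiset ℕ), (∀ x ∈ P, 1 ≤ x ∧ x ≤ K) → (∀ x ∈ Q, 1 ≤ x ∧ x ≤ K) →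
      P.sum = Q.sum → P.sum = m → K * (K + 2) ≤ m →
      Good (2 * (2 * (K * (K + 2)) + K * K)) (P + Q) := by
  intro m
  induction m using Nat.strong_induction_on with
  | _ m ih =>
    intro P Q hP hQ hsum hm hL
    rcases le_or_gt m (2 * (K * (K + 2)) + K * K) with hsmall | hbig
    · -- realize directly with the transpose construction
      obtain ⟨lP, hlP⟩ := Quotient.exists_rep P
      obtain ⟨lQ, hlQ⟩ := Quotient.exists_rep Q
      rw [Multiset.quot_mk_to_coe] at hlP hlQ
      subst hlP; subst hlQ
      obtain ⟨H, hcol, hdeg⟩ := construction K hK lP lQ hP hQ hsum (by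
        rw [show lP.sum = (↑lP : Multiset ℕ).sum from rfl]; omega)
      refine ⟨Fin lP.length ⊕ Fin lQ.length, inferInstance, H, hcol, hdeg, ?_⟩
      intro c
      have hb := supp_ncard_le H c
      have hcard : Fintype.card (Fin lP.length ⊕ Fin lQ.length) = lP.length + lQ.length := by
        simp [Fintype.card_sum]
      have hlenP : lP.length ≤ m := by
        have h1 := Multiset.card_nsmul_le_sum (s := (↑lP : Multiset ℕ)) (a := 1)
          (fun x hx => (hP x hx).1)
        rw [Multiset.coe_card, smul_eq_mul, mul_one] at h1
        omega
      have hlenQ : lQ.length ≤ m := by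
        have h1 := Multiset.card_nsmul_le_sum (s := (↑lQ : Multiset ℕ)) (a := 1)
          (fun x hx => (hQ x hx).1)
        rw [Multiset.coe_card, smul_eq_mul, mul_one] at h1
        have h2 : (↑lQ : Multiset ℕ).sum = m := by rw [← hsum]; exact hm
        omega
      omega
    · -- split off a balanced chunk and recurse
      obtain ⟨P₁, Q₁, hP₁, hQ₁, heq₁, hlo, hhi⟩ := window K hK P Q hP hQ hsum
        (K * (K + 2)) (by nlinarith)
      obtain ⟨R, hR⟩ := exists_add_of_le hP₁
      obtain ⟨S, hS⟩ := exists_add_of_le hQ₁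
      have hRsum : P₁.sum + R.sum = P.sum := by rw [hR, Multiset.sum_add]
      have hSsum : Q₁.sum + S.sum = Q.sum := by rw [hS, Multiset.sum_add]
      have hKpos : 1 ≤ K * (K + 2) := by nlinarith
      have g1 : Good (2 * (2 * (K * (K + 2)) + K * K)) (P₁ + Q₁) := by
        apply ih P₁.sum (by omega) P₁ Q₁
          (fun x hx => hP x (Multiset.mem_of_le hP₁ hx))
          (fun x hx => hQ x (Multiset.mem_of_le hQ₁ hx))
          heq₁ rfl (by omega)
      have g2 : Good (2 * (2 * (K * (K + 2)) + K * K)) (R + S) := by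
        apply ih R.sum (by omega) R S
          (fun x hx => hP x (by rw [hR]; exact Multiset.mem_add.mpr (Or.inr hx)))
          (fun x hx => hQ x (by rw [hS]; exact Multiset.mem_add.mpr (Or.inr hx)))
          (by omega) rfl (by omega)
      have := g1.add g2
      have hrearr : P₁ + Q₁ + (R + S) = P + Q := by
        rw [hR, hS]
        exact add_add_add_comm P₁ Q₁ R S
      rwa [hrearr] at this

end RobHelp

namespace RobHelp

lemma good_to_fin (N : ℕ) (D : Multiset ℕ) (h : Good N D) :
    ∃ (n : ℕ) (H : SimpleGraph (Fin n)), H.Colorable 2 ∧ degMultiset H = D ∧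
      ∀ c : H.ConnectedComponent, c.supp.ncard ≤ N := by
  obtain ⟨V, iV, G, hcol, hdeg, hcomp⟩ := h
  refine ⟨Fintype.card V, SimpleGraph.comap (Fintype.equivFin V).symm G, ?_, ?_, ?_⟩
  · obtain ⟨c⟩ := hcol
    exact ⟨SimpleGraph.Coloring.mk (fun x => c ((Fintype.equivFin V).symm x))
      (fun h => c.valid (SimpleGraph.comap_adj.mp h))⟩
  · set e := Fintype.equivFin V
    set H := SimpleGraph.comap e.symm G with hH
    have hd : ∀ x, H.degree x = G.degree (e.symm x) := by
      intro x
      have hnf : H.neighborFinset x = (G.neighborFinset (e.symm x)).map e.toEmbedding := by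
        ext w
        simp only [SimpleGraph.mem_neighborFinset, Finset.mem_map, Equiv.coe_toEmbedding]
        constructor
        · intro ha
          exact ⟨e.symm w, SimpleGraph.comap_adj.mp ha, e.apply_symm_apply w⟩
        · rintro ⟨u, hu, rfl⟩
          rw [hH]
          simp only [SimpleGraph.comap_adj, Equiv.symm_apply_apply]
          exact hu
      rw [SimpleGraph.degree, hnf, Finset.card_map, SimpleGraph.degree]
    unfold degMultiset
    refine (Multiset.map_congr rfl (fun x _ => hd x)).trans ?_
    rw [show (fun x => G.degree (e.symm x)) = (fun v => G.degree v) ∘ e.symm from rfl]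
    rw [← Multiset.map_map]
    rw [show (Finset.univ.val.map e.symm) = Finset.univ.val from
      congrArg Finset.val (Finset.map_univ_equiv e.symm)]
    exact hdeg
  · set e := Fintype.equivFin V
    set H := SimpleGraph.comap e.symm G with hH
    let hhomG : H →g G := ⟨e.symm, fun h => SimpleGraph.comap_adj.mp h⟩
    let hhomH : G →g H := ⟨e, fun {a b} h => by
      show (SimpleGraph.comap (⇑e.symm) G).Adj (e a) (e b)
      simp only [SimpleGraph.comap_adj, Equiv.symm_apply_apply]; exact h⟩
    intro c
    obtain ⟨x, rfl⟩ := c.exists_rep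
    have hsupp : SimpleGraph.ConnectedComponent.supp (Quot.mk H.Reachable x)
        = e '' (G.connectedComponentMk (e.symm x)).supp := by
      ext w
      constructor
      · intro hw
        have hr : H.Reachable w x := SimpleGraph.ConnectedComponent.eq.mp hw
        exact ⟨e.symm w, SimpleGraph.ConnectedComponent.eq.mpr (hr.map hhomG),
          e.apply_symm_apply w⟩
      · rintro ⟨u, hu, rfl⟩
        have hr : G.Reachable u (e.symm x) := SimpleGraph.ConnectedComponent.eq.mp hu
        have h2 : H.Reachable (e u) (e (e.symm x)) := hr.map hhomH
        rw [e.apply_symm_apply] at h2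
        exact SimpleGraph.ConnectedComponent.eq.mpr h2
    rw [hsupp, Set.ncard_image_of_injective _ e.injective]
    exact hcomp _

lemma comp_bound_nonzero {V : Type} [Fintype V] (G : SimpleGraph V) (c : G.ConnectedComponent) :
    c.supp.ncard ≤ max 1 (Finset.univ.filter (fun v => G.degree v ≠ 0)).card := by
  obtain ⟨v, rfl⟩ := c.exists_rep
  by_cases hs : SimpleGraph.ConnectedComponent.supp (Quot.mk G.Reachable v) ⊆ {v}
  · have h1 : (SimpleGraph.ConnectedComponent.supp (Quot.mk G.Reachable v)).ncard
        ≤ ({v} : Set V).ncard := Set.ncard_le_ncard hs (Set.finite_singleton v)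
    rw [Set.ncard_singleton] at h1
    omega
  · rw [Set.not_subset] at hs
    obtain ⟨w, hw, hwne⟩ := hs
    have hwne : w ≠ v := fun h => hwne (h ▸ rfl)
    have key : SimpleGraph.ConnectedComponent.supp (Quot.mk G.Reachable v)
        ⊆ ↑(Finset.univ.filter (fun u => G.degree u ≠ 0)) := by
      intro u hu
      simp only [Finset.coe_filter, Set.mem_setOf_eq, Finset.mem_univ, true_and]
      -- u is in the same component; find a distinct vertex in the component
      have hru : G.Reachable u v := by
        rw [show Quot.mk G.Reachable v = G.connectedComponentMk v from rfl] at hu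
        rw [SimpleGraph.ConnectedComponent.mem_supp_iff] at hu
        exact SimpleGraph.ConnectedComponent.eq.mp hu
      have hrw : G.Reachable w v := by
        rw [show Quot.mk G.Reachable v = G.connectedComponentMk v from rfl] at hw
        rw [SimpleGraph.ConnectedComponent.mem_supp_iff] at hw
        exact SimpleGraph.ConnectedComponent.eq.mp hw
      have hex : ∃ w', w' ≠ u ∧ G.Reachable u w' := by
        by_cases huv : u = v
        · subst huv
          exact ⟨w, hwne, hrw.symm⟩
        · exact ⟨v, Ne.symm huv, hru⟩
      obtain ⟨w', hne', hr'⟩ := hex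
      obtain ⟨p⟩ := hr'
      cases p with
      | nil => exact absurd rfl hne'
      | cons h q =>
        have : 0 < G.degree u := (G.degree_pos_iff_exists_adj u).mpr ⟨_, h⟩
        omega
    have h2 := Set.ncard_le_ncard key (Set.toFinite _)
    rw [Set.ncard_coe_finset] at h2
    omega

lemma sum_degree_eq_card {V : Type} [Fintype V] (G : SimpleGraph V) (A : Finset V) :
    A.sum (fun v => G.degree v)
      = ((A ×ˢ Finset.univ).filter (fun p => G.Adj p.1 p.2)).card := by
  rw [Finset.card_eq_sum_card_fiberwise (f := Prod.fst) (t := A)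
    (fun p hp => (Finset.mem_product.mp (Finset.mem_filter.mp hp).1).1)]
  apply Finset.sum_congr rfl
  intro v hv
  have hset : ((A ×ˢ Finset.univ).filter (fun p => G.Adj p.1 p.2)).filter
      (fun p => p.1 = v) = (G.neighborFinset v).map
        ⟨fun w => (v, w), fun a b h => (Prod.mk.injEq v a v b).mp h |>.2⟩ := by
    ext p
    rcases p with ⟨p1, p2⟩
    simp only [Finset.mem_filter, Finset.mem_product, Finset.mem_univ, and_true,
      Finset.mem_map, SimpleGraph.mem_neighborFinset, Function.Embedding.coeFn_mk]
    constructor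
    · rintro ⟨⟨hA, hadj⟩, rfl⟩
      exact ⟨p2, hadj, rfl⟩
    · rintro ⟨w, hw, heq⟩
      obtain ⟨h1, h2⟩ := Prod.mk.injEq .. |>.mp heq
      subst h1; subst h2
      exact ⟨⟨hv, hw⟩, rfl⟩
  rw [hset, Finset.card_map, SimpleGraph.degree]

lemma bipartite_sum_eq {V : Type} [Fintype V] (G : SimpleGraph V) (c : G.Coloring (Fin 2)) :
    ((Finset.univ.filter (fun v => c v = 0)).sum (fun v => G.degree v))
      = ((Finset.univ.filter (fun v => ¬ c v = 0)).sum (fun v => G.degree v)) := by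
  rw [sum_degree_eq_card, sum_degree_eq_card]
  apply Finset.card_bij' (i := fun p _ => Prod.swap p) (j := fun p _ => Prod.swap p)
  · intro p hp
    simp only [Finset.mem_filter, Finset.mem_product, Finset.mem_univ, true_and, and_true,
      Prod.fst_swap, Prod.snd_swap] at hp ⊢
    obtain ⟨h1, h2⟩ := hp
    exact ⟨fun hc0 => c.valid h2 (h1.trans hc0.symm), h2.symm⟩
  · intro p hp
    simp only [Finset.mem_filter, Finset.mem_product, Finset.mem_univ, true_and, and_true,
      Prod.fst_swap, Prod.snd_swap] at hp ⊢
    obtain ⟨h1, h2⟩ := hp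
    have hd : ∀ a b : Fin 2, a ≠ b → ¬ a = 0 → b = 0 := by decide
    exact ⟨hd _ _ (c.valid h2) h1, h2.symm⟩
  · intro p _; exact Prod.swap_swap p
  · intro p _; exact Prod.swap_swap p

end RobHelp

open RobHelp

/-- **Robertson's bipartite question, bounded components form.**
For every `k` there is an `N` such that every finite simple bipartite
(2-colorable) graph of maximum degree at most `k` has the same degree multiset
as some bipartite graph all of whose connected components have at most `N`
vertices. -/
theorem bipartite_bounded_degree_realized_with_bounded_components (k : ℕ) :
    ∃ N : ℕ, ∀ (V : Type) [Fintype V] (G : SimpleGraph V),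
      G.Colorable 2 →
      (∀ v : V, G.degree v ≤ k) →
      ∃ (n : ℕ) (H : SimpleGraph (Fin n)),
        H.Colorable 2 ∧
        degMultiset H = degMultiset G ∧
        ∀ c : H.ConnectedComponent, c.supp.ncard ≤ N := by
  refine ⟨2 * (2 * ((k + 1) * ((k + 1) + 2)) + (k + 1) * (k + 1)), ?_⟩
  intro V iV G hcol hdeg
  set K := k + 1 with hKdef
  have hK : 1 ≤ K := by omega
  have hK3 : 3 ≤ K * (K + 2) := by nlinarith
  set N := 2 * (2 * (K * (K + 2)) + K * K) with hNdef
  obtain ⟨co⟩ := hcol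
  apply good_to_fin
  set U : Multiset V := Finset.univ.val with hU
  set M0 : Multiset V := U.filter (fun v => co v = 0) with hM0
  set M1 : Multiset V := U.filter (fun v => ¬ co v = 0) with hM1
  have hsplit : degMultiset G = M0.map (fun v => G.degree v) + M1.map (fun v => G.degree v) := by
    unfold degMultiset
    rw [← Multiset.map_add, hM0, hM1, Multiset.filter_add_not]
  set P : Multiset ℕ := (M0.filter (fun v => ¬ G.degree v = 0)).map (fun v => G.degree v) with hP0
  set Q : Multiset ℕ := (M1.filter (fun v => ¬ G.degree v = 0)).map (fun v => G.degree v) with hQ0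
  set z0 : ℕ := Multiset.card (M0.filter (fun v => G.degree v = 0)) with hz0
  set z1 : ℕ := Multiset.card (M1.filter (fun v => G.degree v = 0)) with hz1
  have hrep0 : (M0.filter (fun v => G.degree v = 0)).map (fun v => G.degree v)
      = Multiset.replicate z0 0 := by
    rw [Multiset.eq_replicate]
    constructor
    · rw [Multiset.card_map]
    · intro b hb
      obtain ⟨v, hv, rfl⟩ := Multiset.mem_map.mp hb
      exact (Multiset.mem_filter.mp hv).2
  have hrep1 : (M1.filter (fun v => G.degree v = 0)).map (fun v => G.degree v)
      = Multiset.replicate z1 0 := by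
    rw [Multiset.eq_replicate]
    constructor
    · rw [Multiset.card_map]
    · intro b hb
      obtain ⟨v, hv, rfl⟩ := Multiset.mem_map.mp hb
      exact (Multiset.mem_filter.mp hv).2
  have hM0split : M0.map (fun v => G.degree v) = Multiset.replicate z0 0 + P := by
    rw [← hrep0, ← Multiset.map_add, Multiset.filter_add_not]
  have hM1split : M1.map (fun v => G.degree v) = Multiset.replicate z1 0 + Q := by
    rw [← hrep1, ← Multiset.map_add, Multiset.filter_add_not]
  have hdecomp : degMultiset G = (P + Q) + Multiset.replicate (z0 + z1) 0 := by
    rw [hsplit, hM0split, hM1split, Multiset.replicate_add]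
    exact (add_add_add_comm _ _ _ _).trans (by rw [add_comm (Multiset.replicate z0 0 + Multiset.replicate z1 0) (P + Q)])
  -- sums
  have hPsum : P.sum = (Finset.univ.filter (fun v => co v = 0)).sum (fun v => G.degree v) := by
    have h1 : (M0.map (fun v => G.degree v)).sum = P.sum := by
      rw [hM0split, Multiset.sum_add, Multiset.sum_replicate, smul_zero, zero_add]
    rw [← h1]
    rfl
  have hQsum : Q.sum = (Finset.univ.filter (fun v => ¬ co v = 0)).sum (fun v => G.degree v) := by
    have h1 : (M1.map (fun v => G.degree v)).sum = Q.sum := by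
      rw [hM1split, Multiset.sum_add, Multiset.sum_replicate, smul_zero, zero_add]
    rw [← h1]
    rfl
  have hPQ : P.sum = Q.sum := by
    rw [hPsum, hQsum]
    exact bipartite_sum_eq G co
  have hPmem : ∀ x ∈ P, 1 ≤ x ∧ x ≤ K := by
    intro x hx
    obtain ⟨v, hv, rfl⟩ := Multiset.mem_map.mp hx
    have h1 := (Multiset.mem_filter.mp hv).2
    have h2 := hdeg v
    omega
  have hQmem : ∀ x ∈ Q, 1 ≤ x ∧ x ≤ K := by
    intro x hx
    obtain ⟨v, hv, rfl⟩ := Multiset.mem_map.mp hx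
    have h1 := (Multiset.mem_filter.mp hv).2
    have h2 := hdeg v
    omega
  rcases le_or_gt (K * (K + 2)) P.sum with hbig | hsmall
  · have g1 : Good N (P + Q) := by
      rw [hNdef]
      exact realize K hK P.sum P Q hPmem hQmem hPQ rfl hbig
    have g2 : Good N (Multiset.replicate (z0 + z1) 0) :=
      good_replicate_zero N (z0 + z1) (by omega)
    rw [hdecomp]
    exact g1.add g2
  · -- use G itself
    refine ⟨V, iV, G, ⟨co⟩, rfl, ?_⟩
    intro comp
    have h1 := comp_bound_nonzero G comp
    have hcard : (Finset.univ.filter (fun v => ¬ G.degree v = 0)).card ≤ N := by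
      have h2 : (Finset.univ.filter (fun v => ¬ G.degree v = 0)).card • 1
          ≤ (Finset.univ.filter (fun v => ¬ G.degree v = 0)).sum (fun v => G.degree v) := by
        apply Finset.card_nsmul_le_sum
        intro x hx
        have := (Finset.mem_filter.mp hx).2
        omega
      rw [smul_eq_mul, mul_one] at h2
      have h3 : (Finset.univ.filter (fun v => ¬ G.degree v = 0)).sum (fun v => G.degree v)
          ≤ Finset.univ.sum (fun v => G.degree v) :=
        Finset.sum_le_sum_of_subset (Finset.filter_subset _ _)
      have h4 : Finset.univ.sum (fun v => G.degree v)
          = (Finset.univ.filter (fun v => co v = 0)).sum (fun v => G.degree v)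
            + (Finset.univ.filter (fun v => ¬ co v = 0)).sum (fun v => G.degree v) :=
        (Finset.sum_filter_add_sum_filter_not _ _ _).symm
      rw [← hPsum, ← hQsum, ← hPQ] at h4
      omega
    have hfil : (Finset.univ.filter (fun v => G.degree v ≠ 0)).card
        = (Finset.univ.filter (fun v => ¬ G.degree v = 0)).card := rfl
    rw [hfil] at h1
    omega
end

section
/- Fix a natural number k. There exists a finite family Z of finite simple bipartite graphs such that for every finite simple bipartite (2-colorable) graph G with maximum degree at most k, the degree multiset of G equals the sum of the degree multisets of the members of some finite multiset of graphs drawn from Z. Consequently, every degree sequence of a finite bipartite graph with all degrees at most k is realized by a disjoint union of bipartite graphs from the fixed finite set Z. -/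
open scoped Classical
set_option linter.unusedSectionVars false
set_option maxHeartbeats 1000000

namespace BipAux
variable {V : Type} [Fintype V]

lemma fin2_eq_one {a : Fin 2} (h : a ≠ 0) : a = 1 := by omega
lemma fin2_eq_zero {a : Fin 2} (h : a ≠ 1) : a = 0 := by omega
variable {V : Type} [Fintype V]

/-- no walk of length ≤ 3 between x and y (and x ≠ y) -/
def Far (G : SimpleGraph V) (x y : V) : Prop :=
  x ≠ y ∧ ¬ G.Adj x y ∧ (∀ p, ¬ (G.Adj x p ∧ G.Adj p y)) ∧
    (∀ p q, ¬ (G.Adj x p ∧ G.Adj p q ∧ G.Adj q y))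

lemma Far.symm {G : SimpleGraph V} {x y : V} (h : Far G x y) : Far G y x := by
  obtain ⟨h1, h2, h3, h4⟩ := h
  refine ⟨Ne.symm h1, fun a => h2 a.symm, fun p hp => h3 p ⟨hp.2.symm, hp.1.symm⟩,
    fun p q hpq => h4 q p ⟨hpq.2.2.symm, hpq.2.1.symm, hpq.1.symm⟩⟩

noncomputable def NB (G : SimpleGraph V) : V → Finset V := fun y => G.neighborFinset y

lemma mem_NB {G : SimpleGraph V} {x y : V} : y ∈ NB G x ↔ G.Adj x y := by
  simp [NB]

noncomputable def badF (G : SimpleGraph V) (x : V) : Finset V :=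
  insert x ((NB G x) ∪ (NB G x).biUnion (NB G) ∪
    ((NB G x).biUnion (NB G)).biUnion (NB G))

lemma mem_badF_of_not_far {G : SimpleGraph V} {x y : V} (h : ¬ Far G x y) :
    y ∈ badF G x := by
  unfold badF
  by_cases hxy : x = y
  · subst hxy; exact Finset.mem_insert_self x _
  by_cases hadj : G.Adj x y
  · simp only [Finset.mem_insert, Finset.mem_union, mem_NB, Finset.mem_biUnion]
    exact Or.inr (Or.inl (Or.inl hadj))
  by_cases h3 : ∃ p, G.Adj x p ∧ G.Adj p y
  · obtain ⟨p, hp1, hp2⟩ := h3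
    simp only [Finset.mem_insert, Finset.mem_union, mem_NB, Finset.mem_biUnion]
    exact Or.inr (Or.inl (Or.inr ⟨p, hp1, hp2⟩))
  by_cases h4 : ∃ p q, G.Adj x p ∧ G.Adj p q ∧ G.Adj q y
  · obtain ⟨p, q, hp1, hp2, hp3⟩ := h4
    simp only [Finset.mem_insert, Finset.mem_union, mem_NB, Finset.mem_biUnion]
    exact Or.inr (Or.inr ⟨q, ⟨p, hp1, hp2⟩, hp3⟩)
  exact absurd ⟨hxy, hadj, fun p hp => h3 ⟨p, hp⟩, fun p q hpq => h4 ⟨p, q, hpq⟩⟩ h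

lemma card_badF {G : SimpleGraph V} {k : ℕ} (hdeg : ∀ v, G.degree v ≤ k) (x : V) :
    (badF G x).card ≤ 1 + k + k^2 + k^3 := by
  have hN : ∀ v, (NB G v).card ≤ k := fun v => hdeg v
  have h1 : ((NB G x).biUnion (NB G)).card ≤ k * k := by
    calc ((NB G x).biUnion (NB G)).card
        ≤ ∑ a ∈ NB G x, (NB G a).card := Finset.card_biUnion_le
      _ ≤ (NB G x).card * k := Finset.sum_le_card_nsmul _ _ k (fun a _ => hN a)
      _ ≤ k * k := Nat.mul_le_mul_right k (hN x)
  have h2 : (((NB G x).biUnion (NB G)).biUnion (NB G)).card ≤ k * k * k := by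
    calc (((NB G x).biUnion (NB G)).biUnion (NB G)).card
        ≤ ∑ a ∈ (NB G x).biUnion (NB G), (NB G a).card := Finset.card_biUnion_le
      _ ≤ ((NB G x).biUnion (NB G)).card * k :=
          Finset.sum_le_card_nsmul _ _ k (fun a _ => hN a)
      _ ≤ k * k * k := Nat.mul_le_mul_right k h1
  have h3 := Finset.card_union_le ((NB G x) ∪ (NB G x).biUnion (NB G))
    (((NB G x).biUnion (NB G)).biUnion (NB G))
  have h4 := Finset.card_union_le (NB G x) ((NB G x).biUnion (NB G))
  have h5 := Finset.card_insert_le x ((NB G x) ∪ (NB G x).biUnion (NB G) ∪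
    ((NB G x).biUnion (NB G)).biUnion (NB G))
  have h6 := hN x
  unfold badF
  nlinarith [h1, h2, h3, h4, h5, h6]

lemma sel {G : SimpleGraph V} {k : ℕ} (hdeg : ∀ v, G.degree v ≤ k) :
    ∀ (m : ℕ) (P A : Finset V),
      (2 * m + A.card) * (1 + k + k^2 + k^3) ≤ P.card →
      ∃ U : Finset V, U ⊆ P ∧ U.card = m ∧
        (∀ x ∈ U, ∀ y ∈ U, x ≠ y → Far G x y) ∧
        (∀ x ∈ U, ∀ y ∈ A, Far G x y) := by
  intro m
  induction m with
  | zero => intro P A _; exact ⟨∅, by simp⟩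
  | succ m ih =>
    intro P A hP
    have hβ1 : 1 ≤ 1 + k + k^2 + k^3 := by omega
    have hbUcard : (A.biUnion (badF G)).card ≤ A.card * (1 + k + k^2 + k^3) :=
      le_trans Finset.card_biUnion_le
        (Finset.sum_le_card_nsmul _ _ _ (fun a _ => card_badF hdeg a))
    set β := 1 + k + k^2 + k^3 with hβdef
    have hkey : (A.biUnion (badF G)).card < P.card := by
      have h2 : A.card * β + 1 ≤ (2 * (m + 1) + A.card) * β := by
        have : 1 ≤ (2 * (m + 1)) * β := Nat.mul_pos (by omega) (by omega)
        calc A.card * β + 1 ≤ A.card * β + (2 * (m + 1)) * β := by omega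
          _ = (2 * (m + 1) + A.card) * β := by ring
      exact lt_of_lt_of_le (Nat.lt_of_lt_of_le (Nat.lt_succ_of_le hbUcard)
        h2) hP
    have hne : (P \ A.biUnion (badF G)).Nonempty := by
      rw [← Finset.card_pos]
      have h3 := Finset.le_card_sdiff (A.biUnion (badF G)) P
      omega
    obtain ⟨x₀, hx₀⟩ := hne
    rw [Finset.mem_sdiff] at hx₀
    obtain ⟨hx₀P, hx₀b⟩ := hx₀
    have hx₀A : ∀ y ∈ A, Far G x₀ y := by
      intro y hy
      by_contra hf
      exact hx₀b (Finset.mem_biUnion.2 ⟨y, hy, mem_badF_of_not_far (fun hfar => hf hfar.symm)⟩)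
    obtain ⟨U', hU'P, hU'card, hU'far, hU'A⟩ := ih (P \ badF G x₀) (insert x₀ A) (by
      have h1 : P.card - β ≤ (P \ badF G x₀).card := by
        have h1a := Finset.le_card_sdiff (badF G x₀) P
        have h1b := card_badF hdeg x₀
        omega
      have h2 : (insert x₀ A).card ≤ A.card + 1 := Finset.card_insert_le _ _
      have h3 : (2 * m + (insert x₀ A).card) * β + β ≤ P.card := by
        calc (2 * m + (insert x₀ A).card) * β + β ≤ (2 * m + (A.card + 1)) * β + β :=
              by exact Nat.add_le_add_right (Nat.mul_le_mul_right β (by omega)) β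
          _ = (2 * (m + 1) + A.card) * β := by ring
          _ ≤ P.card := hP
      omega)
    refine ⟨insert x₀ U', ?_, ?_, ?_, ?_⟩
    · intro z hz
      rcases Finset.mem_insert.1 hz with h | h
      · exact h ▸ hx₀P
      · exact (Finset.mem_sdiff.1 (hU'P h)).1
    · rw [Finset.card_insert_of_notMem, hU'card]
      intro hx₀U'
      exact (Finset.mem_sdiff.1 (hU'P hx₀U')).2 (Finset.mem_insert_self x₀ _)
    · intro x hx y hy hxy
      rcases Finset.mem_insert.1 hx with rfl | hx'
      · rcases Finset.mem_insert.1 hy with rfl | hy'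
        · exact absurd rfl hxy
        · exact (hU'A y hy' x (Finset.mem_insert_self _ _)).symm
      · rcases Finset.mem_insert.1 hy with rfl | hy'
        · exact hU'A x hx' y (Finset.mem_insert_self _ _)
        · exact hU'far x hx' y hy' hxy
    · intro x hx y hy
      rcases Finset.mem_insert.1 hx with rfl | hx'
      · exact hx₀A y hy
      · exact hU'A x hx' y (Finset.mem_insert_of_mem hy)


/-- degree in an induced (comap) subgraph on a closed vertex set equals ambient degree -/
lemma degree_comap_closed (H : SimpleGraph V) (T : Finset V)
    (hcl : ∀ v ∈ T, ∀ y, H.Adj v y → y ∈ T) (v : {x // x ∈ T}) :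
    (H.comap (Subtype.val : {x // x ∈ T} → V)).degree v = H.degree v.val := by
  unfold SimpleGraph.degree
  apply Finset.card_bij (fun (a : {x // x ∈ T}) _ => a.val)
  · intro a ha
    simp only [SimpleGraph.mem_neighborFinset, SimpleGraph.comap_adj] at ha ⊢
    exact ha
  · intro a _ b _ hab
    exact Subtype.ext hab
  · intro b hb
    simp only [SimpleGraph.mem_neighborFinset] at hb
    have hbT : b ∈ T := hcl v.val v.2 b hb
    exact ⟨⟨b, hbT⟩, by simp [SimpleGraph.mem_neighborFinset, hb], rfl⟩

lemma degMultiset_comap_closed (H : SimpleGraph V) (T : Finset V)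
    (hcl : ∀ v ∈ T, ∀ y, H.Adj v y → y ∈ T) :
    degMultiset (H.comap (Subtype.val : {x // x ∈ T} → V)) = T.val.map (fun v => H.degree v) := by
  unfold degMultiset
  rw [Finset.univ_eq_attach]
  have h1 : (T.attach.val.map fun v => (H.comap (Subtype.val : {x // x ∈ T} → V)).degree v)
      = T.attach.val.map fun v => H.degree v.val := by
    apply Multiset.map_congr rfl
    intro x _
    exact degree_comap_closed H T hcl x
  refine Eq.trans h1 ?_
  have h2 : T.attach.val = T.val.attach := rfl
  rw [h2]
  rw [show (fun (v : {x // x ∈ T}) => H.degree v.val) = (fun v => H.degree v) ∘ Subtype.val from rfl]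
  rw [← Multiset.map_map, Multiset.attach_map_val]

lemma degMultiset_split (H : SimpleGraph V) (S : Finset V)
    (hcross : ∀ x y, H.Adj x y → (x ∈ S ↔ y ∈ S)) :
    degMultiset H = degMultiset (H.comap (Subtype.val : {x // x ∈ S} → V)) +
      degMultiset (H.comap (Subtype.val : {x // x ∈ Sᶜ} → V)) := by
  rw [degMultiset_comap_closed H S (fun v hv y hadj => (hcross v y hadj).1 hv),
    degMultiset_comap_closed H Sᶜ (fun v hv y hadj => by
      simp only [Finset.mem_compl] at hv ⊢
      exact fun hyS => hv ((hcross v y hadj).2 hyS))]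
  unfold degMultiset
  rw [← Multiset.map_add]
  congr 1
  have : Finset.univ = S.disjUnion Sᶜ disjoint_compl_right := by
    ext x; simp
  rw [this]
  rfl

/-- transporting a graph to `Fin n` preserves the degree multiset -/
lemma degMultiset_transport (G : SimpleGraph V) :
    degMultiset (G.comap ((Fintype.equivFin V).symm : Fin (Fintype.card V) → V)) =
      degMultiset G := by
  set e := Fintype.equivFin V
  have hdeg : ∀ i, (G.comap (e.symm : Fin (Fintype.card V) → V)).degree i
      = G.degree (e.symm i) := by
    intro i
    unfold SimpleGraph.degree
    apply Finset.card_bij (fun j _ => e.symm j)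
    · intro j hj
      simp only [SimpleGraph.mem_neighborFinset, SimpleGraph.comap_adj] at hj ⊢
      exact hj
    · intro a _ b _ hab
      exact e.symm.injective hab
    · intro y hy
      simp only [SimpleGraph.mem_neighborFinset] at hy
      exact ⟨e y, by simp [SimpleGraph.mem_neighborFinset, hy], by simp⟩
  unfold degMultiset
  refine Eq.trans (Multiset.map_congr rfl (fun i _ => hdeg i)) ?_
  rw [show (fun i => G.degree (e.symm i)) = (fun v => G.degree v) ∘ (e.symm : Fin _ → V) from rfl]
  rw [← Multiset.map_map]
  congr 1
  have : (Finset.univ : Finset (Fin (Fintype.card V))).map e.symm.toEmbedding = Finset.univ :=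
    Finset.map_univ_equiv e.symm
  calc Finset.univ.val.map (e.symm : Fin _ → V)
      = ((Finset.univ : Finset (Fin (Fintype.card V))).map e.symm.toEmbedding).val := rfl
    _ = Finset.univ.val := by rw [this]

/-- the finite list of all 2-colorable graphs on at most `N` vertices -/
noncomputable def allSmall (N : ℕ) : List (Σ n : ℕ, SimpleGraph (Fin n)) :=
  (List.range (N + 1)).flatMap (fun n =>
    (((Finset.univ : Finset (SimpleGraph (Fin n))).filter (fun G => G.Colorable 2)).toList).map
      (fun G => ⟨n, G⟩))

lemma mem_allSmall_colorable {N : ℕ} {p : Σ n : ℕ, SimpleGraph (Fin n)}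
    (hp : p ∈ allSmall N) : p.2.Colorable 2 := by
  unfold allSmall at hp
  simp only [List.mem_flatMap, List.mem_map, List.mem_range, Finset.mem_toList,
    Finset.mem_filter] at hp
  obtain ⟨n, _, G, ⟨_, hG⟩, rfl⟩ := hp
  exact hG

lemma mem_allSmall_of {N n : ℕ} (G : SimpleGraph (Fin n)) (hn : n ≤ N)
    (hG : G.Colorable 2) : (⟨n, G⟩ : Σ n : ℕ, SimpleGraph (Fin n)) ∈ allSmall N := by
  unfold allSmall
  simp only [List.mem_flatMap, List.mem_map, List.mem_range, Finset.mem_toList,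
    Finset.mem_filter]
  exact ⟨n, by omega, G, ⟨Finset.mem_univ _, hG⟩, rfl⟩

/-- pigeonhole for degrees -/
lemma popular_degree (G : SimpleGraph V) {k M : ℕ} (A : Finset V)
    (hA : ∀ v ∈ A, 1 ≤ G.degree v ∧ G.degree v ≤ k)
    (hbig : k * M < A.card) :
    ∃ d, 1 ≤ d ∧ d ≤ k ∧ M < (A.filter (fun v => G.degree v = d)).card := by
  by_contra hcon
  push_neg at hcon
  have hsub : A ⊆ (Finset.Icc 1 k).biUnion (fun d => A.filter (fun v => G.degree v = d)) := by
    intro v hv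
    simp only [Finset.mem_biUnion, Finset.mem_Icc, Finset.mem_filter]
    exact ⟨G.degree v, ⟨(hA v hv).1, (hA v hv).2⟩, hv, rfl⟩
  have hcard : A.card ≤ ∑ d ∈ Finset.Icc 1 k, (A.filter (fun v => G.degree v = d)).card :=
    le_trans (Finset.card_le_card hsub) Finset.card_biUnion_le
  have hbound : ∑ d ∈ Finset.Icc 1 k, (A.filter (fun v => G.degree v = d)).card ≤ k * M := by
    calc ∑ d ∈ Finset.Icc 1 k, (A.filter (fun v => G.degree v = d)).card
        ≤ (Finset.Icc 1 k).card * M := Finset.sum_le_card_nsmul _ _ M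
          (fun d hd => by
            have := Finset.mem_Icc.1 hd
            exact hcon d this.1 this.2)
      _ = k * M := by rw [Nat.card_Icc]; simp
  omega

-- assume given the selected sets U W and derived facts; construct H.
lemma build {k d e : ℕ} (G : SimpleGraph V) (c : G.Coloring (Fin 2))
    (hdeg : ∀ v, G.degree v ≤ k) (hmin : ∀ v, 1 ≤ G.degree v)
    (hd1 : 1 ≤ d) (he1 : 1 ≤ e)
    (U W : Finset V)
    (hUprop : ∀ u ∈ U, c u = 0 ∧ G.degree u = d)
    (hWprop : ∀ w ∈ W, c w = 1 ∧ G.degree w = e)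
    (hUcard : U.card = e) (hWcard : W.card = d)
    (hUfar : ∀ x ∈ U, ∀ y ∈ U, x ≠ y → Far G x y)
    (hWfar : ∀ x ∈ W, ∀ y ∈ W, x ≠ y → Far G x y)
    (farUW : ∀ u ∈ U, ∀ w ∈ W, Far G u w)
    (hsmall : U.card + W.card < Fintype.card V) :
    ∃ (H : SimpleGraph V) (S : Finset V),
      H.Colorable 2 ∧ (∀ v, H.degree v = G.degree v) ∧
      (∀ x y, H.Adj x y → (x ∈ S ↔ y ∈ S)) ∧ S.Nonempty ∧ Sᶜ.Nonempty := by
  classical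
  -- neighborhoods
  set B' : Finset V := U.biUnion (NB G) with hB'def
  set A' : Finset V := W.biUnion (NB G) with hA'def
  have hB'mem : ∀ x, x ∈ B' ↔ ∃ u ∈ U, G.Adj u x := by
    intro x; simp [hB'def, NB, Finset.mem_biUnion]
  have hA'mem : ∀ x, x ∈ A' ↔ ∃ w ∈ W, G.Adj w x := by
    intro x; simp [hA'def, NB, Finset.mem_biUnion]
  -- colors of everything
  have hUc : ∀ u ∈ U, c u = 0 := fun u hu => (hUprop u hu).1
  have hWc : ∀ w ∈ W, c w = 1 := fun w hw => (hWprop w hw).1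
  have hB'c : ∀ x ∈ B', c x = 1 := by
    intro x hx
    obtain ⟨u, hu, hadj⟩ := (hB'mem x).1 hx
    have := c.valid hadj
    rw [hUc u hu] at this
    exact fin2_eq_one (Ne.symm this)
  have hA'c : ∀ x ∈ A', c x = 0 := by
    intro x hx
    obtain ⟨w, hw, hadj⟩ := (hA'mem x).1 hx
    have := c.valid hadj
    rw [hWc w hw] at this
    exact fin2_eq_zero (Ne.symm this)
  have hUW : ∀ u ∈ U, u ∉ W := by
    intro u hu hw
    have h0 := hUc u hu; have h1 := hWc u hw; rw [h0] at h1; exact absurd h1 (by decide)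
  -- disjointness zoo
  have hB'U : ∀ x ∈ B', x ∉ U := by
    intro x hx hxU
    have h1 := hB'c x hx; have h0 := hUc x hxU; rw [h0] at h1; exact absurd h1 (by decide)
  have hA'W : ∀ x ∈ A', x ∉ W := by
    intro x hx hxW
    have h1 := hA'c x hx; have h0 := hWc x hxW; rw [h0] at h1; exact absurd h1 (by decide)
  have hB'W : ∀ x ∈ B', x ∉ W := by
    intro x hx hxW
    obtain ⟨u, hu, hadj⟩ := (hB'mem x).1 hx
    exact (farUW u hu x hxW).2.1 hadj
  have hA'U : ∀ x ∈ A', x ∉ U := by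
    intro x hx hxU
    obtain ⟨w, hw, hadj⟩ := (hA'mem x).1 hx
    exact (farUW x hxU w hw).2.1 hadj.symm
  have hA'B' : ∀ x ∈ A', x ∉ B' := by
    intro x hx hxB
    obtain ⟨w, hw, hadjw⟩ := (hA'mem x).1 hx
    obtain ⟨u, hu, hadju⟩ := (hB'mem x).1 hxB
    exact (farUW u hu w hw).2.2.1 x ⟨hadju, hadjw.symm⟩
  have hB'noW : ∀ x ∈ B', ∀ w ∈ W, ¬ G.Adj x w := by
    intro x hx w hw hadj
    obtain ⟨u, hu, hadju⟩ := (hB'mem x).1 hx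
    exact (farUW u hu w hw).2.2.1 x ⟨hadju, hadj⟩
  have hA'noU : ∀ x ∈ A', ∀ u ∈ U, ¬ G.Adj x u := by
    intro x hx u hu hadj
    obtain ⟨w, hw, hadjw⟩ := (hA'mem x).1 hx
    exact (farUW u hu w hw).2.2.1 x ⟨hadj.symm, hadjw.symm⟩
  have hpairs : ∀ x ∈ B', ∀ a ∈ A', ¬ G.Adj x a := by
    intro x hx a ha hadj
    obtain ⟨u, hu, hadju⟩ := (hB'mem x).1 hx
    obtain ⟨w, hw, hadjw⟩ := (hA'mem a).1 ha
    exact (farUW u hu w hw).2.2.2 x a ⟨hadju, hadj, hadjw.symm⟩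
  -- uniqueness of the U-neighbor
  have hB'uniq : ∀ x, ∀ u ∈ U, ∀ u' ∈ U, G.Adj u x → G.Adj u' x → u = u' := by
    intro x u hu u' hu' h h'
    by_contra hne
    exact (hUfar u hu u' hu' hne).2.2.1 x ⟨h, h'.symm⟩
  have hA'uniq : ∀ x, ∀ w ∈ W, ∀ w' ∈ W, G.Adj w x → G.Adj w' x → w = w' := by
    intro x w hw w' hw' h h'
    by_contra hne
    exact (hWfar w hw w' hw' hne).2.2.1 x ⟨h, h'.symm⟩
  have hB'inter : ∀ x ∈ B', ∃ u ∈ U, NB G x ∩ (U ∪ W) = {u} := by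
    intro x hx
    obtain ⟨u, hu, hadj⟩ := (hB'mem x).1 hx
    refine ⟨u, hu, ?_⟩
    ext y
    simp only [Finset.mem_inter, Finset.mem_union, mem_NB, Finset.mem_singleton]
    constructor
    · rintro ⟨hadjy, hy | hy⟩
      · exact (hB'uniq x y hy u hu hadjy.symm hadj).symm ▸ rfl
      · exact absurd hadjy (hB'noW x hx y hy)
    · rintro rfl
      exact ⟨hadj.symm, Or.inl hu⟩
  have hA'inter : ∀ x ∈ A', ∃ w ∈ W, NB G x ∩ (U ∪ W) = {w} := by
    intro x hx
    obtain ⟨w, hw, hadj⟩ := (hA'mem x).1 hx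
    refine ⟨w, hw, ?_⟩
    ext y
    simp only [Finset.mem_inter, Finset.mem_union, mem_NB, Finset.mem_singleton]
    constructor
    · rintro ⟨hadjy, hy | hy⟩
      · exact absurd hadjy (hA'noU x hx y hy)
      · exact (hA'uniq x y hy w hw hadjy.symm hadj).symm ▸ rfl
    · rintro rfl
      exact ⟨hadj.symm, Or.inr hw⟩
  -- cardinalities
  have hNBcard : ∀ u ∈ U, (NB G u).card = d := fun u hu => (hUprop u hu).2
  have hNBcardW : ∀ w ∈ W, (NB G w).card = e := fun w hw => (hWprop w hw).2
  have hUdisj : ∀ x ∈ U, ∀ y ∈ U, x ≠ y → Disjoint (NB G x) (NB G y) := by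
    intro x hx y hy hne
    rw [Finset.disjoint_left]
    intro a hax hay
    exact (hUfar x hx y hy hne).2.2.1 a ⟨mem_NB.1 hax, (mem_NB.1 hay).symm⟩
  have hWdisj : ∀ x ∈ W, ∀ y ∈ W, x ≠ y → Disjoint (NB G x) (NB G y) := by
    intro x hx y hy hne
    rw [Finset.disjoint_left]
    intro a hax hay
    exact (hWfar x hx y hy hne).2.2.1 a ⟨mem_NB.1 hax, (mem_NB.1 hay).symm⟩
  have hB'card : B'.card = e * d := by
    rw [hB'def, Finset.card_biUnion hUdisj]
    rw [Finset.sum_congr rfl hNBcard, Finset.sum_const, hUcard, smul_eq_mul]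
  have hA'card : A'.card = d * e := by
    rw [hA'def, Finset.card_biUnion hWdisj]
    rw [Finset.sum_congr rfl hNBcardW, Finset.sum_const, hWcard, smul_eq_mul]
  -- the pairing bijection
  have hcardeq : Fintype.card {x // x ∈ B'} = Fintype.card {x // x ∈ A'} := by
    rw [Fintype.card_coe, Fintype.card_coe, hB'card, hA'card, mul_comm]
  set φ : {x // x ∈ B'} ≃ {x // x ∈ A'} := Fintype.equivOfCardEq hcardeq with hφdef
  -- the new graph
  set adjP : V → V → Prop := fun x y =>
    (G.Adj x y ∧ x ∉ U ∧ x ∉ W ∧ y ∉ U ∧ y ∉ W) ∨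
    (x ∈ U ∧ y ∈ W) ∨ (x ∈ W ∧ y ∈ U) ∨
    (∃ hx : x ∈ B', ((φ ⟨x, hx⟩ : {a // a ∈ A'}) : V) = y) ∨
    (∃ hy : y ∈ B', ((φ ⟨y, hy⟩ : {a // a ∈ A'}) : V) = x) with hadjPdef
  have adjPsymm : Symmetric adjP := by
    intro x y h
    rcases h with ⟨h1, h2, h3, h4, h5⟩ | ⟨h1, h2⟩ | ⟨h1, h2⟩ | h | h
    · exact Or.inl ⟨h1.symm, h4, h5, h2, h3⟩
    · exact Or.inr (Or.inr (Or.inl ⟨h2, h1⟩))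
    · exact Or.inr (Or.inl ⟨h2, h1⟩)
    · exact Or.inr (Or.inr (Or.inr (Or.inr h)))
    · exact Or.inr (Or.inr (Or.inr (Or.inl h)))
  have adjPirr : ∀ x, ¬ adjP x x := by
    intro x h
    rcases h with ⟨h1, _⟩ | ⟨h1, h2⟩ | ⟨h1, h2⟩ | ⟨hx, h⟩ | ⟨hx, h⟩
    · exact G.loopless.irrefl x h1
    · exact hUW x h1 h2
    · exact hUW x h2 h1
    · exact hA'B' x (h ▸ (φ ⟨x, hx⟩).2) hx
    · exact hA'B' x (h ▸ (φ ⟨x, hx⟩).2) hx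
  set H : SimpleGraph V := ⟨adjP, ⟨fun a b h => adjPsymm h⟩, ⟨adjPirr⟩⟩ with hHdef
  have Hadj : ∀ x y, H.Adj x y ↔ adjP x y := fun _ _ => Iff.rfl
  -- neighbourhoods in H
  have hNHU : ∀ v ∈ U, H.neighborFinset v = W := by
    intro v hv
    ext y
    rw [SimpleGraph.mem_neighborFinset, Hadj]
    constructor
    · rintro (⟨_, h2, _, _, _⟩ | ⟨_, h2⟩ | ⟨h1, _⟩ | ⟨hx, _⟩ | ⟨hy, h⟩)
      · exact absurd hv h2
      · exact h2
      · exact absurd h1 (hUW v hv)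
      · exact absurd hv (hB'U v hx)
      · exact absurd hv (hA'U v (h ▸ (φ ⟨y, hy⟩).2))
    · intro hyW
      exact Or.inr (Or.inl ⟨hv, hyW⟩)
  have hNHW : ∀ v ∈ W, H.neighborFinset v = U := by
    intro v hv
    ext y
    rw [SimpleGraph.mem_neighborFinset, Hadj]
    constructor
    · rintro (⟨_, _, h3, _, _⟩ | ⟨h1, _⟩ | ⟨_, h2⟩ | ⟨hx, _⟩ | ⟨hy, h⟩)
      · exact absurd hv h3
      · exact absurd h1 (fun h1 => hUW v h1 hv)
      · exact h2
      · exact absurd hv (hB'W v hx)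
      · exact absurd hv (hA'W v (h ▸ (φ ⟨y, hy⟩).2))
    · intro hyU
      exact Or.inr (Or.inr (Or.inl ⟨hv, hyU⟩))
  have hNHB' : ∀ (v : V) (hv : v ∈ B'),
      H.neighborFinset v = (NB G v \ (U ∪ W)) ∪ {((φ ⟨v, hv⟩ : {a // a ∈ A'}) : V)} := by
    intro v hv
    ext y
    rw [SimpleGraph.mem_neighborFinset, Hadj]
    simp only [Finset.mem_union, Finset.mem_sdiff, Finset.mem_singleton, mem_NB]
    constructor
    · rintro (⟨h1, _, _, h4, h5⟩ | ⟨h1, _⟩ | ⟨h1, _⟩ | ⟨hx, h⟩ | ⟨hy, h⟩)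
      · exact Or.inl ⟨h1, fun hh => hh.elim h4 h5⟩
      · exact absurd h1 (hB'U v hv)
      · exact absurd h1 (hB'W v hv)
      · exact Or.inr h.symm
      · exact absurd hv (hA'B' v (h ▸ (φ ⟨y, hy⟩).2))
    · rintro (⟨h1, h2⟩ | h)
      · exact Or.inl ⟨h1, hB'U v hv, hB'W v hv, fun hh => h2 (Or.inl hh), fun hh => h2 (Or.inr hh)⟩
      · exact Or.inr (Or.inr (Or.inr (Or.inl ⟨hv, h.symm⟩)))
  have hNHA' : ∀ (v : V) (hv : v ∈ A'),
      H.neighborFinset v = (NB G v \ (U ∪ W)) ∪ {((φ.symm ⟨v, hv⟩ : {a // a ∈ B'}) : V)} := by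
    intro v hv
    ext y
    rw [SimpleGraph.mem_neighborFinset, Hadj]
    simp only [Finset.mem_union, Finset.mem_sdiff, Finset.mem_singleton, mem_NB]
    constructor
    · rintro (⟨h1, _, _, h4, h5⟩ | ⟨h1, _⟩ | ⟨h1, _⟩ | ⟨hx, h⟩ | ⟨hy, h⟩)
      · exact Or.inl ⟨h1, fun hh => hh.elim h4 h5⟩
      · exact absurd h1 (hA'U v hv)
      · exact absurd h1 (hA'W v hv)
      · exact absurd hx (fun hx' => hA'B' v hv hx')
      · refine Or.inr ?_
        have hyeq : φ ⟨y, hy⟩ = ⟨v, hv⟩ := Subtype.ext h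
        rw [← hyeq, Equiv.symm_apply_apply]
    · rintro (⟨h1, h2⟩ | h)
      · exact Or.inl ⟨h1, hA'U v hv, hA'W v hv, fun hh => h2 (Or.inl hh), fun hh => h2 (Or.inr hh)⟩
      · subst h
        refine Or.inr (Or.inr (Or.inr (Or.inr ⟨(φ.symm ⟨v, hv⟩).2, ?_⟩)))
        rw [Subtype.coe_eta, Equiv.apply_symm_apply]
  have hNHelse : ∀ v, v ∉ U → v ∉ W → v ∉ A' → v ∉ B' → H.neighborFinset v = NB G v := by
    intro v h1 h2 h3 h4
    ext y
    rw [SimpleGraph.mem_neighborFinset, Hadj, mem_NB]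
    constructor
    · rintro (⟨ha, _⟩ | ⟨ha, _⟩ | ⟨ha, _⟩ | ⟨hx, h⟩ | ⟨hy, h⟩)
      · exact ha
      · exact absurd ha h1
      · exact absurd ha h2
      · exact absurd hx h4
      · exact absurd (h ▸ (φ ⟨y, hy⟩).2) h3
    · intro hadj
      have hyU : y ∉ U := fun hy => h4 ((hB'mem v).2 ⟨y, hy, hadj.symm⟩)
      have hyW : y ∉ W := fun hy => h3 ((hA'mem v).2 ⟨y, hy, hadj.symm⟩)
      exact Or.inl ⟨hadj, h1, h2, hyU, hyW⟩
  -- all degrees preserved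
  have hdegall : ∀ v, H.degree v = G.degree v := by
    intro v
    have hdegNB : G.degree v = (NB G v).card := rfl
    by_cases hvU : v ∈ U
    · rw [SimpleGraph.degree, hNHU v hvU, hWcard, (hUprop v hvU).2]
    · by_cases hvW : v ∈ W
      · rw [SimpleGraph.degree, hNHW v hvW, hUcard, (hWprop v hvW).2]
      · by_cases hvB : v ∈ B'
        · rw [SimpleGraph.degree, hNHB' v hvB]
          have hφA' : ((φ ⟨v, hvB⟩ : {a // a ∈ A'}) : V) ∈ A' := (φ ⟨v, hvB⟩).2
          have hnotadj : ((φ ⟨v, hvB⟩ : {a // a ∈ A'}) : V) ∉ NB G v \ (U ∪ W) := by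
            intro hmem
            exact hpairs v hvB _ hφA' (mem_NB.1 (Finset.mem_sdiff.1 hmem).1)
          rw [Finset.card_union_of_disjoint (Finset.disjoint_singleton_right.2 hnotadj)]
          obtain ⟨u, hu, hinter⟩ := hB'inter v hvB
          have hsd : (NB G v \ (U ∪ W)).card = (NB G v).card - 1 := by
            rw [← Finset.sdiff_inter_self_left (NB G v) (U ∪ W),
              Finset.card_sdiff_of_subset Finset.inter_subset_left, hinter, Finset.card_singleton]
          rw [hsd, Finset.card_singleton]
          have h1 : 1 ≤ (NB G v).card := hmin v
          omega
        · by_cases hvA : v ∈ A'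
          · rw [SimpleGraph.degree, hNHA' v hvA]
            have hφB' : ((φ.symm ⟨v, hvA⟩ : {a // a ∈ B'}) : V) ∈ B' := (φ.symm ⟨v, hvA⟩).2
            have hnotadj : ((φ.symm ⟨v, hvA⟩ : {a // a ∈ B'}) : V) ∉ NB G v \ (U ∪ W) := by
              intro hmem
              exact hpairs _ hφB' v hvA (mem_NB.1 (Finset.mem_sdiff.1 hmem).1).symm
            rw [Finset.card_union_of_disjoint (Finset.disjoint_singleton_right.2 hnotadj)]
            obtain ⟨w, hw, hinter⟩ := hA'inter v hvA
            have hsd : (NB G v \ (U ∪ W)).card = (NB G v).card - 1 := by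
              rw [← Finset.sdiff_inter_self_left (NB G v) (U ∪ W),
                Finset.card_sdiff_of_subset Finset.inter_subset_left, hinter, Finset.card_singleton]
            rw [hsd, Finset.card_singleton]
            have h1 : 1 ≤ (NB G v).card := hmin v
            omega
          · rw [SimpleGraph.degree, hNHelse v hvU hvW hvA hvB, hdegNB]
  -- colorability of H
  have hHcol : H.Colorable 2 := by
    refine ⟨SimpleGraph.Coloring.mk (fun v => c v) ?_⟩
    intro x y hxy
    show c x ≠ c y
    rcases (Hadj x y).1 hxy with ⟨h1, _⟩ | ⟨h1, h2⟩ | ⟨h1, h2⟩ | ⟨hx, h⟩ | ⟨hy, h⟩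
    · exact c.valid h1
    · rw [hUc x h1, hWc y h2]; decide
    · rw [hWc x h1, hUc y h2]; decide
    · rw [hB'c x hx, ← h, hA'c _ (φ ⟨x, hx⟩).2]; decide
    · rw [← h, hA'c _ (φ ⟨y, hy⟩).2, hB'c y hy]; decide
  -- no crossing edges
  have hcross : ∀ x y, H.Adj x y → (x ∈ U ∪ W ↔ y ∈ U ∪ W) := by
    intro x y hxy
    rcases (Hadj x y).1 hxy with ⟨_, h2, h3, h4, h5⟩ | ⟨h1, h2⟩ | ⟨h1, h2⟩ | ⟨hx, h⟩ | ⟨hy, h⟩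
    · simp only [Finset.mem_union]
      exact iff_of_false (fun hh => hh.elim h2 h3) (fun hh => hh.elim h4 h5)
    · simp only [Finset.mem_union]
      exact iff_of_true (Or.inl h1) (Or.inr h2)
    · simp only [Finset.mem_union]
      exact iff_of_true (Or.inr h1) (Or.inl h2)
    · simp only [Finset.mem_union]
      have hyA : y ∈ A' := h ▸ (φ ⟨x, hx⟩).2
      exact iff_of_false (fun hh => hh.elim (hB'U x hx) (hB'W x hx))
        (fun hh => hh.elim (hA'U y hyA) (hA'W y hyA))
    · simp only [Finset.mem_union]
      have hxA : x ∈ A' := h ▸ (φ ⟨y, hy⟩).2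
      exact iff_of_false (fun hh => hh.elim (hA'U x hxA) (hA'W x hxA))
        (fun hh => hh.elim (hB'U y hy) (hB'W y hy))
  have hSne : (U ∪ W).Nonempty := by
    have : U.Nonempty := Finset.card_pos.1 (by omega)
    exact this.mono Finset.subset_union_left
  have hScne : (U ∪ W)ᶜ.Nonempty := by
    rw [← Finset.card_pos, Finset.card_compl]
    have h1 : (U ∪ W).card ≤ U.card + W.card := Finset.card_union_le U W
    omega
  refine ⟨H, U ∪ W, hHcol, fun v => ?_, hcross, hSne, hScne⟩
  convert hdegall v using 2


lemma surgery {k : ℕ} (hk : 1 ≤ k) (G : SimpleGraph V) (hcol : G.Colorable 2)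
    (hdeg : ∀ v, G.degree v ≤ k) (hmin : ∀ v, 1 ≤ G.degree v)
    (hbig : (k+1) * (k * (3 * k * (1 + k + k^2 + k^3))) < Fintype.card V) :
    ∃ (H : SimpleGraph V) (S : Finset V),
      H.Colorable 2 ∧ (∀ v, H.degree v = G.degree v) ∧
      (∀ x y, H.Adj x y → (x ∈ S ↔ y ∈ S)) ∧ S.Nonempty ∧ Sᶜ.Nonempty := by
  classical
  obtain ⟨c⟩ := hcol
  set β := 1 + k + k^2 + k^3 with hβdef
  set M := 3 * k * β with hMdef
  have hβ1 : 1 ≤ β := by omega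
  set A : Finset V := Finset.univ.filter (fun v => c v = 0) with hAdef
  set B : Finset V := Finset.univ.filter (fun v => c v = 1) with hBdef
  have hunion : A ∪ B = Finset.univ := by
    ext v
    simp only [hAdef, hBdef, Finset.mem_union, Finset.mem_filter, Finset.mem_univ, true_and,
      iff_true]
    omega
  have hdisj : Disjoint A B := by
    rw [Finset.disjoint_left]
    intro a ha hb
    rw [hAdef, Finset.mem_filter] at ha
    rw [hBdef, Finset.mem_filter] at hb
    rw [ha.2] at hb
    exact absurd hb.2 (by decide)
  have hcardAB : A.card + B.card = Fintype.card V := by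
    rw [← Finset.card_union_of_disjoint hdisj, hunion, Finset.card_univ]
  have hBsub : B ⊆ A.biUnion (NB G) := by
    intro b hb
    obtain ⟨w, hw⟩ := Finset.card_pos.1 (lt_of_lt_of_le Nat.zero_lt_one (hmin b))
    have hadj : G.Adj b w := mem_NB.1 hw
    have hcb : c b = 1 := (Finset.mem_filter.1 hb).2
    have hcw : c w = 0 := by
      have hne := c.valid hadj
      refine fin2_eq_zero (fun h1 => hne ?_)
      rw [hcb, h1]
    exact Finset.mem_biUnion.2 ⟨w, Finset.mem_filter.2 ⟨Finset.mem_univ _, hcw⟩,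
      mem_NB.2 hadj.symm⟩
  have hAsub : A ⊆ B.biUnion (NB G) := by
    intro a ha
    obtain ⟨w, hw⟩ := Finset.card_pos.1 (lt_of_lt_of_le Nat.zero_lt_one (hmin a))
    have hadj : G.Adj a w := mem_NB.1 hw
    have hca : c a = 0 := (Finset.mem_filter.1 ha).2
    have hcw : c w = 1 := by
      have hne := c.valid hadj
      refine fin2_eq_one (fun h1 => hne ?_)
      rw [hca, h1]
    exact Finset.mem_biUnion.2 ⟨w, Finset.mem_filter.2 ⟨Finset.mem_univ _, hcw⟩,
      mem_NB.2 hadj.symm⟩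
  have hBA : B.card ≤ k * A.card := by
    calc B.card ≤ (A.biUnion (NB G)).card := Finset.card_le_card hBsub
      _ ≤ ∑ a ∈ A, (NB G a).card := Finset.card_biUnion_le
      _ ≤ A.card * k := Finset.sum_le_card_nsmul _ _ k (fun a _ => hdeg a)
      _ = k * A.card := mul_comm _ _
  have hAB : A.card ≤ k * B.card := by
    calc A.card ≤ (B.biUnion (NB G)).card := Finset.card_le_card hAsub
      _ ≤ ∑ a ∈ B, (NB G a).card := Finset.card_biUnion_le
      _ ≤ B.card * k := Finset.sum_le_card_nsmul _ _ k (fun a _ => hdeg a)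
      _ = k * B.card := mul_comm _ _
  have hAbig : k * M < A.card := by
    have h1 : (k+1) * (k * M) < (k+1) * A.card := by
      calc (k+1) * (k * M) < Fintype.card V := hbig
        _ = A.card + B.card := hcardAB.symm
        _ ≤ A.card + k * A.card := by omega
        _ = (k+1) * A.card := by ring
    exact Nat.lt_of_mul_lt_mul_left h1
  have hBbig : k * M < B.card := by
    have h1 : (k+1) * (k * M) < (k+1) * B.card := by
      calc (k+1) * (k * M) < Fintype.card V := hbig
        _ = A.card + B.card := hcardAB.symm
        _ ≤ k * B.card + B.card := by omega
        _ = (k+1) * B.card := by ring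
    exact Nat.lt_of_mul_lt_mul_left h1
  obtain ⟨d, hd1, hdk, hAd⟩ := popular_degree G A (fun v _ => ⟨hmin v, hdeg v⟩) hAbig
  obtain ⟨e, he1, hek, hBe⟩ := popular_degree G B (fun v _ => ⟨hmin v, hdeg v⟩) hBbig
  obtain ⟨U, hUP, hUcard, hUfar, _⟩ := sel hdeg e (A.filter (fun v => G.degree v = d)) ∅ (by
    rw [Finset.card_empty]
    calc (2 * e + 0) * β ≤ (3 * k) * β := by
          have : 2 * e + 0 ≤ 3 * k := by omega
          exact Nat.mul_le_mul_right β this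
      _ = M := by rw [hMdef]
      _ ≤ (A.filter (fun v => G.degree v = d)).card := le_of_lt hAd)
  obtain ⟨W, hWP, hWcard, hWfar, hWU⟩ := sel hdeg d (B.filter (fun v => G.degree v = e)) U (by
    rw [hUcard]
    calc (2 * d + e) * β ≤ (3 * k) * β := by
          have : 2 * d + e ≤ 3 * k := by omega
          exact Nat.mul_le_mul_right β this
      _ = M := by rw [hMdef]
      _ ≤ (B.filter (fun v => G.degree v = e)).card := le_of_lt hBe)
  have hUprop : ∀ u ∈ U, c u = 0 ∧ G.degree u = d := by
    intro u hu
    have := hUP hu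
    rw [Finset.mem_filter] at this
    have h2 := this.1
    rw [hAdef, Finset.mem_filter] at h2
    exact ⟨h2.2, this.2⟩
  have hWprop : ∀ w ∈ W, c w = 1 ∧ G.degree w = e := by
    intro w hw
    have := hWP hw
    rw [Finset.mem_filter] at this
    have h2 := this.1
    rw [hBdef, Finset.mem_filter] at h2
    exact ⟨h2.2, this.2⟩
  have farUW : ∀ u ∈ U, ∀ w ∈ W, Far G u w := fun u hu w hw => (hWU w hw u hu).symm
  have hsmall : U.card + W.card < Fintype.card V := by
    rw [hUcard, hWcard]
    have h1 : e + d ≤ 2 * k := by omega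
    have h2 : 2 * k < (k+1) * (k * M) := by
      have hM3k : 3 * k ≤ M := by
        calc 3 * k = 3 * k * 1 := by ring
          _ ≤ 3 * k * β := Nat.mul_le_mul_left _ hβ1
      have hkk : k ≤ k * k := Nat.le_mul_of_pos_left k hk
      calc 2 * k < 6 * k := by omega
        _ ≤ 6 * (k * k) := by omega
        _ = 2 * (k * (3 * k)) := by ring
        _ ≤ (k+1) * (k * (3 * k)) := Nat.mul_le_mul_right _ (by omega)
        _ ≤ (k+1) * (k * M) := Nat.mul_le_mul_left _ (Nat.mul_le_mul_left _ hM3k)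
    omega
  exact build G c hdeg hmin hd1 he1 U W hUprop hWprop hUcard hWcard hUfar hWfar farUW hsmall

end BipAux

/-- **Robertson's bipartite question, fixed finite set form (Corollary 1).**
For every `k` there is a finite family `Z` of finite simple bipartite graphs
such that the degree multiset of every finite simple bipartite (2-colorable)
graph with maximum degree at most `k` is the sum of the degree multisets of
some finite multiset of members of `Z`; i.e. every bipartite degree sequence
with degrees at most `k` is realized by a disjoint union of bipartite graphs
from the fixed finite set `Z`. -/
theorem bipartite_bounded_degree_realized_from_fixed_finite_set (k : ℕ) :
    ∃ Z : List (Σ n : ℕ, SimpleGraph (Fin n)),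
      (∀ p ∈ Z, p.2.Colorable 2) ∧
      ∀ (V : Type) [Fintype V] (G : SimpleGraph V),
        G.Colorable 2 →
        (∀ v : V, G.degree v ≤ k) →
        ∃ m : Multiset (Σ n : ℕ, SimpleGraph (Fin n)),
          (∀ p ∈ m, p ∈ Z) ∧
          degMultiset G = (m.map fun p => degMultiset p.2).sum := by
  classical
  set N := (k+1) * (k * (3 * k * (1 + k + k^2 + k^3))) + 2 with hNdef
  refine ⟨BipAux.allSmall N, fun p hp => BipAux.mem_allSmall_colorable hp, ?_⟩
  suffices h : ∀ n (V : Type) [Fintype V] (G : SimpleGraph V), Fintype.card V = n →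
      G.Colorable 2 → (∀ v, G.degree v ≤ k) →
      ∃ m : Multiset (Σ n : ℕ, SimpleGraph (Fin n)),
        (∀ p ∈ m, p ∈ BipAux.allSmall N) ∧
        degMultiset G = (m.map fun p => degMultiset p.2).sum by
    intro V _ G hcol hdeg
    exact h (Fintype.card V) V G rfl hcol hdeg
  intro n
  induction n using Nat.strong_induction_on with
  | _ n IH =>
    intro V instV G hcard hcol hdeg
    by_cases hsmall : Fintype.card V ≤ N
    · -- base case : transport G itself to Fin (card V)
      have hcol' : (G.comap ((Fintype.equivFin V).symm : Fin (Fintype.card V) → V)).Colorable 2 := by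
        obtain ⟨cG⟩ := hcol
        exact ⟨SimpleGraph.Coloring.mk (fun i => cG ((Fintype.equivFin V).symm i))
          (fun hadj => cG.valid hadj)⟩
      refine ⟨{⟨Fintype.card V, G.comap ((Fintype.equivFin V).symm : Fin (Fintype.card V) → V)⟩},
        ?_, ?_⟩
      · intro p hp
        rw [Multiset.mem_singleton] at hp
        subst hp
        exact BipAux.mem_allSmall_of _ hsmall hcol'
      · rw [Multiset.map_singleton, Multiset.sum_singleton]
        exact (BipAux.degMultiset_transport G).symm
    · -- inductive step
      push_neg at hsmall
      have hstep : ∃ (H : SimpleGraph V) (S : Finset V),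
          H.Colorable 2 ∧ (∀ v, H.degree v = G.degree v) ∧
          (∀ x y, H.Adj x y → (x ∈ S ↔ y ∈ S)) ∧ S.Nonempty ∧ Sᶜ.Nonempty := by
        by_cases hzero : ∃ v, G.degree v = 0
        · obtain ⟨v, hv⟩ := hzero
          have hnx : ∀ z, ¬ G.Adj v z := by
            intro z hz
            have hmem : z ∈ G.neighborFinset v := (SimpleGraph.mem_neighborFinset _ _ _).2 hz
            have : (G.neighborFinset v).card = 0 := hv
            rw [Finset.card_eq_zero] at this
            rw [this] at hmem
            exact absurd hmem (Finset.notMem_empty z)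
          refine ⟨G, {v}, hcol, fun _ => rfl, ?_, ⟨v, Finset.mem_singleton_self v⟩, ?_⟩
          · intro x y hxy
            simp only [Finset.mem_singleton]
            constructor
            · rintro rfl; exact absurd hxy (hnx y)
            · rintro rfl; exact absurd hxy.symm (hnx x)
          · rw [← Finset.card_pos, Finset.card_compl, Finset.card_singleton]
            omega
        · push_neg at hzero
          have hmin : ∀ v, 1 ≤ G.degree v := fun v => Nat.one_le_iff_ne_zero.2 (hzero v)
          have hk : 1 ≤ k := by
            have hpos : 0 < Fintype.card V := by omega
            obtain ⟨v⟩ := Fintype.card_pos_iff.1 hpos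
            exact le_trans (hmin v) (hdeg v)
          exact BipAux.surgery hk G hcol hdeg hmin (by omega)
      obtain ⟨H, S, hHcol, hHdeg, hcross, hSne, hScne⟩ := hstep
      have hdm : degMultiset G = degMultiset H := by
        unfold degMultiset
        exact Multiset.map_congr rfl (fun v _ => (hHdeg v).symm)
      have hclS : ∀ v ∈ S, ∀ y, H.Adj v y → y ∈ S :=
        fun v hv y hadj => (hcross v y hadj).1 hv
      have hclSc : ∀ v ∈ Sᶜ, ∀ y, H.Adj v y → y ∈ Sᶜ := by
        intro v hv y hadj
        simp only [Finset.mem_compl] at hv ⊢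
        exact fun hyS => hv ((hcross v y hadj).2 hyS)
      have hcolsub : ∀ (T : Finset V), (H.comap (Subtype.val : {x // x ∈ T} → V)).Colorable 2 := by
        intro T
        obtain ⟨cH⟩ := hHcol
        exact ⟨SimpleGraph.Coloring.mk (fun v => cH v.val) (fun hadj => cH.valid hadj)⟩
      have hdegS : ∀ v, (H.comap (Subtype.val : {x // x ∈ S} → V)).degree v ≤ k := by
        intro v
        have h1 := BipAux.degree_comap_closed H S hclS v
        rw [h1, hHdeg]
        exact hdeg _
      have hdegSc : ∀ v, (H.comap (Subtype.val : {x // x ∈ Sᶜ} → V)).degree v ≤ k := by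
        intro v
        have h1 := BipAux.degree_comap_closed H Sᶜ hclSc v
        rw [h1, hHdeg]
        exact hdeg _
      have hcards : S.card + Sᶜ.card = n := by
        rw [← hcard, Finset.card_add_card_compl]
      have hSpos : 0 < S.card := Finset.card_pos.2 hSne
      have hScpos : 0 < Sᶜ.card := Finset.card_pos.2 hScne
      obtain ⟨m₁, hm₁Z, hm₁⟩ := IH S.card (by omega) {x // x ∈ S}
        (H.comap (Subtype.val : {x // x ∈ S} → V)) (by rw [Fintype.card_coe]) (hcolsub S) hdegS
      obtain ⟨m₂, hm₂Z, hm₂⟩ := IH Sᶜ.card (by omega) {x // x ∈ Sᶜ}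
        (H.comap (Subtype.val : {x // x ∈ Sᶜ} → V)) (by rw [Fintype.card_coe]) (hcolsub Sᶜ) hdegSc
      refine ⟨m₁ + m₂, ?_, ?_⟩
      · intro p hp
        rcases Multiset.mem_add.1 hp with h | h
        · exact hm₁Z p h
        · exact hm₂Z p h
      · rw [hdm, BipAux.degMultiset_split H S hcross, hm₁, hm₂, Multiset.map_add,
          Multiset.sum_add]
end

section
/- Fix a natural number k. For every infinite sequence G₀, G₁, G₂, … of finite simple graphs, each with maximum degree at most k, there exist indices i < j and finite simple graphs H and H' such that the degree multiset of H equals the degree multiset of G i, the degree multiset of H' equals the degree multiset of G j, and there is an induced-subgraph embedding of H into H' (a graph embedding f with f(u) adjacent to f(v) in H' if and only if u is adjacent to v in H). In other words, degree sequences of finite graphs with degrees at most k are well quasi ordered by the Rao relation ⪯. -/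
open scoped Classical

namespace RaoAux

open SimpleGraph Finset

variable {V W : Type} [Fintype V] [Fintype W]

lemma degree_iso {A : SimpleGraph V} {B : SimpleGraph W} (e : A ≃g B) (v : V) :
    A.degree v = B.degree (e v) := by
  classical
  have h : (B.neighborFinset (e v)) = (A.neighborFinset v).map e.toEquiv.toEmbedding := by
    ext w
    simp only [mem_neighborFinset, Finset.mem_map, Equiv.coe_toEmbedding]
    constructor
    · intro hw
      exact ⟨e.symm w, by simpa using e.symm.map_rel_iff.mpr hw, by simp⟩
    · rintro ⟨u, hu, rfl⟩
      exact e.map_rel_iff.mpr hu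
  unfold SimpleGraph.degree
  rw [h, Finset.card_map]

lemma degMultiset_iso {A : SimpleGraph V} {B : SimpleGraph W} (e : A ≃g B) :
    degMultiset A = degMultiset B := by
  unfold degMultiset
  have h : (Finset.univ : Finset W).val = (Finset.univ : Finset V).val.map ⇑e.toEquiv := by
    rw [← Finset.map_univ_equiv e.toEquiv]
    rfl
  rw [h, Multiset.map_map]
  exact Multiset.map_congr rfl fun v _ => degree_iso e v

lemma degree_zero_of_no_adj {A : SimpleGraph V} (h : ∀ v w, ¬ A.Adj v w) (v : V) :
    A.degree v = 0 := by
  unfold SimpleGraph.degree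
  rw [Finset.card_eq_zero, Finset.eq_empty_iff_forall_notMem]
  intro w hw
  exact h v w ((SimpleGraph.mem_neighborFinset A v w).mp hw)

lemma degMultiset_regular {A : SimpleGraph V} {d : ℕ} (h : ∀ v, A.degree v = d) :
    degMultiset A = Multiset.replicate (Fintype.card V) d := by
  unfold degMultiset
  rw [show (fun v => A.degree v) = Function.const V d from funext h, Multiset.map_const]
  congr 1

lemma degMultiset_sum (A : SimpleGraph V) (B : SimpleGraph W) :
    degMultiset (A ⊕g B) = degMultiset A + degMultiset B := by
  unfold degMultiset
  rw [← Finset.univ_disjSum_univ, Finset.val_disjSum]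
  rw [show ((Finset.univ : Finset V).val.disjSum (Finset.univ : Finset W).val)
      = (Finset.univ : Finset V).val.map Sum.inl
        + (Finset.univ : Finset W).val.map Sum.inr from rfl]
  rw [Multiset.map_add, Multiset.map_map, Multiset.map_map]
  congr 1
  · refine Multiset.map_congr rfl fun v _ => ?_
    rw [Function.comp_apply]
    have h : ((A ⊕g B).neighborFinset (Sum.inl v))
        = (A.neighborFinset v).map ⟨Sum.inl, Sum.inl_injective⟩ := by
      ext w
      cases w with
      | inl a =>
        simp only [mem_neighborFinset, Finset.mem_map, Function.Embedding.coeFn_mk]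
        constructor
        · intro hw
          exact ⟨a, hw, rfl⟩
        · rintro ⟨u, hu, hh⟩
          cases hh
          exact hu
      | inr b =>
        simp only [mem_neighborFinset, Finset.mem_map, Function.Embedding.coeFn_mk]
        constructor
        · intro hw
          exact absurd hw (by simp [SimpleGraph.sum_adj])
        · rintro ⟨u, _, hh⟩
          cases hh
    unfold SimpleGraph.degree
    convert (congrArg Finset.card h).trans (Finset.card_map _)
  · refine Multiset.map_congr rfl fun w _ => ?_
    rw [Function.comp_apply]
    have h : ((A ⊕g B).neighborFinset (Sum.inr w))
        = (B.neighborFinset w).map ⟨Sum.inr, Sum.inr_injective⟩ := by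
      ext u
      cases u with
      | inr b =>
        simp only [mem_neighborFinset, Finset.mem_map, Function.Embedding.coeFn_mk]
        constructor
        · intro hw
          exact ⟨b, hw, rfl⟩
        · rintro ⟨u, hu, hh⟩
          cases hh
          exact hu
      | inl a =>
        simp only [mem_neighborFinset, Finset.mem_map, Function.Embedding.coeFn_mk]
        constructor
        · intro hw
          exact absurd hw (by simp [SimpleGraph.sum_adj])
        · rintro ⟨u, _, hh⟩
          cases hh
    unfold SimpleGraph.degree
    convert (congrArg Finset.card h).trans (Finset.card_map _)

/-- `c` disjoint copies of a graph. -/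
def copies (c : ℕ) (B : SimpleGraph W) : SimpleGraph (Fin c × W) where
  Adj p q := p.1 = q.1 ∧ B.Adj p.2 q.2
  symm := ⟨fun p q h => ⟨h.1.symm, B.adj_symm h.2⟩⟩
  loopless := ⟨fun p h => B.loopless.irrefl _ h.2⟩

lemma copies_degree (c : ℕ) (B : SimpleGraph W) (p : Fin c × W) :
    (copies c B).degree p = B.degree p.2 := by
  classical
  have h : (copies c B).neighborFinset p = {p.1} ×ˢ B.neighborFinset p.2 := by
    ext q
    simp only [mem_neighborFinset, Finset.mem_product, Finset.mem_singleton]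
    show (p.1 = q.1 ∧ B.Adj p.2 q.2) ↔ _
    constructor
    · rintro ⟨h1, h2⟩; exact ⟨h1.symm, h2⟩
    · rintro ⟨h1, h2⟩; exact ⟨h1.symm, h2⟩
  unfold SimpleGraph.degree
  rw [h, Finset.card_product, Finset.card_singleton, one_mul]

lemma bipartite_degree (d : ℕ) (v : Fin d ⊕ Fin d) :
    (completeBipartiteGraph (Fin d) (Fin d)).degree v = d := by
  classical
  cases v with
  | inl i =>
    have h : (completeBipartiteGraph (Fin d) (Fin d)).neighborFinset (Sum.inl i)
        = Finset.univ.map ⟨Sum.inr, Sum.inr_injective⟩ := by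
      ext w; cases w <;> simp [mem_neighborFinset]
    unfold SimpleGraph.degree
    rw [h, Finset.card_map, Finset.card_univ, Fintype.card_fin]
  | inr i =>
    have h : (completeBipartiteGraph (Fin d) (Fin d)).neighborFinset (Sum.inr i)
        = Finset.univ.map ⟨Sum.inl, Sum.inl_injective⟩ := by
      ext w; cases w <;> simp [mem_neighborFinset]
    unfold SimpleGraph.degree
    rw [h, Finset.card_map, Finset.card_univ, Fintype.card_fin]

lemma exists_regular (d m : ℕ) (h : d = 0 ∨ 2 * d ∣ m) :
    ∃ (γ : Type) (_ : Fintype γ) (R : SimpleGraph γ),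
      degMultiset R = Multiset.replicate m d := by
  by_cases hd : d = 0
  · subst hd
    refine ⟨Fin m, inferInstance, ⊥, ?_⟩
    have h0 := degree_zero_of_no_adj (A := (⊥ : SimpleGraph (Fin m)))
      (fun v w hvw => by simp only [SimpleGraph.bot_adj] at hvw)
    rw [degMultiset_regular h0, Fintype.card_fin]
  · rcases h with h | h
    · exact absurd h hd
    refine ⟨Fin (m / (2 * d)) × (Fin d ⊕ Fin d), inferInstance,
      copies _ (completeBipartiteGraph (Fin d) (Fin d)), ?_⟩
    rw [degMultiset_regular (fun p => by rw [copies_degree]; exact bipartite_degree d p.2)]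
    congr 1
    rw [Fintype.card_prod, Fintype.card_sum, Fintype.card_fin, Fintype.card_fin,
      show d + d = 2 * d by ring]
    exact Nat.div_mul_cancel h

lemma step {α : Type} [Fintype α] (A : SimpleGraph α) (d m : ℕ) (h : d = 0 ∨ 2 * d ∣ m) :
    ∃ (β : Type) (_ : Fintype β) (B : SimpleGraph β),
      degMultiset B = degMultiset A + Multiset.replicate m d ∧ Nonempty (A ↪g B) := by
  obtain ⟨γ, fγ, R, hR⟩ := exists_regular d m h
  exact ⟨α ⊕ γ, inferInstance, A ⊕g R, by rw [degMultiset_sum, hR], ⟨Embedding.sumInl⟩⟩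

lemma build (l : List ℕ) (m : ℕ → ℕ) (h : ∀ d ∈ l, d = 0 ∨ 2 * d ∣ m d) :
    ∀ (α : Type) (_ : Fintype α) (A : SimpleGraph α),
      ∃ (β : Type) (_ : Fintype β) (B : SimpleGraph β),
        degMultiset B = degMultiset A + (l.map fun d => Multiset.replicate (m d) d).sum ∧
        Nonempty (A ↪g B) := by
  induction l with
  | nil => intro α fα A; exact ⟨α, fα, A, by simp, ⟨SimpleGraph.Embedding.refl⟩⟩
  | cons d l ih =>
    intro α fα A
    obtain ⟨β₁, fβ₁, B₁, hB₁, ⟨e₁⟩⟩ := step A d (m d) (h d (List.mem_cons_self))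
    obtain ⟨β, fβ, B, hB, ⟨e₂⟩⟩ := ih (fun d' hd' => h d' (List.mem_cons_of_mem _ hd')) β₁ fβ₁ B₁
    refine ⟨β, fβ, B, ?_, ⟨e₂.comp e₁⟩⟩
    rw [hB, hB₁, List.map_cons, List.sum_cons, add_assoc]

lemma count_list_sum (n : ℕ) (l : List ℕ) (g : ℕ → Multiset ℕ) :
    ((l.map g).sum).count n = (l.map fun d => (g d).count n).sum := by
  induction l with
  | nil => simp
  | cons d l ih => simp [Multiset.count_add, ih]

lemma multi_mono : ∀ (n : ℕ) (g : ℕ → Fin n → ℕ),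
    ∃ φ : ℕ ↪o ℕ, ∀ d, Monotone fun i => g (φ i) d := by
  intro n
  induction n with
  | zero => exact fun g => ⟨RelEmbedding.refl _, fun d => d.elim0⟩
  | succ n ih =>
    intro g
    obtain ⟨φ₁, hφ₁⟩ := ih (fun i d => g i d.succ)
    have hwf : (Set.univ : Set ℕ).IsPWO := (Set.isWF_univ_iff.mpr inferInstance).isPWO
    obtain ⟨φ₂, hφ₂⟩ := hwf.exists_monotone_subseq (f := fun i => g (φ₁ i) 0) (fun _ => trivial)
    refine ⟨φ₂.trans φ₁, fun d => ?_⟩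
    refine Fin.cases ?_ ?_ d
    · intro i j hij
      exact hφ₂ hij
    · intro d' i j hij
      exact hφ₁ d' (φ₂.monotone hij)

lemma good_pair (k M : ℕ) (hM : 0 < M) (f : ℕ → Fin (k + 1) → ℕ) :
    ∃ i j : ℕ, i < j ∧ ∀ d, f i d ≤ f j d ∧ f i d % M = f j d % M := by
  classical
  let r : ℕ → (Fin (k + 1) → Fin M) := fun i d => ⟨f i d % M, Nat.mod_lt _ hM⟩
  obtain ⟨y, hy⟩ := Finite.exists_infinite_fiber r
  haveI : Infinite ↥(r ⁻¹' {y}) := hy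
  let e := Nat.orderEmbeddingOfSet (r ⁻¹' {y})
  have hmem : ∀ n, e n ∈ r ⁻¹' {y} := by
    intro n
    have := Nat.orderEmbeddingOfSet_range (r ⁻¹' {y})
    exact this ▸ ⟨n, rfl⟩
  obtain ⟨φ, hφ⟩ := multi_mono (k + 1) (fun i => f (e i))
  refine ⟨e (φ 0), e (φ 1), ?_, fun d => ⟨hφ d (by norm_num), ?_⟩⟩
  · exact e.strictMono (φ.strictMono (by norm_num))
  · have h0 : r (e (φ 0)) = y := hmem (φ 0)
    have h1 : r (e (φ 1)) = y := hmem (φ 1)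
    have := congrFun (h0.trans h1.symm) d
    exact congrArg Fin.val this

lemma count_degMultiset_zero {A : SimpleGraph V} {k : ℕ} (hk : ∀ v, A.degree v ≤ k)
    {n : ℕ} (hn : k < n) : (degMultiset A).count n = 0 := by
  rw [Multiset.count_eq_zero]
  intro hmem
  unfold degMultiset at hmem
  obtain ⟨v, _, hv⟩ := Multiset.mem_map.mp hmem
  exact absurd (hv ▸ hk v) (not_le.mpr hn)

lemma decomp (k : ℕ) (D1 D2 : Multiset ℕ)
    (h1 : ∀ n, k < n → D1.count n = 0) (h2 : ∀ n, k < n → D2.count n = 0)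
    (hle : ∀ d, d ≤ k → D1.count d ≤ D2.count d) :
    D2 = D1 + ((List.range (k + 1)).map
      (fun d => Multiset.replicate (D2.count d - D1.count d) d)).sum := by
  ext n
  rw [Multiset.count_add, count_list_sum]
  have hsum : ((List.range (k + 1)).map
      (fun d => (Multiset.replicate (D2.count d - D1.count d) d).count n)).sum
      = if n ≤ k then D2.count n - D1.count n else 0 := by
    have heq : ∀ d : ℕ, (Multiset.replicate (D2.count d - D1.count d) d).count n
        = if d = n then D2.count d - D1.count d else 0 := by
      intro d; rw [Multiset.count_replicate]
    simp only [heq]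
    rw [show ((List.range (k + 1)).map
        (fun d => if d = n then D2.count d - D1.count d else 0)).sum
        = ∑ d ∈ Finset.range (k + 1), (if d = n then D2.count d - D1.count d else 0) from rfl]
    rw [Finset.sum_ite_eq' (Finset.range (k + 1)) n (fun d => D2.count d - D1.count d)]
    simp [Nat.lt_succ_iff]
  rw [hsum]
  by_cases hn : n ≤ k
  · simp only [if_pos hn]
    exact (Nat.add_sub_cancel' (hle n hn)).symm
  · simp only [if_neg hn]
    rw [h1 n (not_le.mp hn), h2 n (not_le.mp hn)]

end RaoAux

/-- **Bounded degree case of Rao's Conjecture.**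
Degree sequences of finite graphs with all degrees at most `k` are well quasi
ordered by the Rao relation `⪯`: in every infinite sequence `G₀, G₁, …` of
finite simple graphs of maximum degree at most `k` there are indices `i < j`
and graphs `H`, `H'` realizing the degree sequences of `G i` and `G j`
respectively such that `H` embeds into `H'` as an induced subgraph. -/
theorem rao_conjecture_bounded_degree (k : ℕ)
    (G : ℕ → Σ n : ℕ, SimpleGraph (Fin n))
    (hdeg : ∀ i : ℕ, ∀ v : Fin (G i).1, (G i).2.degree v ≤ k) :
    ∃ i j : ℕ, i < j ∧
      ∃ (a b : ℕ) (H : SimpleGraph (Fin a)) (H' : SimpleGraph (Fin b)),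
        degMultiset H = degMultiset (G i).2 ∧
        degMultiset H' = degMultiset (G j).2 ∧
        Nonempty (H ↪g H') := by
  classical
  set M := 2 * Nat.factorial k with hM
  have hMpos : 0 < M := by positivity
  obtain ⟨i, j, hij, hgood⟩ := RaoAux.good_pair k M hMpos
    (fun i d => (degMultiset (G i).2).count (d : ℕ))
  set D1 := degMultiset (G i).2 with hD1
  set D2 := degMultiset (G j).2 with hD2
  have hle : ∀ d, d ≤ k → D1.count d ≤ D2.count d := fun d hd =>
    (hgood ⟨d, Nat.lt_succ_of_le hd⟩).1
  have hmod : ∀ d, d ≤ k → D1.count d % M = D2.count d % M := fun d hd =>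
    (hgood ⟨d, Nat.lt_succ_of_le hd⟩).2
  set m : ℕ → ℕ := fun d => D2.count d - D1.count d with hm
  have hdvd : ∀ d ∈ List.range (k + 1), d = 0 ∨ 2 * d ∣ m d := by
    intro d hd
    rcases Nat.eq_zero_or_pos d with h0 | hpos
    · exact Or.inl h0
    · right
      have hdk : d ≤ k := Nat.lt_succ_iff.mp (List.mem_range.mp hd)
      have hMd : M ∣ m d := (Nat.modEq_iff_dvd' (hle d hdk)).mp (hmod d hdk)
      exact dvd_trans (mul_dvd_mul_left 2 (Nat.dvd_factorial hpos hdk)) hMd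
  have hdec := RaoAux.decomp k D1 D2
    (fun n hn => RaoAux.count_degMultiset_zero (hdeg i) hn)
    (fun n hn => RaoAux.count_degMultiset_zero (hdeg j) hn) hle
  obtain ⟨β, fβ, B, hB, ⟨emb⟩⟩ := RaoAux.build (List.range (k + 1)) m hdvd
    (Fin (G i).1) inferInstance (G i).2
  have hBdeg : degMultiset B = D2 := by rw [hB, ← hdec]
  letI := fβ
  let e : Fin (Fintype.card β) ≃ β := (Fintype.equivFin β).symm
  let iso := SimpleGraph.Iso.comap e B
  refine ⟨i, j, hij, (G i).1, Fintype.card β, (G i).2, B.comap ⇑e.toEmbedding, rfl, ?_, ?_⟩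
  · rw [show B.comap ⇑e.toEmbedding = B.comap ⇑e from rfl, RaoAux.degMultiset_iso iso]
    exact hBdeg
  · exact ⟨iso.symm.toEmbedding.comp emb⟩
end

section
/- The Rao relation ⪯ on graphic degree sequences is transitive. Precisely: let A₁, A₂, B₂, B₃ be finite simple graphs such that the degree multiset of A₂ equals the degree multiset of B₂, there is an induced-subgraph embedding of A₁ into A₂, and there is an induced-subgraph embedding of B₂ into B₃. Then there exist finite simple graphs C₁ and C₃ such that the degree multiset of C₁ equals the degree multiset of A₁, the degree multiset of C₃ equals the degree multiset of B₃, and there is an induced-subgraph embedding of C₁ into C₃. -/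
open scoped Classical

section RaoAux
open Finset

-- Lemma 1: multiset map equality gives a fiberwise-matching bijection
lemma exists_equiv_of_map_eq {V W : Type} [Fintype V] [Fintype W] (f : V → ℕ) (g : W → ℕ)
    (h : Finset.univ.val.map f = Finset.univ.val.map g) :
    ∃ e : V ≃ W, ∀ v, f v = g (e v) := by
  have hcard : ∀ n, Fintype.card {v : V // f v = n} = Fintype.card {w : W // g w = n} := by
    intro n
    have := congrArg (Multiset.count n) h
    rw [Multiset.count_map, Multiset.count_map] at this
    simp only [Fintype.card_subtype]
    rw [Finset.card, Finset.card, Finset.filter_val, Finset.filter_val]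
    convert this using 2 <;> ext x <;> simp [eq_comm]
  let en : ∀ n, {v : V // f v = n} ≃ {w : W // g w = n} :=
    fun n => Fintype.equivOfCardEq (hcard n)
  refine ⟨(Equiv.sigmaFiberEquiv f).symm.trans
    ((Equiv.sigmaCongrRight en).trans (Equiv.sigmaFiberEquiv g)), fun v => ?_⟩
  exact ((en (f v)) ⟨v, rfl⟩).2.symm

lemma degMultiset_eq_of_equiv {V W : Type} [Fintype V] [Fintype W]
    (G : SimpleGraph V) (H : SimpleGraph W) (e : V ≃ W)
    (h : ∀ v, G.degree v = H.degree (e v)) : degMultiset G = degMultiset H := by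
  unfold degMultiset
  have huniv : (Finset.univ.val.map ⇑e) = Finset.univ.val := by
    have : Finset.univ.map e.toEmbedding = Finset.univ := Finset.map_univ_equiv e
    simpa [Finset.map] using congrArg Finset.val this
  calc Finset.univ.val.map (fun v => G.degree v)
      = Finset.univ.val.map (fun v => H.degree (e v)) := by simp [h]
    _ = (Finset.univ.val.map ⇑e).map (fun w => H.degree w) := by rw [Multiset.map_map]; rfl
    _ = Finset.univ.val.map (fun w => H.degree w) := by rw [huniv]

lemma degMultiset_eq_of_ptwise {W : Type} [Fintype W]
    (G H : SimpleGraph W) (h : ∀ v, G.degree v = H.degree v) :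
    degMultiset G = degMultiset H := by
  unfold degMultiset; simp [h]

lemma comap_degree {V W : Type} [Fintype V] [Fintype W] (e : V ≃ W) (G : SimpleGraph W)
    (v : V) : (G.comap ⇑e).degree v = G.degree (e v) := by
  have : (G.comap ⇑e).neighborFinset v = (G.neighborFinset (e v)).map e.symm.toEmbedding := by
    ext w
    simp only [SimpleGraph.mem_neighborFinset, Finset.mem_map_equiv, Equiv.symm_symm,
      SimpleGraph.comap_adj]
  rw [SimpleGraph.degree, this, Finset.card_map, SimpleGraph.degree]

def comapIso {V W : Type} (e : V ≃ W) (G : SimpleGraph W) : G.comap ⇑e ≃g G :=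
  ⟨e, Iff.rfl⟩

section core
variable {V₂ W₂ W₃ : Type} [Fintype V₂] [Fintype W₂] [Fintype W₃]
variable (A₂ : SimpleGraph V₂) (B₂ : SimpleGraph W₂) (B₃ : SimpleGraph W₃)
variable (e : V₂ ≃ W₂) (f : B₂ ↪g B₃)

/-- Replace the induced copy of `B₂` in `B₃` by a copy of `A₂` via `f ∘ e`. -/
def patched : SimpleGraph W₃ where
  Adj x y := (B₃.Adj x y ∧ (x ∉ Set.range (fun v => f (e v)) ∨ y ∉ Set.range (fun v => f (e v))))
    ∨ (∃ u v, A₂.Adj u v ∧ f (e u) = x ∧ f (e v) = y)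
  symm := by
    refine ⟨?_⟩
    rintro x y (⟨h1, h2⟩ | ⟨u, v, h1, h2, h3⟩)
    · exact Or.inl ⟨h1.symm, h2.symm⟩
    · exact Or.inr ⟨v, u, h1.symm, h3, h2⟩
  loopless := by
    refine ⟨?_⟩
    rintro x (⟨h1, _⟩ | ⟨u, v, h1, h2, h3⟩)
    · exact B₃.irrefl h1
    · have : u = v := by
        apply e.injective; apply f.injective; rw [h2, h3]
      exact A₂.irrefl (this ▸ h1)

lemma patched_ginj : Function.Injective (fun v => f (e v)) :=
  fun a b h => e.injective (f.injective h)

lemma patched_adj_iff (u v : V₂) :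
    (patched A₂ B₂ B₃ e f).Adj (f (e u)) (f (e v)) ↔ A₂.Adj u v := by
  constructor
  · rintro (⟨_, h2 | h2⟩ | ⟨u', v', h1, h2, h3⟩)
    · exact absurd ⟨u, rfl⟩ h2
    · exact absurd ⟨v, rfl⟩ h2
    · have hu : u' = u := patched_ginj B₂ B₃ e f h2
      have hv : v' = v := patched_ginj B₂ B₃ e f h3
      exact hu ▸ hv ▸ h1
  · intro h; exact Or.inr ⟨u, v, h, rfl, rfl⟩

noncomputable def patchedEmbedding : A₂ ↪g patched A₂ B₂ B₃ e f where
  toFun := fun v => f (e v)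
  inj' := patched_ginj B₂ B₃ e f
  map_rel_iff' := by intro u v; exact patched_adj_iff A₂ B₂ B₃ e f u v

lemma degree_filter {W : Type} [Fintype W] (G : SimpleGraph W) (x : W) :
    G.degree x = (Finset.univ.filter (G.Adj x)).card := by
  rw [SimpleGraph.degree, SimpleGraph.neighborFinset_eq_filter]

lemma patched_degree (he : ∀ v, A₂.degree v = B₂.degree (e v)) (x : W₃) :
    (patched A₂ B₂ B₃ e f).degree x = B₃.degree x := by
  set g : V₂ → W₃ := fun v => f (e v) with hg
  rw [degree_filter, degree_filter]
  by_cases hx : x ∈ Set.range g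
  case neg =>
    congr 1; ext y
    simp only [Finset.mem_filter, Finset.mem_univ, true_and]
    constructor
    · rintro (⟨h1, _⟩ | ⟨u, v, _, h2, _⟩)
      · exact h1
      · exact absurd (⟨u, h2⟩ : x ∈ Set.range g) hx
    · intro h; exact Or.inl ⟨h, Or.inl hx⟩
  case pos =>
    obtain ⟨u₀, rfl⟩ := hx
    -- split each filter by membership in range g
    have split : ∀ (G : SimpleGraph W₃),
        (Finset.univ.filter (G.Adj (g u₀))).card =
        (Finset.univ.filter (fun y => G.Adj (g u₀) y ∧ y ∈ Set.range g)).card +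
        (Finset.univ.filter (fun y => G.Adj (g u₀) y ∧ y ∉ Set.range g)).card := by
      intro G
      rw [← Finset.filter_filter, ← Finset.filter_filter]
      exact (Finset.card_filter_add_card_filter_not
        (s := Finset.univ.filter (G.Adj (g u₀))) (fun y => y ∈ Set.range g)).symm
    rw [split, split]
    congr 1
    · -- in-range parts: both equal A₂.degree u₀ = B₂.degree (e u₀)
      have h1 : (Finset.univ.filter (fun y => (patched A₂ B₂ B₃ e f).Adj (g u₀) y ∧ y ∈ Set.range g)).card
          = A₂.degree u₀ := by
        rw [degree_filter]
        apply Finset.card_bij (fun y hy => Classical.choose (Finset.mem_filter.mp hy).2.2)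
        · intro y hy
          obtain ⟨-, hadj, hr⟩ := Finset.mem_filter.mp hy
          have hspec := Classical.choose_spec hr
          simp only [Finset.mem_filter, Finset.mem_univ, true_and]
          rw [← patched_adj_iff A₂ B₂ B₃ e f]
          show (patched A₂ B₂ B₃ e f).Adj (g u₀) (g _)
          rw [hspec]; exact hadj
        · intro y1 hy1 y2 hy2 hh
          obtain ⟨-, -, hr1⟩ := Finset.mem_filter.mp hy1
          obtain ⟨-, -, hr2⟩ := Finset.mem_filter.mp hy2
          rw [← Classical.choose_spec hr1, ← Classical.choose_spec hr2, hh]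
        · intro v hv
          refine ⟨g v, Finset.mem_filter.mpr ⟨Finset.mem_univ _,
            (patched_adj_iff A₂ B₂ B₃ e f u₀ v).mpr (Finset.mem_filter.mp hv).2, ⟨v, rfl⟩⟩, ?_⟩
          have hr : (g v) ∈ Set.range g := ⟨v, rfl⟩
          show Classical.choose hr = v
          exact patched_ginj B₂ B₃ e f (Classical.choose_spec hr)
      have h2 : (Finset.univ.filter (fun y => B₃.Adj (g u₀) y ∧ y ∈ Set.range g)).card
          = B₂.degree (e u₀) := by
        rw [degree_filter]
        apply Finset.card_bij (fun y hy => e (Classical.choose (Finset.mem_filter.mp hy).2.2))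
        · intro y hy
          obtain ⟨-, hadj, hr⟩ := Finset.mem_filter.mp hy
          have hspec := Classical.choose_spec hr
          simp only [Finset.mem_filter, Finset.mem_univ, true_and]
          rw [← f.map_rel_iff]
          show B₃.Adj (g u₀) (g _)
          rw [hspec]; exact hadj
        · intro y1 hy1 y2 hy2 hh
          obtain ⟨-, -, hr1⟩ := Finset.mem_filter.mp hy1
          obtain ⟨-, -, hr2⟩ := Finset.mem_filter.mp hy2
          rw [← Classical.choose_spec hr1, ← Classical.choose_spec hr2]
          show g _ = g _
          rw [e.injective hh]
        · intro w hw
          refine ⟨f w, Finset.mem_filter.mpr ⟨Finset.mem_univ _,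
            f.map_rel_iff.mpr (Finset.mem_filter.mp hw).2, ⟨e.symm w, by simp [hg]⟩⟩, ?_⟩
          have hr : (f w) ∈ Set.range g := ⟨e.symm w, by simp [hg]⟩
          show e (Classical.choose hr) = w
          have h6 : g (Classical.choose hr) = g (e.symm w) := by
            rw [Classical.choose_spec hr]; simp [hg]
          rw [patched_ginj B₂ B₃ e f h6]; simp
      rw [h1, h2, he]
    · -- off-range parts identical
      congr 1; ext y
      simp only [Finset.mem_filter, Finset.mem_univ, true_and, and_congr_left_iff]
      intro hy
      constructor
      · rintro (⟨h1, _⟩ | ⟨u, v, _, _, h3⟩)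
        · exact h1
        · exact absurd (⟨v, h3⟩ : y ∈ Set.range g) hy
      · intro h; exact Or.inl ⟨h, Or.inr hy⟩
end core

end RaoAux

/-- **Transitivity of the Rao relation `⪯` on graphic degree sequences.**
If `A₁` embeds into `A₂` as an induced subgraph, `A₂` and `B₂` have the same
degree multiset, and `B₂` embeds into `B₃` as an induced subgraph, then there
are graphs `C₁`, `C₃` realizing the degree sequences of `A₁` and `B₃`
respectively with `C₁` embedding into `C₃` as an induced subgraph. -/
theorem rao_relation_transitive
    {V₁ V₂ W₂ W₃ : Type} [Fintype V₁] [Fintype V₂] [Fintype W₂] [Fintype W₃]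
    (A₁ : SimpleGraph V₁) (A₂ : SimpleGraph V₂)
    (B₂ : SimpleGraph W₂) (B₃ : SimpleGraph W₃)
    (hdeg : degMultiset A₂ = degMultiset B₂)
    (h₁₂ : Nonempty (A₁ ↪g A₂)) (h₂₃ : Nonempty (B₂ ↪g B₃)) :
    ∃ (a c : ℕ) (C₁ : SimpleGraph (Fin a)) (C₃ : SimpleGraph (Fin c)),
      degMultiset C₁ = degMultiset A₁ ∧
      degMultiset C₃ = degMultiset B₃ ∧
      Nonempty (C₁ ↪g C₃) := by
  obtain ⟨i⟩ := h₁₂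
  obtain ⟨f⟩ := h₂₃
  have hdeg' : Finset.univ.val.map (fun v => A₂.degree v) =
      Finset.univ.val.map (fun w => B₂.degree w) := hdeg
  obtain ⟨e, he⟩ := exists_equiv_of_map_eq (fun v => A₂.degree v) (fun w => B₂.degree w) hdeg' 
  set C : SimpleGraph W₃ := patched A₂ B₂ B₃ e f with hC
  have hdegC : ∀ x, C.degree x = B₃.degree x := patched_degree A₂ B₂ B₃ e f he
  set a := Fintype.card V₁
  set c := Fintype.card W₃
  let e₁ : Fin a ≃ V₁ := (Fintype.equivFin V₁).symm
  let e₃ : Fin c ≃ W₃ := (Fintype.equivFin W₃).symm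
  refine ⟨a, c, A₁.comap ⇑e₁, C.comap ⇑e₃, ?_, ?_, ?_⟩
  · exact degMultiset_eq_of_equiv _ _ e₁ (comap_degree e₁ A₁)
  · refine Eq.trans (degMultiset_eq_of_equiv _ _ e₃ (comap_degree e₃ C)) ?_
    exact degMultiset_eq_of_ptwise C B₃ hdegC
  · exact ⟨((comapIso e₃ C).symm.toEmbedding.comp
      ((patchedEmbedding A₂ B₂ B₃ e f).comp
        (i.comp (comapIso e₁ A₁).toEmbedding)))⟩
end
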